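/- arXiv:1711.10178 — 7 statements merged into one kernel-verified Lean document; each statement's English description precedes it below -/
import Mathlib

section
/- An n×k 01 matrix M is uniquely determined among all n×k 01 matrices by its row sum vector and its column sum vector (i.e., every n×k 01 matrix N whose i-th row sum equals the i-th row sum of M for every i and whose j-th column sum equals the j-th column sum of M for every j is equal to M) if and only if M contains neither the submatrix ((1,0),(0,1)) nor the submatrix ((0,1),(1,0)). -/
open Finset

/-- A 01 matrix (encoded with `Bool` entries) is lonesum iff it avoids the
two 2×2 permutation submatrices. -/
def Lonesum {n k : ℕ} (M : Fin n → Fin k → Bool) : Prop :=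
  ∀ i i' : Fin n, ∀ j j' : Fin k, i < i' → j < j' →
    ¬(M i j = true ∧ M i j' = false ∧ M i' j = false ∧ M i' j' = true) ∧
    ¬(M i j = false ∧ M i j' = true ∧ M i' j = true ∧ M i' j' = false)

/-- The `i`-th row sum of a 01 matrix: the number of 1 entries in row `i`. -/
def rowSum {n k : ℕ} (M : Fin n → Fin k → Bool) (i : Fin n) : ℕ :=
  (univ.filter fun j => M i j = true).card

/-- The `j`-th column sum of a 01 matrix: the number of 1 entries in column `j`. -/
def colSum {n k : ℕ} (M : Fin n → Fin k → Bool) (j : Fin k) : ℕ :=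
  (univ.filter fun i => M i j = true).card

lemma filter_comp_perm {m : ℕ} (σ : Equiv.Perm (Fin m)) (p : Fin m → Bool) :
    (univ.filter fun b => p (σ b) = true).card = (univ.filter fun b => p b = true).card := by
  apply Finset.card_bij (fun b _ => σ b)
  · intro a ha; simp at ha ⊢; exact ha
  · intro a _ b _ hab; exact σ.injective hab
  · intro b hb; refine ⟨σ.symm b, ?_, by simp⟩; simp at hb ⊢; simpa using hb

lemma exists_mem_not_mem {α : Type*} {A B : Finset α} (hcard : A.card = B.card) (hne : A ≠ B) :
    ∃ x ∈ B, x ∉ A := by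
  by_contra h
  push_neg at h
  exact hne ((Finset.eq_of_subset_of_card_le h hcard.le).symm)

lemma swap_counterexample {n k : ℕ} (M : Fin n → Fin k → Bool) (i i' : Fin n) (j j' : Fin k)
    (hd : M i' j = M i j') (hd2 : M i' j' = M i j) (hM : M i j ≠ M i j') :
    ∃ N : Fin n → Fin k → Bool, (∀ a, rowSum N a = rowSum M a) ∧
      (∀ b, colSum N b = colSum M b) ∧ N ≠ M := by
  have hii : i ≠ i' := by rintro rfl; exact hM hd
  refine ⟨fun a b => if a = i ∨ a = i' then M a (Equiv.swap j j' b) else M a b, ?_, ?_, ?_⟩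
  · intro a
    unfold rowSum
    by_cases ha : a = i ∨ a = i'
    · simp only [if_pos ha]
      exact filter_comp_perm (Equiv.swap j j') (M a)
    · simp only [if_neg ha]
  · intro b
    by_cases hb : b = j ∨ b = j'
    · have key : ∀ a, (if a = i ∨ a = i' then M a (Equiv.swap j j' b) else M a b)
          = M (Equiv.swap i i' a) b := by
        intro a
        by_cases ha1 : a = i
        · subst ha1
          rcases hb with rfl | rfl <;>
            simp [Equiv.swap_apply_left, Equiv.swap_apply_right, hd, hd2]
        · by_cases ha2 : a = i'
          · subst ha2
            rcases hb with rfl | rfl <;>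
              simp [Equiv.swap_apply_left, Equiv.swap_apply_right, hd, hd2, Ne.symm hii]
          · simp [ha1, ha2, Equiv.swap_apply_of_ne_of_ne ha1 ha2]
      unfold colSum
      simp only [key]
      exact filter_comp_perm (Equiv.swap i i') (fun a => M a b)
    · push_neg at hb
      have hswap : Equiv.swap j j' b = b := Equiv.swap_apply_of_ne_of_ne hb.1 hb.2
      unfold colSum
      simp only [hswap, ite_self]
  · intro h
    apply hM
    have := congrFun (congrFun h i) j
    simp [Equiv.swap_apply_left] at this
    exact this.symm

lemma lonesum_force {n k : ℕ} {M : Fin n → Fin k → Bool} (h : Lonesum M)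
    {i i' : Fin n} {j j' : Fin k} (h1 : M i j = true) (h2 : M i j' = false)
    (h3 : M i' j' = true) : M i' j = true := by
  by_contra hc
  rw [Bool.not_eq_true] at hc
  have hii : i ≠ i' := by rintro rfl; rw [h2] at h3; simp at h3
  have hjj : j ≠ j' := by rintro rfl; rw [h1] at h2; simp at h2
  rcases lt_or_gt_of_ne hii with hi | hi <;> rcases lt_or_gt_of_ne hjj with hj | hj
  · exact (h i i' j j' hi hj).1 ⟨h1, h2, hc, h3⟩
  · exact (h i i' j' j hi hj).2 ⟨h2, h1, h3, hc⟩
  · exact (h i' i j j' hi hj).2 ⟨hc, h3, h1, h2⟩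
  · exact (h i' i j' j hi hj).1 ⟨h3, hc, h2, h1⟩

/-- An `n × k` 01 matrix is uniquely determined among all `n × k` 01 matrices
by its row sum vector and column sum vector iff it avoids the two 2×2
permutation submatrices, i.e. iff it is lonesum. -/
theorem ryser_lonesum_characterization {n k : ℕ} (M : Fin n → Fin k → Bool) :
    (∀ N : Fin n → Fin k → Bool,
        (∀ i, rowSum N i = rowSum M i) → (∀ j, colSum N j = colSum M j) → N = M) ↔
      Lonesum M := by
  constructor
  · intro huniq i i' j j' hii hjj
    constructor
    · rintro ⟨h1, h2, h3, h4⟩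
      obtain ⟨N, hr, hc, hne⟩ := swap_counterexample M i i' j j'
        (by rw [h3, h2]) (by rw [h4, h1]) (by rw [h1, h2]; simp)
      exact hne (huniq N hr hc)
    · rintro ⟨h1, h2, h3, h4⟩
      obtain ⟨N, hr, hc, hne⟩ := swap_counterexample M i i' j j'
        (by rw [h3, h2]) (by rw [h4, h1]) (by rw [h1, h2]; simp)
      exact hne (huniq N hr hc)
  · intro hl N hrow hcol
    by_contra hne
    have hdiff : ∃ i j, M i j = true ∧ N i j = false := by
      have hex : ∃ i j, N i j ≠ M i j := by
        by_contra h; push_neg at h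
        exact hne (funext fun i => funext fun j => h i j)
      obtain ⟨i, j, hij⟩ := hex
      have hAB : (univ.filter fun b => N i b = true) ≠ (univ.filter fun b => M i b = true) := by
        intro h
        have := Finset.ext_iff.mp h j
        simp only [Finset.mem_filter, Finset.mem_univ, true_and] at this
        cases hN : N i j <;> cases hM' : M i j <;> simp_all
      obtain ⟨j', h1, h2⟩ := exists_mem_not_mem (hrow i) hAB
      simp only [Finset.mem_filter, Finset.mem_univ, true_and] at h1 h2
      exact ⟨i, j', h1, by simpa using h2⟩
    obtain ⟨i0, j0, hij0⟩ := hdiff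
    have hPne : (univ.filter fun i => ∃ j, M i j = true ∧ N i j = false).Nonempty :=
      ⟨i0, by simp only [Finset.mem_filter, Finset.mem_univ, true_and]; exact ⟨j0, hij0⟩⟩
    obtain ⟨i, hiP, hmax⟩ := Finset.exists_max_image _ (rowSum M) hPne
    simp only [Finset.mem_filter, Finset.mem_univ, true_and] at hiP
    obtain ⟨j, hMj, hNj⟩ := hiP
    -- find j' with N i j' = true, M i j' = false
    have hAB : (univ.filter fun b => M i b = true) ≠ (univ.filter fun b => N i b = true) := by
      intro h
      have := Finset.ext_iff.mp h j
      simp only [Finset.mem_filter, Finset.mem_univ, true_and] at this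
      rw [hMj, hNj] at this; simp at this
    obtain ⟨j', hj'1, hj'2⟩ := exists_mem_not_mem (hrow i).symm hAB
    simp only [Finset.mem_filter, Finset.mem_univ, true_and] at hj'1 hj'2
    have hNij' : N i j' = true := hj'1
    have hMij' : M i j' = false := by simpa using hj'2
    -- find i' with M i' j' = true, N i' j' = false
    have hCD : (univ.filter fun a => N a j' = true) ≠ (univ.filter fun a => M a j' = true) := by
      intro h
      have := Finset.ext_iff.mp h i
      simp only [Finset.mem_filter, Finset.mem_univ, true_and] at this
      rw [hNij', hMij'] at this; simp at this
    obtain ⟨i', hi'1, hi'2⟩ := exists_mem_not_mem (hcol j') hCD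
    simp only [Finset.mem_filter, Finset.mem_univ, true_and] at hi'1 hi'2
    have hMi'j' : M i' j' = true := hi'1
    have hNi'j' : N i' j' = false := by simpa using hi'2
    have hsub : insert j' (univ.filter fun b => M i b = true) ⊆
        univ.filter fun b => M i' b = true := by
      intro b hb
      simp only [Finset.mem_insert, Finset.mem_filter, Finset.mem_univ, true_and] at hb ⊢
      rcases hb with rfl | hb
      · exact hMi'j'
      · exact lonesum_force hl hb hMij' hMi'j'
    have hlt : rowSum M i + 1 ≤ rowSum M i' := by
      have h1 := Finset.card_le_card hsub
      rw [Finset.card_insert_of_notMem (by simp [hMij'])] at h1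
      exact h1
    have hle := hmax i'
      (by simp only [Finset.mem_filter, Finset.mem_univ, true_and]; exact ⟨j', hMi'j', hNi'j'⟩)
    omega
end

section
/- Let M be an n×k lonesum 01 matrix. Then (a) any two columns of M having the same weight are equal as vectors, and (b) for any two columns c and c' of M with w(c) < w(c'), every position at which c has entry 1 is also a position at which c' has entry 1 (the support of c is contained in the support of c'). -/
open Finset

/-- The weight of a 01 vector: the number of its entries equal to 1. -/
def weight {n : ℕ} (v : Fin n → Bool) : ℕ :=
  (univ.filter fun i => v i = true).card

/-- The `j`-th column of a 01 matrix. -/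
def colOf {n k : ℕ} (M : Fin n → Fin k → Bool) (j : Fin k) : Fin n → Bool :=
  fun i => M i j

lemma lonesum_comparable {n k : ℕ} (M : Fin n → Fin k → Bool) (hM : Lonesum M)
    (j j' : Fin k) :
    (∀ i, M i j = true → M i j' = true) ∨ (∀ i, M i j' = true → M i j = true) := by
  by_contra h
  push_neg at h
  obtain ⟨⟨i, hi1, hi2⟩, ⟨i', hi'1, hi'2⟩⟩ := h
  replace hi2 : M i j' = false := Bool.not_eq_true _ ▸ hi2
  replace hi'2 : M i' j = false := Bool.not_eq_true _ ▸ hi'2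
  have hii' : i ≠ i' := by
    rintro rfl; rw [hi1] at hi'2; exact Bool.noConfusion hi'2
  have hjj' : j ≠ j' := by
    rintro rfl; rw [hi1] at hi2; exact Bool.noConfusion hi2
  rcases lt_or_gt_of_ne hii' with h1 | h1 <;> rcases lt_or_gt_of_ne hjj' with h2 | h2
  · exact (hM i i' j j' h1 h2).1 ⟨hi1, hi2, hi'2, hi'1⟩
  · exact (hM i i' j' j h1 h2).2 ⟨hi2, hi1, hi'1, hi'2⟩
  · exact (hM i' i j j' h1 h2).2 ⟨hi'2, hi'1, hi1, hi2⟩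
  · exact (hM i' i j' j h1 h2).1 ⟨hi'1, hi'2, hi2, hi1⟩

lemma weight_le_of_imp {n : ℕ} {v w : Fin n → Bool}
    (h : ∀ i, v i = true → w i = true) : weight v ≤ weight w := by
  apply Finset.card_le_card
  intro i hi
  simp only [Finset.mem_filter, Finset.mem_univ, true_and] at hi ⊢
  exact h i hi

/-- In a lonesum matrix, (a) two columns of equal weight are equal, and
(b) if one column has smaller weight than another then its support is
contained in that of the other. -/
theorem lonesum_columns_chain {n k : ℕ} (M : Fin n → Fin k → Bool) (hM : Lonesum M) :
    (∀ j j' : Fin k, weight (colOf M j) = weight (colOf M j') → colOf M j = colOf M j') ∧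
    (∀ j j' : Fin k, weight (colOf M j) < weight (colOf M j') →
      ∀ i : Fin n, M i j = true → M i j' = true) := by
  constructor
  · intro j j' hw
    have hsub : ∀ i, M i j = true → M i j' = true := by
      rcases lonesum_comparable M hM j j' with h | h
      · exact h
      · intro i hi
        have hsub' : (univ.filter fun i => colOf M j' i = true) ⊆
            (univ.filter fun i => colOf M j i = true) := by
          intro x hx
          simp only [Finset.mem_filter, Finset.mem_univ, true_and] at hx ⊢
          exact h x hx
        have heq := Finset.eq_of_subset_of_card_le hsub' (le_of_eq hw)
        have := Finset.ext_iff.mp heq i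
        simp only [Finset.mem_filter, Finset.mem_univ, true_and, colOf] at this
        exact (Finset.mem_filter.mp (this.mpr (Finset.mem_filter.mpr ⟨Finset.mem_univ _, hi⟩))).2
    funext i
    cases h1 : M i j with
    | true => show M i j = M i j'; rw [h1, hsub i h1]
    | false =>
      cases h2 : M i j' with
      | false => simp [colOf, h1, h2]
      | true =>
        exfalso
        have hsub2 : (univ.filter fun x => colOf M j x = true) ⊆
            (univ.filter fun x => colOf M j' x = true) := by
          intro x hx
          simp only [Finset.mem_filter, Finset.mem_univ, true_and] at hx ⊢
          exact hsub x hx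
        have heq := Finset.eq_of_subset_of_card_le hsub2 (le_of_eq hw.symm)
        have := Finset.ext_iff.mp heq i
        simp only [Finset.mem_filter, Finset.mem_univ, true_and, colOf] at this
        rw [(Finset.mem_filter.mp (this.mpr (Finset.mem_filter.mpr ⟨Finset.mem_univ _, h2⟩))).2] at h1
        exact Bool.noConfusion h1
  · intro j j' hw i hi
    rcases lonesum_comparable M hM j j' with h | h
    · exact h i hi
    · exact absurd (weight_le_of_imp h) (not_le.mpr hw)
end

section
/- For all n ≥ 1, m ≥ 1 and d ≥ 1, the restricted Stirling numbers satisfy S(n,m)_{≤d} + C(n−1, d)·S(n−d−1, m−1)_{≤d} = S(n−1, m−1)_{≤d} + m·S(n−1, m)_{≤d}, where C(n−1,d) is the binomial coefficient and the term S(n−d−1, m−1)_{≤d} is taken to be 0 when n < d+1 (note C(n−1,d) = 0 in that case). -/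
open Finset

set_option linter.unusedSectionVars false
set_option linter.unusedVariables false

variable {α β : Type*} [DecidableEq α] [DecidableEq β]

/-- subtype version of a finpartition of a finset -/
def Finpartition.toSub {s : Finset α} (P : Finpartition s) :
    Finpartition (univ : Finset {x // x ∈ s}) where
  parts := P.parts.image (fun b => b.subtype (· ∈ s))
  supIndep := by
    rw [Finset.supIndep_iff_pairwiseDisjoint]
    rintro b hb c hc hbc
    simp only [coe_image, Set.mem_image, mem_coe] at hb hc
    obtain ⟨b0, hb0, rfl⟩ := hb
    obtain ⟨c0, hc0, rfl⟩ := hc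
    have hne : b0 ≠ c0 := by rintro rfl; exact hbc rfl
    have : Disjoint b0 c0 := P.disjoint hb0 hc0 hne
    show Disjoint _ _
    rw [Finset.disjoint_left] at this ⊢
    intro x hx hx'
    simp only [id, Finset.mem_subtype] at hx hx'
    exact this hx hx'
  sup_parts := by
    ext x
    simp only [Finset.mem_sup, mem_image, mem_univ, iff_true]
    obtain ⟨b, hb, hxb⟩ := P.exists_mem x.2
    exact ⟨_, ⟨b, hb, rfl⟩, by simpa using hxb⟩
  bot_notMem := by
    simp only [bot_eq_empty, mem_image, not_exists, not_and]
    intro b hb h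
    obtain ⟨x, hx⟩ := P.nonempty_of_mem_parts hb
    have hxs : x ∈ s := P.le hb hx
    have : (⟨x, hxs⟩ : {x // x ∈ s}) ∈ b.subtype (· ∈ s) := by simpa using hx
    simp [h] at this

/-- finpartition of `s` from one of the subtype -/
def Finpartition.ofSub {s : Finset α} (Q : Finpartition (univ : Finset {x // x ∈ s})) :
    Finpartition s where
  parts := Q.parts.image (Finset.map (Function.Embedding.subtype (· ∈ s)))
  supIndep := by
    rw [Finset.supIndep_iff_pairwiseDisjoint]
    rintro b hb c hc hbc
    simp only [coe_image, Set.mem_image, mem_coe] at hb hc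
    obtain ⟨b0, hb0, rfl⟩ := hb
    obtain ⟨c0, hc0, rfl⟩ := hc
    have hne : b0 ≠ c0 := by rintro rfl; exact hbc rfl
    have : Disjoint b0 c0 := Q.disjoint hb0 hc0 hne
    show Disjoint _ _
    rw [Finset.disjoint_left] at this ⊢
    intro x hx hx'
    simp only [id, Finset.mem_map, Function.Embedding.coe_subtype] at hx hx'
    obtain ⟨y, hy, rfl⟩ := hx
    obtain ⟨z, hz, hzy⟩ := hx'
    cases Subtype.ext hzy
    exact this hy hz
  sup_parts := by
    ext x
    simp only [Finset.mem_sup, mem_image]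
    constructor
    · rintro ⟨b', ⟨b, hb, rfl⟩, hx⟩
      simp only [id, Finset.mem_map, Function.Embedding.coe_subtype] at hx
      obtain ⟨y, _, rfl⟩ := hx
      exact y.2
    · intro hx
      obtain ⟨b, hb, hxb⟩ := Q.exists_mem (mem_univ (⟨x, hx⟩ : {x // x ∈ s}))
      exact ⟨_, ⟨b, hb, rfl⟩, Finset.mem_map.2 ⟨⟨x, hx⟩, hxb, rfl⟩⟩
  bot_notMem := by
    simp only [bot_eq_empty, mem_image, not_exists, not_and]
    intro b hb h
    obtain ⟨x, hx⟩ := Q.nonempty_of_mem_parts hb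
    have : (x : α) ∈ b.map (Function.Embedding.subtype (· ∈ s)) :=
      Finset.mem_map.2 ⟨x, hx, rfl⟩
    simp [h] at this

@[simp] lemma Finpartition.toSub_parts {s : Finset α} (P : Finpartition s) :
    P.toSub.parts = P.parts.image (fun b => b.subtype (· ∈ s)) := rfl

@[simp] lemma Finpartition.ofSub_parts {s : Finset α} (Q : Finpartition (univ : Finset {x // x ∈ s})) :
    Q.ofSub.parts = Q.parts.image (Finset.map (Function.Embedding.subtype (· ∈ s))) := rfl

lemma subtype_map_of_subset {s b : Finset α} (hb : b ⊆ s) :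
    (b.subtype (· ∈ s)).map (Function.Embedding.subtype (· ∈ s)) = b := by
  rw [Finset.subtype_map]
  exact Finset.filter_true_of_mem fun x hx => hb hx

lemma map_subtype_eq {s : Finset α} (t : Finset {x // x ∈ s}) :
    (t.map (Function.Embedding.subtype (· ∈ s))).subtype (· ∈ s) = t := by
  ext x
  simp [Finset.mem_subtype, Finset.mem_map]

lemma Finpartition.ofSub_toSub {s : Finset α} (P : Finpartition s) : P.toSub.ofSub = P := by
  ext1
  rw [ofSub_parts, toSub_parts, Finset.image_image]
  refine (Finset.image_congr ?_).trans Finset.image_id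
  intro b hb
  exact subtype_map_of_subset (P.le hb)

lemma Finpartition.toSub_ofSub {s : Finset α} (Q : Finpartition (univ : Finset {x // x ∈ s})) :
    Q.ofSub.toSub = Q := by
  ext1
  rw [toSub_parts, ofSub_parts, Finset.image_image]
  refine (Finset.image_congr ?_).trans Finset.image_id
  intro b _
  exact map_subtype_eq b

lemma Finpartition.toSub_parts_card {s : Finset α} (P : Finpartition s) :
    P.toSub.parts.card = P.parts.card := by
  rw [toSub_parts]
  apply Finset.card_image_of_injOn
  intro b hb c hc h
  simp only at h
  rw [← subtype_map_of_subset (P.le hb), h, subtype_map_of_subset (P.le hc)]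

lemma Finpartition.mem_toSub_parts_card {s : Finset α} (P : Finpartition s) {b : Finset {x // x ∈ s}}
    (hb : b ∈ P.toSub.parts) : ∃ c ∈ P.parts, c.card = b.card := by
  rw [toSub_parts] at hb
  obtain ⟨c, hc, rfl⟩ := Finset.mem_image.1 hb
  refine ⟨c, hc, ?_⟩
  conv_lhs => rw [← subtype_map_of_subset (P.le hc)]
  rw [Finset.card_map]

/-- The order isomorphism of finset lattices induced by an equiv. -/
def Equiv.finsetOrderIso (e : α ≃ β) : Finset α ≃o Finset β where
  toEquiv := e.finsetCongr
  map_rel_iff' := by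
    intro s t
    simp only [Equiv.finsetCongr_apply]
    exact Finset.map_subset_map

@[simp] lemma Equiv.finsetOrderIso_apply (e : α ≃ β) (s : Finset α) :
    e.finsetOrderIso s = s.map e.toEmbedding := rfl

/-- Transport a finpartition of univ along an equiv of fintypes. -/
def Finpartition.congrEquiv [Fintype α] [Fintype β] (e : α ≃ β)
    (P : Finpartition (univ : Finset α)) : Finpartition (univ : Finset β) :=
  (P.map e.finsetOrderIso).copy (by simp [Finset.map_univ_equiv])

@[simp] lemma Finpartition.congrEquiv_parts [Fintype α] [Fintype β] (e : α ≃ β)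
    (P : Finpartition (univ : Finset α)) :
    (P.congrEquiv e).parts = P.parts.map (e.finsetOrderIso : Finset α ↪o Finset β).toEmbedding := rfl

lemma Finpartition.mem_congrEquiv_parts [Fintype α] [Fintype β] (e : α ≃ β)
    (P : Finpartition (univ : Finset α)) {b : Finset β} :
    b ∈ (P.congrEquiv e).parts ↔ ∃ c ∈ P.parts, c.map e.toEmbedding = b := by
  rw [congrEquiv_parts]
  simp only [Finset.mem_map]
  rfl

lemma Finpartition.congrEquiv_symm_congrEquiv [Fintype α] [Fintype β] (e : α ≃ β)
    (P : Finpartition (univ : Finset α)) : (P.congrEquiv e).congrEquiv e.symm = P := by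
  ext1
  rw [congrEquiv_parts, congrEquiv_parts, Finset.map_map]
  refine Finset.ext fun b => ?_
  simp only [Finset.mem_map, Function.Embedding.trans_apply]
  constructor
  · rintro ⟨c, hc, rfl⟩
    convert hc
    ext x
    simp [Equiv.finsetOrderIso, Equiv.finsetCongr]
  · intro hb
    refine ⟨b, hb, ?_⟩
    ext x
    simp [Equiv.finsetOrderIso, Equiv.finsetCongr]

lemma Finpartition.congrEquiv_parts_card [Fintype α] [Fintype β] (e : α ≃ β)
    (P : Finpartition (univ : Finset α)) :
    (P.congrEquiv e).parts.card = P.parts.card := by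
  rw [congrEquiv_parts, Finset.card_map]

lemma Finpartition.mem_congrEquiv_parts_card [Fintype α] [Fintype β] (e : α ≃ β)
    (P : Finpartition (univ : Finset α)) {b : Finset β} (hb : b ∈ (P.congrEquiv e).parts) :
    ∃ c ∈ P.parts, c.card = b.card := by
  rw [mem_congrEquiv_parts] at hb
  obtain ⟨c, hc, rfl⟩ := hb
  exact ⟨c, hc, (Finset.card_map _).symm⟩

/-- The restricted Stirling number of the second kind `S(n,m)_{≤ d}`:
the number of partitions of an `n`-element set into exactly `m` nonempty
blocks, each of cardinality at most `d`. -/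
noncomputable def restrictedStirling (n m d : ℕ) : ℕ :=
  Nat.card {P : Finpartition (univ : Finset (Fin n)) //
    P.parts.card = m ∧ ∀ b ∈ P.parts, b.card ≤ d}

/-- the finset of good partitions of `s` -/
def famS [Fintype α] (s : Finset α) (m d : ℕ) : Finset (Finpartition s) :=
  univ.filter (fun P => P.parts.card = m ∧ ∀ b ∈ P.parts, b.card ≤ d)

lemma mem_famS [Fintype α] {s : Finset α} {m d : ℕ} {P : Finpartition s} :
    P ∈ famS s m d ↔ P.parts.card = m ∧ ∀ b ∈ P.parts, b.card ≤ d := by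
  simp [famS]

lemma restrictedStirling_eq_card (n m d : ℕ) :
    restrictedStirling n m d = (famS (univ : Finset (Fin n)) m d).card := by
  rw [restrictedStirling, Nat.card_eq_fintype_card, Fintype.card_subtype, famS]

lemma Finpartition.ofSub_parts_card {s : Finset α} (Q : Finpartition (univ : Finset {x // x ∈ s})) :
    Q.ofSub.parts.card = Q.parts.card := by
  rw [ofSub_parts]
  exact Finset.card_image_of_injective _ (fun a b h => Finset.map_injective _ h)

lemma card_famS [Fintype α] (s : Finset α) (m d : ℕ) :
    (famS s m d).card = restrictedStirling s.card m d := by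
  rw [restrictedStirling_eq_card]
  have h1 : (famS s m d).card = (famS (univ : Finset {x // x ∈ s}) m d).card := by
    apply Finset.card_nbij' (i := Finpartition.toSub) (j := Finpartition.ofSub)
    · intro P hP
      rw [Finset.mem_coe, mem_famS] at hP ⊢
      refine ⟨P.toSub_parts_card.trans hP.1, fun b hb => ?_⟩
      obtain ⟨c, hc, hcb⟩ := P.mem_toSub_parts_card hb
      exact hcb ▸ hP.2 c hc
    · intro Q hQ
      rw [Finset.mem_coe, mem_famS] at hQ ⊢
      refine ⟨Q.ofSub_parts_card.trans hQ.1, fun b hb => ?_⟩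
      rw [Finpartition.ofSub_parts, Finset.mem_image] at hb
      obtain ⟨c, hc, rfl⟩ := hb
      rw [Finset.card_map]
      exact hQ.2 c hc
    · intro P _; exact P.ofSub_toSub
    · intro Q _; exact Q.toSub_ofSub
  rw [h1]
  have e : {x // x ∈ s} ≃ Fin s.card := s.equivFin
  apply Finset.card_nbij' (i := fun P => P.congrEquiv e) (j := fun Q => Q.congrEquiv e.symm)
  · intro P hP
    rw [Finset.mem_coe, mem_famS] at hP ⊢
    refine ⟨(Finpartition.congrEquiv_parts_card e P).trans hP.1, fun b hb => ?_⟩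
    obtain ⟨c, hc, hcb⟩ := Finpartition.mem_congrEquiv_parts_card e P hb
    exact hcb ▸ hP.2 c hc
  · intro Q hQ
    rw [Finset.mem_coe, mem_famS] at hQ ⊢
    refine ⟨(Finpartition.congrEquiv_parts_card e.symm Q).trans hQ.1, fun b hb => ?_⟩
    obtain ⟨c, hc, hcb⟩ := Finpartition.mem_congrEquiv_parts_card e.symm Q hb
    exact hcb ▸ hQ.2 c hc
  · intro P _; exact Finpartition.congrEquiv_symm_congrEquiv e P
  · intro Q _
    have := Finpartition.congrEquiv_symm_congrEquiv e.symm Q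
    simpa using this

lemma Finpartition.avoid_parts_of_mem {s B : Finset α} (P : Finpartition s) (hB : B ∈ P.parts) :
    (P.avoid B).parts = P.parts.erase B := by
  ext c
  rw [Finpartition.mem_avoid, Finset.mem_erase]
  constructor
  · rintro ⟨u, hu, hub, rfl⟩
    have hne : u ≠ B := by rintro rfl; exact hub le_rfl
    have hdisj : Disjoint u B := P.disjoint hu hB hne
    rw [Finset.sdiff_eq_self_of_disjoint hdisj]
    exact ⟨hne, hu⟩
  · rintro ⟨hne, hc⟩
    have hdisj : Disjoint c B := P.disjoint hc hB hne
    refine ⟨c, hc, fun h => ?_, Finset.sdiff_eq_self_of_disjoint hdisj⟩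
    obtain ⟨x, hx⟩ := P.nonempty_of_mem_parts hc
    exact (Finset.disjoint_left.1 hdisj) hx (h hx)

lemma fiber_card [Fintype α] {s B : Finset α} (hBs : B ⊆ s) (hB : B.Nonempty)
    {d : ℕ} (hBd : B.card ≤ d) (m : ℕ) :
    ((famS s (m+1) d).filter (fun P => B ∈ P.parts)).card
      = restrictedStirling (s.card - B.card) m d := by
  rw [← Finset.card_sdiff_of_subset hBs, ← card_famS]
  have hBne : B ≠ ⊥ := by simpa [Finset.bot_eq_empty] using hB.ne_empty
  have hdisj : Disjoint (s \ B) B := Finset.sdiff_disjoint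
  have hsup : (s \ B) ⊔ B = s := by
    rw [Finset.sup_eq_union, Finset.sdiff_union_of_subset hBs]
  apply Finset.card_nbij' (i := fun P => P.avoid B)
    (j := fun Q => Q.extend hBne hdisj hsup)
  · intro P hP
    rw [Finset.mem_coe, Finset.mem_filter, mem_famS] at hP
    obtain ⟨⟨hcard, hsize⟩, hBP⟩ := hP
    rw [Finset.mem_coe, mem_famS, P.avoid_parts_of_mem hBP]
    refine ⟨by rw [Finset.card_erase_of_mem hBP, hcard]; rfl, fun b hb => ?_⟩
    exact hsize b (Finset.mem_of_mem_erase hb)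
  · intro Q hQ
    rw [Finset.mem_coe, mem_famS] at hQ
    have hBQ : B ∉ Q.parts := by
      intro h
      obtain ⟨x, hx⟩ := hB
      exact (Finset.mem_sdiff.1 (Q.le h hx)).2 hx
    rw [Finset.mem_coe, Finset.mem_filter, mem_famS]
    refine ⟨⟨?_, fun b hb => ?_⟩, ?_⟩
    · show (insert B Q.parts).card = m + 1
      rw [Finset.card_insert_of_notMem hBQ, hQ.1]
    · rcases Finset.mem_insert.1 hb with rfl | hb'
      · exact hBd
      · exact hQ.2 b hb'
    · exact Finset.mem_insert_self _ _
  · intro P hP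
    rw [Finset.mem_coe, Finset.mem_filter] at hP
    ext1
    show insert B ((P.avoid B).parts) = P.parts
    rw [P.avoid_parts_of_mem hP.2, Finset.insert_erase hP.2]
  · intro Q hQ
    have hBQ : B ∉ Q.parts := by
      intro h
      obtain ⟨x, hx⟩ := hB
      exact (Finset.mem_sdiff.1 (Q.le h hx)).2 hx
    ext1
    rw [Finpartition.avoid_parts_of_mem _ (Finset.mem_insert_self _ _)]
    exact Finset.erase_insert hBQ

lemma count_contain [Fintype α] (a : α) (j : ℕ) :
    ((univ : Finset (Finset α)).filter (fun B => a ∈ B ∧ B.card = j + 1)).card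
      = (Fintype.card α - 1).choose j := by
  have hcard : (univ.erase a).card = Fintype.card α - 1 := by
    rw [Finset.card_erase_of_mem (mem_univ a), Finset.card_univ]
  rw [← hcard, ← Finset.card_powersetCard]
  apply Finset.card_nbij' (i := fun B => B.erase a) (j := fun C => insert a C)
  · intro B hB
    rw [Finset.mem_coe, Finset.mem_filter] at hB
    rw [Finset.mem_coe, Finset.mem_powersetCard]
    refine ⟨fun x hx => ?_, ?_⟩
    · rw [Finset.mem_erase] at hx ⊢
      exact ⟨hx.1, mem_univ x⟩
    · rw [Finset.card_erase_of_mem hB.2.1, hB.2.2]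
      omega
  · intro C hC
    rw [Finset.mem_coe, Finset.mem_powersetCard] at hC
    have haC : a ∉ C := fun h => (Finset.mem_erase.1 (hC.1 h)).1 rfl
    rw [Finset.mem_coe, Finset.mem_filter]
    exact ⟨mem_univ _, Finset.mem_insert_self _ _,
      by rw [Finset.card_insert_of_notMem haC, hC.2]⟩
  · intro B hB
    rw [Finset.mem_coe, Finset.mem_filter] at hB
    exact Finset.insert_erase hB.2.1
  · intro C hC
    rw [Finset.mem_coe, Finset.mem_powersetCard] at hC
    have haC : a ∉ C := fun h => (Finset.mem_erase.1 (hC.1 h)).1 rfl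
    exact Finset.erase_insert haC

lemma lemA (n m d : ℕ) :
    restrictedStirling (n+1) (m+1) d
      = ∑ j ∈ range d, n.choose j * restrictedStirling (n - j) m d := by
  classical
  rw [restrictedStirling_eq_card]
  set α := Fin (n+1)
  set a : α := 0
  set T := (univ : Finset (Finset α)).filter (fun B => a ∈ B ∧ B.card ≤ d) with hT
  have step1 : (famS (univ : Finset α) (m+1) d).card
      = ∑ B ∈ T, ((famS (univ : Finset α) (m+1) d).filter (fun P => P.part a = B)).card := by
    apply Finset.card_eq_sum_card_fiberwise
    intro P hP
    rw [Finset.mem_coe, mem_famS] at hP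
    rw [hT, Finset.mem_coe, Finset.mem_filter]
    exact ⟨mem_univ _, P.mem_part (mem_univ a), hP.2 _ (P.part_mem.2 (mem_univ a))⟩
  rw [step1]
  have step2 : ∀ B ∈ T, ((famS (univ : Finset α) (m+1) d).filter (fun P => P.part a = B)).card
      = restrictedStirling (n + 1 - B.card) m d := by
    intro B hB
    rw [hT, Finset.mem_filter] at hB
    obtain ⟨-, haB, hBd⟩ := hB
    have : (famS (univ : Finset α) (m+1) d).filter (fun P => P.part a = B)
        = (famS (univ : Finset α) (m+1) d).filter (fun P => B ∈ P.parts) := by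
      apply Finset.filter_congr
      intro P _
      constructor
      · rintro rfl; exact P.part_mem.2 (mem_univ a)
      · intro h; exact P.part_eq_of_mem h haB
    rw [this, fiber_card (Finset.subset_univ B) ⟨a, haB⟩ hBd m]
    congr 1
    rw [Finset.card_univ, Fintype.card_fin]
  rw [Finset.sum_congr rfl step2]
  have hmaps : ∀ B ∈ T, B.card - 1 ∈ range d := by
    intro B hB
    rw [hT, Finset.mem_filter] at hB
    have : 1 ≤ B.card := Finset.card_pos.2 ⟨a, hB.2.1⟩
    rw [Finset.mem_range]
    omega
  rw [← Finset.sum_fiberwise_of_maps_to hmaps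
    (fun B => restrictedStirling (n + 1 - B.card) m d)]
  · apply Finset.sum_congr rfl
    intro j hj
    rw [Finset.mem_range] at hj
    have hsets : T.filter (fun B => B.card - 1 = j)
        = (univ : Finset (Finset α)).filter (fun B => a ∈ B ∧ B.card = j + 1) := by
      ext B
      rw [hT, Finset.filter_filter, Finset.mem_filter, Finset.mem_filter]
      constructor
      · rintro ⟨h1, ⟨haB, hBd⟩, hc⟩
        have h1le : 1 ≤ B.card := Finset.card_pos.2 ⟨a, haB⟩
        exact ⟨h1, haB, by omega⟩
      · rintro ⟨h1, haB, hc⟩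
        exact ⟨h1, ⟨haB, by omega⟩, by omega⟩
    have : ∀ B ∈ T.filter (fun B => B.card - 1 = j),
        restrictedStirling (n + 1 - B.card) m d = restrictedStirling (n - j) m d := by
      intro B hB
      rw [hsets, Finset.mem_filter] at hB
      rw [hB.2.2]
      congr 1
      omega
    rw [Finset.sum_congr rfl this, Finset.sum_const, smul_eq_mul, hsets, count_contain]
    have hα : Fintype.card α = n + 1 := Fintype.card_fin _
    rw [hα]
    norm_num

lemma count_card [Fintype α] (k : ℕ) :
    ((univ : Finset (Finset α)).filter (fun B => B.card = k)).card
      = (Fintype.card α).choose k := by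
  have : (univ : Finset (Finset α)).filter (fun B => B.card = k)
      = Finset.powersetCard k univ := by
    ext B
    simp [Finset.mem_powersetCard]
  rw [this, Finset.card_powersetCard, Finset.card_univ]

set_option maxHeartbeats 2000000 in
lemma lemB (n m d : ℕ) :
    (m + 1) * restrictedStirling n (m+1) d
      = ∑ j ∈ range d, n.choose (j+1) * restrictedStirling (n - (j+1)) m d := by
  classical
  rw [restrictedStirling_eq_card]
  set α := Fin n
  set F := famS (univ : Finset α) (m+1) d with hF
  set PP := (F ×ˢ (univ : Finset (Finset α))).filter (fun p => p.2 ∈ p.1.parts) with hPP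
  have hmemPP : ∀ p : Finpartition (univ : Finset α) × Finset α,
      p ∈ PP ↔ p.1 ∈ F ∧ p.2 ∈ p.1.parts := by
    intro p
    rw [hPP, Finset.mem_filter, Finset.mem_product]
    constructor
    · rintro ⟨⟨h1, -⟩, h2⟩; exact ⟨h1, h2⟩
    · rintro ⟨h1, h2⟩; exact ⟨⟨h1, mem_univ _⟩, h2⟩
  have count1 : PP.card = (m + 1) * F.card := by
    have h1 : PP.card = ∑ P ∈ F, (PP.filter (fun p => p.1 = P)).card := by
      apply Finset.card_eq_sum_card_fiberwise
      intro p hp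
      exact ((hmemPP p).1 hp).1
    rw [h1]
    have h2 : ∀ P ∈ F, (PP.filter (fun p => p.1 = P)).card = m + 1 := by
      intro P hP
      have : (PP.filter (fun p => p.1 = P)).card = P.parts.card := by
        apply Finset.card_nbij' (i := Prod.snd) (j := fun B => (P, B))
        · intro p hp
          rw [Finset.mem_coe, Finset.mem_filter] at hp
          obtain ⟨hp1, hp2⟩ := hp
          rw [hmemPP] at hp1
          exact hp2 ▸ hp1.2
        · intro B hB
          rw [Finset.mem_coe, Finset.mem_filter, hmemPP]
          exact ⟨⟨hP, hB⟩, rfl⟩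
        · rintro ⟨p1, p2⟩ hp
          rw [Finset.mem_coe, Finset.mem_filter] at hp
          have h : p1 = P := hp.2
          rw [h]
        · intro B _; rfl
      rw [this]
      rw [hF, mem_famS] at hP
      exact hP.1
    rw [Finset.sum_congr rfl h2, Finset.sum_const, smul_eq_mul, mul_comm]
  have count2 : PP.card = ∑ j ∈ range d, n.choose (j+1) * restrictedStirling (n - (j+1)) m d := by
    set T := (univ : Finset (Finset α)).filter (fun B => B.Nonempty ∧ B.card ≤ d) with hT
    have h1 : PP.card = ∑ B ∈ T, (PP.filter (fun p => p.2 = B)).card := by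
      apply Finset.card_eq_sum_card_fiberwise
      intro p hp
      rw [Finset.mem_coe, hmemPP] at hp
      rw [hT, Finset.mem_coe, Finset.mem_filter]
      refine ⟨mem_univ _, Finpartition.nonempty_of_mem_parts _ hp.2, ?_⟩
      rw [hF, mem_famS] at hp
      exact hp.1.2 _ hp.2
    rw [h1]
    have h2 : ∀ B ∈ T, (PP.filter (fun p => p.2 = B)).card
        = restrictedStirling (n - B.card) m d := by
      intro B hB
      rw [hT, Finset.mem_filter] at hB
      obtain ⟨-, hBne, hBd⟩ := hB
      have hstep : (PP.filter (fun p => p.2 = B)).card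
          = (F.filter (fun P => B ∈ P.parts)).card := by
        apply Finset.card_nbij' (i := Prod.fst) (j := fun P => (P, B))
        · intro p hp
          rw [Finset.mem_coe, Finset.mem_filter] at hp
          obtain ⟨hp1, hp2⟩ := hp
          rw [hmemPP] at hp1
          rw [Finset.mem_coe, Finset.mem_filter]
          exact ⟨hp1.1, hp2 ▸ hp1.2⟩
        · intro P hP
          rw [Finset.mem_coe, Finset.mem_filter] at hP
          rw [Finset.mem_coe, Finset.mem_filter, hmemPP]
          exact ⟨⟨hP.1, hP.2⟩, rfl⟩
        · rintro ⟨p1, p2⟩ hp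
          rw [Finset.mem_coe, Finset.mem_filter] at hp
          have h : p2 = B := hp.2
          rw [h]
        · intro P _; rfl
      rw [hstep, hF, fiber_card (Finset.subset_univ B) hBne hBd m]
      congr 1
      rw [Finset.card_univ]
      have : Fintype.card α = n := Fintype.card_fin _
      rw [this]
    rw [Finset.sum_congr rfl h2]
    have hmaps : ∀ B ∈ T, B.card - 1 ∈ range d := by
      intro B hB
      rw [hT, Finset.mem_filter] at hB
      have : 1 ≤ B.card := Finset.card_pos.2 hB.2.1
      rw [Finset.mem_range]
      omega
    rw [← Finset.sum_fiberwise_of_maps_to hmaps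
      (fun B => restrictedStirling (n - B.card) m d)]
    apply Finset.sum_congr rfl
    intro j hj
    rw [Finset.mem_range] at hj
    have hsets : T.filter (fun B => B.card - 1 = j)
        = (univ : Finset (Finset α)).filter (fun B => B.card = j + 1) := by
      ext B
      rw [hT, Finset.filter_filter, Finset.mem_filter, Finset.mem_filter]
      constructor
      · rintro ⟨h1, ⟨hBne, hBd⟩, hc⟩
        have h1le : 1 ≤ B.card := Finset.card_pos.2 hBne
        exact ⟨h1, by omega⟩
      · rintro ⟨h1, hc⟩
        refine ⟨h1, ⟨Finset.card_pos.1 (by omega), by omega⟩, by omega⟩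
    have hcongr : ∀ B ∈ T.filter (fun B => B.card - 1 = j),
        restrictedStirling (n - B.card) m d = restrictedStirling (n - (j+1)) m d := by
      intro B hB
      rw [hsets, Finset.mem_filter] at hB
      rw [hB.2]
    rw [Finset.sum_congr rfl hcongr, Finset.sum_const, smul_eq_mul, hsets, count_card]
    have : Fintype.card α = n := Fintype.card_fin _
    rw [this]
  rw [← count1, count2]

/-- The recurrence
`S(n,m)_{≤d} + C(n−1,d)·S(n−d−1,m−1)_{≤d} = S(n−1,m−1)_{≤d} + m·S(n−1,m)_{≤d}`. -/
theorem restrictedStirling_recurrence (n m d : ℕ) (hn : 1 ≤ n) (hm : 1 ≤ m) (hd : 1 ≤ d) :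
    restrictedStirling n m d +
        Nat.choose (n - 1) d * restrictedStirling (n - d - 1) (m - 1) d =
      restrictedStirling (n - 1) (m - 1) d + m * restrictedStirling (n - 1) m d := by
  obtain ⟨N, rfl⟩ : ∃ N, n = N + 1 := ⟨n - 1, by omega⟩
  obtain ⟨M, rfl⟩ : ∃ M, m = M + 1 := ⟨m - 1, by omega⟩
  simp only [Nat.add_sub_cancel]
  have hnd : N + 1 - d - 1 = N - d := by omega
  rw [hnd, lemA N M d, lemB N M d]
  rw [← Finset.sum_range_succ (fun j => N.choose j * restrictedStirling (N - j) M d) d]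
  rw [Finset.sum_range_succ' (fun j => N.choose j * restrictedStirling (N - j) M d) d]
  simp only [Nat.choose_zero_right, Nat.sub_zero, one_mul]
  omega
end

section
/- For all natural numbers n, k and d ≥ 1, the number of n×k lonesum 01 matrices having no all-zero column and no all-zero row, in which every column vector occurs at most d times among the columns and every row vector occurs at most d times among the rows, is pB(n,k)_{≤d} = ∑_{m=0}^{min(n,k)} m! · S(n,m)_{≤d} · m! · S(k,m)_{≤d}. -/
open Finset

/-- The `i`-th row of a 01 matrix. -/
def rowOf {n k : ℕ} (M : Fin n → Fin k → Bool) (i : Fin n) : Fin k → Bool :=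
  fun j => M i j

/-- `pB(n,k)_{≤d}`: the number of `n × k` lonesum 01 matrices with no all-zero
column and no all-zero row, in which every column vector occurs at most `d`
times among the columns and every row vector occurs at most `d` times among
the rows. -/
noncomputable def pB (n k d : ℕ) : ℕ :=
  Nat.card {M : Fin n → Fin k → Bool // Lonesum M ∧
    (∀ j, ∃ i, M i j = true) ∧ (∀ i, ∃ j, M i j = true) ∧
    (∀ j, (univ.filter fun j' => colOf M j' = colOf M j).card ≤ d) ∧
    (∀ i, (univ.filter fun i' => rowOf M i' = rowOf M i).card ≤ d)}

namespace PBAux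

open Function

/-! ### Rank of an element in a finite set of naturals -/

def rk (s : Finset ℕ) (a : ℕ) : ℕ := (s.filter (fun x => x < a)).card

lemma rk_lt_card {s : Finset ℕ} {a : ℕ} (ha : a ∈ s) : rk s a < s.card := by
  apply Finset.card_lt_card
  refine ⟨Finset.filter_subset _ _, fun hsub => ?_⟩
  have := hsub ha
  simp at this

lemma rk_le_rk {s : Finset ℕ} {a b : ℕ} (h : a ≤ b) : rk s a ≤ rk s b := by
  apply Finset.card_le_card
  intro x hx
  rw [Finset.mem_filter] at hx ⊢
  exact ⟨hx.1, by omega⟩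

lemma rk_lt_rk {s : Finset ℕ} {a b : ℕ} (ha : a ∈ s) (h : a < b) : rk s a < rk s b := by
  apply Finset.card_lt_card
  constructor
  · intro x hx
    rw [Finset.mem_filter] at hx ⊢
    exact ⟨hx.1, by omega⟩
  · intro hsub
    have := hsub (Finset.mem_filter.mpr ⟨ha, h⟩)
    simp at this

lemma rk_le_iff {s : Finset ℕ} {a b : ℕ} (ha : a ∈ s) (hb : b ∈ s) :
    rk s a ≤ rk s b ↔ a ≤ b := by
  constructor
  · intro h
    by_contra hab
    have := rk_lt_rk (a := b) (b := a) hb (by omega)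
    omega
  · exact rk_le_rk

lemma rk_injOn {s : Finset ℕ} {a b : ℕ} (ha : a ∈ s) (hb : b ∈ s)
    (h : rk s a = rk s b) : a = b := by
  have h1 := (rk_le_iff ha hb).mp (le_of_eq h)
  have h2 := (rk_le_iff hb ha).mp (le_of_eq h.symm)
  omega

lemma rk_surj {s : Finset ℕ} {t : ℕ} (h : t < s.card) : ∃ a ∈ s, rk s a = t := by
  have himg : s.image (rk s) = Finset.range s.card := by
    apply Finset.eq_of_subset_of_card_le
    · intro x hx
      obtain ⟨a, ha, rfl⟩ := Finset.mem_image.mp hx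
      exact Finset.mem_range.mpr (rk_lt_card ha)
    · rw [Finset.card_range, Finset.card_image_of_injOn (fun a ha b hb => rk_injOn ha hb)]
  have : t ∈ s.image (rk s) := himg ▸ Finset.mem_range.mpr h
  obtain ⟨a, ha, hrk⟩ := Finset.mem_image.mp this
  exact ⟨a, ha, hrk⟩

lemma rk_tri {s : Finset ℕ} {a : ℕ} (ha : a ∈ s) :
    rk s a + (s.filter (fun x => a < x)).card + 1 = s.card := by
  have h1 : (s.filter (fun x => x < a)).card + (s.filter (fun x => ¬ x < a)).card = s.card :=
    Finset.card_filter_add_card_filter_not _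
  have h2 : s.filter (fun x => ¬ x < a) = insert a (s.filter (fun x => a < x)) := by
    ext x
    simp only [Finset.mem_filter, Finset.mem_insert]
    constructor
    · rintro ⟨hx, hxa⟩
      rcases eq_or_lt_of_le (not_lt.mp hxa) with h | h
      · exact Or.inl h.symm
      · exact Or.inr ⟨hx, h⟩
    · rintro (rfl | ⟨hx, hxa⟩)
      · exact ⟨ha, by omega⟩
      · exact ⟨hx, by omega⟩
  have h3 : a ∉ s.filter (fun x => a < x) := by simp
  rw [h2, Finset.card_insert_of_notMem h3] at h1
  unfold rk
  omega

/-! ### Structure of lonesum matrices -/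

variable {p q : ℕ}

/-- Transpose. -/
def tA (A : Fin p → Fin q → Bool) : Fin q → Fin p → Bool := fun j i => A i j

/-- Number of ones in row `i`. -/
def rcnt (A : Fin p → Fin q → Bool) (i : Fin p) : ℕ :=
  (univ.filter fun j => A i j = true).card

/-- Number of ones in column `j`. -/
def ccnt (A : Fin p → Fin q → Bool) (j : Fin q) : ℕ :=
  (univ.filter fun i => A i j = true).card

/-- Number of rows whose count is at least that of row `i`. -/
def upc (A : Fin p → Fin q → Bool) (i : Fin p) : ℕ :=
  (univ.filter fun i' => rcnt A i ≤ rcnt A i').card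

lemma ccnt_tA (A : Fin p → Fin q → Bool) : ccnt (tA A) = rcnt A := rfl

lemma rcnt_tA (A : Fin p → Fin q → Bool) : rcnt (tA A) = ccnt A := rfl

lemma lonesum_tA {A : Fin p → Fin q → Bool} (hA : Lonesum A) : Lonesum (tA A) := by
  intro j j' i i' hj hi
  obtain ⟨h1, h2⟩ := hA i i' j j' hi hj
  constructor
  · rintro ⟨a, b, c, d⟩; exact h1 ⟨a, c, b, d⟩
  · rintro ⟨a, b, c, d⟩; exact h2 ⟨a, c, b, d⟩

/-- The basic pattern-avoidance consequence. -/
lemma pattern {A : Fin p → Fin q → Bool} (hA : Lonesum A) {i i' : Fin p} {j j' : Fin q}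
    (h1 : A i j = true) (h2 : A i' j = false) (h3 : A i' j' = true) : A i j' = true := by
  by_contra h4
  rw [Bool.not_eq_true] at h4
  have hii : i ≠ i' := fun h => by rw [h, h2] at h1; exact Bool.noConfusion h1
  have hjj : j ≠ j' := fun h => by rw [h, h3] at h2; exact Bool.noConfusion h2
  rcases lt_or_gt_of_ne hii with hi | hi <;> rcases lt_or_gt_of_ne hjj with hj | hj
  · exact (hA i i' j j' hi hj).1 ⟨h1, h4, h2, h3⟩
  · exact (hA i i' j' j hi hj).2 ⟨h4, h1, h3, h2⟩
  · exact (hA i' i j j' hi hj).2 ⟨h2, h3, h1, h4⟩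
  · exact (hA i' i j' j hi hj).1 ⟨h3, h2, h4, h1⟩

/-- Monotonicity of supports along row counts. -/
lemma supp_mono {A : Fin p → Fin q → Bool} (hA : Lonesum A) {i i' : Fin p}
    (h : rcnt A i ≤ rcnt A i') {j : Fin q} (hj : A i j = true) : A i' j = true := by
  by_contra h2
  rw [Bool.not_eq_true] at h2
  have hsub : (univ.filter fun j' => A i' j' = true) ⊆ (univ.filter fun j' => A i j' = true) := by
    intro j' hj'
    rw [Finset.mem_filter] at hj' ⊢
    exact ⟨Finset.mem_univ _, pattern hA hj h2 hj'.2⟩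
  have hlt : rcnt A i' < rcnt A i := by
    apply Finset.card_lt_card
    refine ⟨hsub, fun hcon => ?_⟩
    have := hcon (Finset.mem_filter.mpr ⟨Finset.mem_univ _, hj⟩)
    rw [Finset.mem_filter] at this
    rw [this.2] at h2
    exact Bool.noConfusion h2
  omega

/-- Rows with equal counts are equal. -/
lemma row_eq {A : Fin p → Fin q → Bool} (hA : Lonesum A) {i i' : Fin p}
    (h : rcnt A i = rcnt A i') : A i = A i' := by
  have hsub : (univ.filter fun j => A i j = true) ⊆ (univ.filter fun j => A i' j = true) := by
    intro j hj
    rw [Finset.mem_filter] at hj ⊢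
    exact ⟨Finset.mem_univ _, supp_mono hA (le_of_eq h) hj.2⟩
  have heq := Finset.eq_of_subset_of_card_le hsub (le_of_eq h.symm)
  funext j
  have := Finset.ext_iff.mp heq j
  simp only [Finset.mem_filter, Finset.mem_univ, true_and] at this
  cases h1 : A i j <;> cases h2 : A i' j <;> simp_all

/-- Each nonempty column support is an "up-set" of rows. -/
lemma col_eq_upset {A : Fin p → Fin q → Bool} (hA : Lonesum A) {j : Fin q}
    (hne : ∃ i, A i j = true) :
    ∃ i₁, A i₁ j = true ∧
      (univ.filter fun i => A i j = true) = (univ.filter fun i' => rcnt A i₁ ≤ rcnt A i') := by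
  obtain ⟨i0, hi0⟩ := hne
  have hS : (univ.filter fun i => A i j = true).Nonempty :=
    ⟨i0, Finset.mem_filter.mpr ⟨Finset.mem_univ _, hi0⟩⟩
  obtain ⟨i₁, hi₁S, hmin⟩ := Finset.exists_min_image _ (rcnt A) hS
  rw [Finset.mem_filter] at hi₁S
  refine ⟨i₁, hi₁S.2, ?_⟩
  ext i'
  simp only [Finset.mem_filter, Finset.mem_univ, true_and]
  constructor
  · intro h
    exact hmin i' (Finset.mem_filter.mpr ⟨Finset.mem_univ _, h⟩)
  · intro h
    exact supp_mono hA h hi₁S.2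

/-- The key structural fact: membership is governed by counts. -/
lemma key {A : Fin p → Fin q → Bool} (hA : Lonesum A) (hcols : ∀ j, ∃ i, A i j = true)
    (i : Fin p) (j : Fin q) : A i j = true ↔ upc A i ≤ ccnt A j := by
  obtain ⟨i₁, h1, hset⟩ := col_eq_upset hA (hcols j)
  have hcc : ccnt A j = upc A i₁ := congrArg Finset.card hset
  constructor
  · intro hij
    apply Finset.card_le_card
    intro i' hi'
    rw [Finset.mem_filter] at hi' ⊢
    exact ⟨Finset.mem_univ _, supp_mono hA hi'.2 hij⟩
  · intro h
    rw [hcc] at h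
    rcases le_total (rcnt A i₁) (rcnt A i) with hle | hle
    · have : i ∈ (univ.filter fun i => A i j = true) := by
        rw [hset, Finset.mem_filter]
        exact ⟨Finset.mem_univ _, hle⟩
      exact (Finset.mem_filter.mp this).2
    · have hsub : (univ.filter fun i' => rcnt A i₁ ≤ rcnt A i')
          ⊆ (univ.filter fun i' => rcnt A i ≤ rcnt A i') := by
        intro x hx
        rw [Finset.mem_filter] at hx ⊢
        exact ⟨Finset.mem_univ _, le_trans hle hx.2⟩
      have heq := Finset.eq_of_subset_of_card_le hsub h
      have : i ∈ (univ.filter fun i' => rcnt A i₁ ≤ rcnt A i') := by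
        rw [heq, Finset.mem_filter]
        exact ⟨Finset.mem_univ _, le_refl _⟩
      rw [← hset, Finset.mem_filter] at this
      exact this.2

/-- Auxiliary function: `upc` factors through `rcnt`. -/
def hUf (A : Fin p → Fin q → Bool) (a : ℕ) : ℕ :=
  (univ.filter fun i' => a ≤ rcnt A i').card

lemma upc_eq_hUf (A : Fin p → Fin q → Bool) (i : Fin p) : upc A i = hUf A (rcnt A i) := rfl

lemma hUf_anti_weak (A : Fin p → Fin q → Bool) {a b : ℕ} (h : a ≤ b) : hUf A b ≤ hUf A a := by
  apply Finset.card_le_card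
  intro x hx
  rw [Finset.mem_filter] at hx ⊢
  exact ⟨hx.1, le_trans h hx.2⟩

lemma hUf_anti (A : Fin p → Fin q → Bool) {a b : ℕ} (ha : a ∈ univ.image (rcnt A))
    (h : a < b) : hUf A b < hUf A a := by
  obtain ⟨i0, _, rfl⟩ := Finset.mem_image.mp ha
  apply Finset.card_lt_card
  constructor
  · intro x hx
    rw [Finset.mem_filter] at hx ⊢
    exact ⟨hx.1, by omega⟩
  · intro hcon
    have := hcon (Finset.mem_filter.mpr ⟨Finset.mem_univ _, le_refl _⟩)
    rw [Finset.mem_filter] at this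
    omega

lemma image_upc (A : Fin p → Fin q → Bool) :
    univ.image (upc A) = (univ.image (rcnt A)).image (hUf A) := by
  rw [Finset.image_image]
  rfl

lemma card_image_upc (A : Fin p → Fin q → Bool) :
    (univ.image (upc A)).card = (univ.image (rcnt A)).card := by
  rw [image_upc]
  apply Finset.card_image_of_injOn
  intro a ha b hb hab
  by_contra hne
  rcases lt_or_gt_of_ne hne with h | h
  · have := hUf_anti A ha h; omega
  · have := hUf_anti A hb h; omega

/-! ### Rank data of a lonesum matrix -/

/-- Number of distinct rows. -/
def mrow (A : Fin p → Fin q → Bool) : ℕ := (univ.image (rcnt A)).card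

/-- Rank of row `i` among the distinct rows, ordered by count. -/
def fRank (A : Fin p → Fin q → Bool) (i : Fin p) : ℕ :=
  rk (univ.image (rcnt A)) (rcnt A i)

/-- Rank of column `j` among the distinct columns, ordered by count. -/
def gRank (A : Fin p → Fin q → Bool) (j : Fin q) : ℕ :=
  rk (univ.image (ccnt A)) (ccnt A j)

lemma gRank_eq_tA (A : Fin p → Fin q → Bool) : gRank A = fRank (tA A) := rfl

lemma fRank_eq_tA (A : Fin p → Fin q → Bool) : fRank A = gRank (tA A) := rfl

lemma ccnt_mem_image_upc {A : Fin p → Fin q → Bool} (hA : Lonesum A)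
    (hc : ∀ j, ∃ i, A i j = true) (j : Fin q) : ccnt A j ∈ univ.image (upc A) := by
  obtain ⟨i₁, _, hset⟩ := col_eq_upset hA (hc j)
  have : ccnt A j = upc A i₁ := congrArg Finset.card hset
  rw [this]
  exact Finset.mem_image_of_mem _ (Finset.mem_univ _)

lemma card_image_ccnt {A : Fin p → Fin q → Bool} (hA : Lonesum A)
    (hc : ∀ j, ∃ i, A i j = true) (hr : ∀ i, ∃ j, A i j = true) :
    (univ.image (ccnt A)).card = mrow A := by
  have h1 : univ.image (ccnt A) ⊆ univ.image (upc A) := by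
    intro x hx
    obtain ⟨j, _, rfl⟩ := Finset.mem_image.mp hx
    exact ccnt_mem_image_upc hA hc j
  have c1 : (univ.image (ccnt A)).card ≤ mrow A := by
    have := Finset.card_le_card h1
    rwa [card_image_upc] at this
  have h2 : univ.image (ccnt (tA A)) ⊆ univ.image (upc (tA A)) := by
    intro x hx
    obtain ⟨i, _, rfl⟩ := Finset.mem_image.mp hx
    exact ccnt_mem_image_upc (lonesum_tA hA) hr i
  have c2 : mrow A ≤ (univ.image (ccnt A)).card := by
    have := Finset.card_le_card h2
    rwa [card_image_upc, ccnt_tA, rcnt_tA] at this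
  omega

lemma image_ccnt_eq {A : Fin p → Fin q → Bool} (hA : Lonesum A)
    (hc : ∀ j, ∃ i, A i j = true) (hr : ∀ i, ∃ j, A i j = true) :
    univ.image (ccnt A) = univ.image (upc A) := by
  refine Finset.eq_of_subset_of_card_le ?_ ?_
  · intro x hx
    obtain ⟨j, _, rfl⟩ := Finset.mem_image.mp hx
    exact ccnt_mem_image_upc hA hc j
  · rw [card_image_upc, card_image_ccnt hA hc hr]
    exact le_of_eq rfl

lemma fRank_lt (A : Fin p → Fin q → Bool) (i : Fin p) : fRank A i < mrow A :=
  rk_lt_card (Finset.mem_image_of_mem _ (Finset.mem_univ _))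

lemma gRank_lt {A : Fin p → Fin q → Bool} (hA : Lonesum A)
    (hc : ∀ j, ∃ i, A i j = true) (hr : ∀ i, ∃ j, A i j = true) (j : Fin q) :
    gRank A j < mrow A := by
  have := rk_lt_card (s := univ.image (ccnt A)) (Finset.mem_image_of_mem _ (Finset.mem_univ j))
  rwa [card_image_ccnt hA hc hr] at this

lemma fRank_surj (A : Fin p → Fin q → Bool) {y : ℕ} (hy : y < mrow A) :
    ∃ i, fRank A i = y := by
  obtain ⟨a, ha, hrk⟩ := rk_surj hy
  obtain ⟨i, _, rfl⟩ := Finset.mem_image.mp ha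
  exact ⟨i, hrk⟩

lemma gRank_surj {A : Fin p → Fin q → Bool} (hA : Lonesum A)
    (hc : ∀ j, ∃ i, A i j = true) (hr : ∀ i, ∃ j, A i j = true) {y : ℕ} (hy : y < mrow A) :
    ∃ j, gRank A j = y := by
  have hy' : y < (univ.image (ccnt A)).card := by rw [card_image_ccnt hA hc hr]; exact hy
  obtain ⟨a, ha, hrk⟩ := rk_surj hy'
  obtain ⟨j, _, rfl⟩ := Finset.mem_image.mp ha
  exact ⟨j, hrk⟩

/-- The key rank identity. -/
lemma keyRank {A : Fin p → Fin q → Bool} (hA : Lonesum A)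
    (hc : ∀ j, ∃ i, A i j = true) (hr : ∀ i, ∃ j, A i j = true) (i : Fin p) (j : Fin q) :
    (A i j = true) ↔ mrow A ≤ fRank A i + gRank A j + 1 := by
  have hR : True := trivial
  let R := univ.image (rcnt A)
  let C := univ.image (ccnt A)
  have hCU : C = univ.image (upc A) := image_ccnt_eq hA hc hr
  have hUmem : upc A i ∈ C := by
    rw [hCU]; exact Finset.mem_image_of_mem _ (Finset.mem_univ _)
  have hcmem : ccnt A j ∈ C := Finset.mem_image_of_mem _ (Finset.mem_univ _)
  have hrmem : rcnt A i ∈ R := Finset.mem_image_of_mem _ (Finset.mem_univ _)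
  have h1 : (A i j = true) ↔ upc A i ≤ ccnt A j := key hA hc i j
  have h2 : upc A i ≤ ccnt A j ↔ rk C (upc A i) ≤ gRank A j := (rk_le_iff hUmem hcmem).symm
  have hfilter : C.filter (fun x => x < upc A i)
      = (R.filter (fun b => rcnt A i < b)).image (hUf A) := by
    ext x
    constructor
    · intro hx
      rw [Finset.mem_filter, hCU, image_upc] at hx
      obtain ⟨hx1, hlt⟩ := hx
      obtain ⟨b, hb, rfl⟩ := Finset.mem_image.mp hx1
      rcases le_or_gt b (rcnt A i) with hle | hgt
      · exfalso
        have := hUf_anti_weak A hle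
        rw [upc_eq_hUf] at hlt
        omega
      · exact Finset.mem_image.mpr ⟨b, Finset.mem_filter.mpr ⟨hb, hgt⟩, rfl⟩
    · intro hx
      obtain ⟨b, hb, rfl⟩ := Finset.mem_image.mp hx
      rw [Finset.mem_filter] at hb
      rw [Finset.mem_filter]
      constructor
      · rw [hCU, image_upc]
        exact Finset.mem_image_of_mem _ hb.1
      · rw [upc_eq_hUf]
        exact hUf_anti A hrmem hb.2
  have hcard : rk C (upc A i) = (R.filter (fun b => rcnt A i < b)).card := by
    show (C.filter (fun x => x < upc A i)).card = _
    rw [hfilter]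
    apply Finset.card_image_of_injOn
    intro a ha b hb hab
    rw [Finset.mem_coe, Finset.mem_filter] at ha hb
    by_contra hne
    rcases lt_or_gt_of_ne hne with h | h
    · have := hUf_anti A ha.1 h; omega
    · have := hUf_anti A hb.1 h; omega
  have htri := rk_tri hrmem
  have hflt := fRank_lt A i
  have hglt := gRank_lt hA hc hr j
  have hf : fRank A i = rk R (rcnt A i) := rfl
  have hm : mrow A = R.card := rfl
  rw [h1, h2]
  omega

lemma mrow_le_min {A : Fin p → Fin q → Bool} (hA : Lonesum A)
    (hc : ∀ j, ∃ i, A i j = true) (hr : ∀ i, ∃ j, A i j = true) :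
    mrow A ≤ min p q := by
  refine le_min ?_ ?_
  · calc mrow A ≤ (univ : Finset (Fin p)).card := Finset.card_image_le
    _ = p := by simp
  · rw [← card_image_ccnt hA hc hr]
    calc (univ.image (ccnt A)).card ≤ (univ : Finset (Fin q)).card := Finset.card_image_le
    _ = q := by simp

lemma fRank_fiber {A : Fin p → Fin q → Bool} (hA : Lonesum A) (i : Fin p) :
    (univ.filter fun i' => fRank A i' = fRank A i) = (univ.filter fun i' => A i' = A i) := by
  ext i'
  simp only [Finset.mem_filter, Finset.mem_univ, true_and]
  constructor
  · intro h
    have hcnt : rcnt A i' = rcnt A i :=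
      rk_injOn (Finset.mem_image_of_mem _ (Finset.mem_univ _))
        (Finset.mem_image_of_mem _ (Finset.mem_univ _)) h
    exact row_eq hA hcnt
  · intro h
    have hcnt : rcnt A i' = rcnt A i := by unfold rcnt; rw [h]
    unfold fRank
    rw [hcnt]

/-! ### The canonical matrix associated with a pair of surjections -/

variable {m' : ℕ}

/-- The canonical lonesum matrix built from two rank functions. -/
def mkMat (m' : ℕ) (f : Fin p → Fin m') (g : Fin q → Fin m') : Fin p → Fin q → Bool :=
  fun i j => decide (m' ≤ (f i : ℕ) + (g j : ℕ) + 1)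

lemma tA_mkMat (f : Fin p → Fin m') (g : Fin q → Fin m') :
    tA (mkMat m' f g) = mkMat m' g f := by
  funext j i
  unfold tA mkMat
  rw [decide_eq_decide]
  omega

lemma lonesum_mkMat (f : Fin p → Fin m') (g : Fin q → Fin m') :
    Lonesum (mkMat m' f g) := by
  intro i i' j j' _ _
  constructor <;> rintro ⟨a, b, c, d⟩ <;>
    simp only [mkMat, decide_eq_true_eq, decide_eq_false_iff_not] at a b c d <;> omega

lemma mk_row_ne (f : Fin p → Fin m') {g : Fin q → Fin m'} (hg : Surjective g) (i : Fin p) :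
    ∃ j, mkMat m' f g i j = true := by
  have hm : 0 < m' := lt_of_le_of_lt (Nat.zero_le _) (f i).isLt
  obtain ⟨j, hj⟩ := hg ⟨m' - 1, by omega⟩
  refine ⟨j, decide_eq_true ?_⟩
  have : (g j : ℕ) = m' - 1 := congrArg Fin.val hj
  omega

lemma mk_col_ne {f : Fin p → Fin m'} (g : Fin q → Fin m') (hf : Surjective f) (j : Fin q) :
    ∃ i, mkMat m' f g i j = true := by
  obtain ⟨i, hi⟩ := mk_row_ne g hf j
  refine ⟨i, ?_⟩
  rw [← tA_mkMat] at hi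
  exact hi

lemma mk_row_eq_iff (f : Fin p → Fin m') {g : Fin q → Fin m'} (hg : Surjective g)
    (i i' : Fin p) : mkMat m' f g i' = mkMat m' f g i ↔ f i' = f i := by
  constructor
  · intro h
    have hm : 0 < m' := lt_of_le_of_lt (Nat.zero_le _) (f i).isLt
    have haux : ∀ i₁ i₂ : Fin p, mkMat m' f g i₁ = mkMat m' f g i₂ →
        (f i₁ : ℕ) ≤ (f i₂ : ℕ) := by
      intro i₁ i₂ hh
      obtain ⟨j, hj⟩ := hg ⟨m' - 1 - (f i₁ : ℕ), by omega⟩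
      have hgj : (g j : ℕ) = m' - 1 - (f i₁ : ℕ) := congrArg Fin.val hj
      have h1 : mkMat m' f g i₁ j = true := by
        apply decide_eq_true
        have := (f i₁).isLt
        omega
      rw [hh] at h1
      have h2 := of_decide_eq_true h1
      have := (f i₁).isLt
      omega
    have := haux i' i h
    have := haux i i' h.symm
    exact Fin.ext (by omega)
  · intro h
    funext j
    unfold mkMat
    rw [h]

lemma mk_col_eq_iff {f : Fin p → Fin m'} (g : Fin q → Fin m') (hf : Surjective f)
    (j j' : Fin q) :
    (fun i => mkMat m' f g i j') = (fun i => mkMat m' f g i j) ↔ g j' = g j := by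
  have := mk_row_eq_iff g hf j j' (m' := m') (p := q)
  rw [← this, ← tA_mkMat]
  exact Iff.rfl

/-- Row counts of the canonical matrix. -/
def phi (m' : ℕ) (g : Fin q → Fin m') (t : ℕ) : ℕ :=
  (univ.filter fun j => m' ≤ t + (g j : ℕ) + 1).card

lemma rcnt_mk (f : Fin p → Fin m') (g : Fin q → Fin m') (i : Fin p) :
    rcnt (mkMat m' f g) i = phi m' g (f i) := by
  unfold rcnt mkMat phi
  simp only [decide_eq_true_eq]

lemma phi_mono_weak (g : Fin q → Fin m') {t t' : ℕ} (h : t ≤ t') :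
    phi m' g t ≤ phi m' g t' := by
  apply Finset.card_le_card
  intro j hj
  rw [Finset.mem_filter] at hj ⊢
  exact ⟨hj.1, by omega⟩

lemma phi_mono {g : Fin q → Fin m'} (hg : Surjective g) {t t' : ℕ} (ht' : t' < m')
    (h : t < t') : phi m' g t < phi m' g t' := by
  obtain ⟨j, hj⟩ := hg ⟨m' - 1 - t', by omega⟩
  have hgj : (g j : ℕ) = m' - 1 - t' := congrArg Fin.val hj
  apply Finset.card_lt_card
  constructor
  · intro x hx
    rw [Finset.mem_filter] at hx ⊢
    exact ⟨hx.1, by omega⟩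
  · intro hcon
    have hjmem : j ∈ univ.filter (fun j => m' ≤ t' + (g j : ℕ) + 1) :=
      Finset.mem_filter.mpr ⟨Finset.mem_univ _, by omega⟩
    have := hcon hjmem
    rw [Finset.mem_filter] at this
    omega

lemma image_rcnt_mk {f : Fin p → Fin m'} (g : Fin q → Fin m') (hf : Surjective f) :
    univ.image (rcnt (mkMat m' f g)) =
      (univ : Finset (Fin m')).image (fun t : Fin m' => phi m' g (t : ℕ)) := by
  have h1 : rcnt (mkMat m' f g) = (fun t : Fin m' => phi m' g (t : ℕ)) ∘ f := by
    funext i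
    exact rcnt_mk f g i
  rw [h1, ← Finset.image_image, Finset.image_univ_of_surjective hf]

lemma mrow_mk {f : Fin p → Fin m'} {g : Fin q → Fin m'} (hf : Surjective f)
    (hg : Surjective g) : mrow (mkMat m' f g) = m' := by
  unfold mrow
  rw [image_rcnt_mk g hf]
  rw [Finset.card_image_of_injOn]
  · simp
  · intro a _ b _ hab
    have hab : phi m' g (a : ℕ) = phi m' g (b : ℕ) := hab
    by_contra hne
    have hne' : (a : ℕ) ≠ (b : ℕ) := fun h => hne (Fin.ext h)
    rcases lt_or_gt_of_ne hne' with h | h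
    · have := phi_mono hg b.isLt h; omega
    · have := phi_mono hg a.isLt h; omega

lemma fin_filter_lt_card (a : Fin m') :
    ((univ : Finset (Fin m')).filter fun x => x < a).card = (a : ℕ) := by
  have : ((univ : Finset (Fin m')).filter fun x => x < a) = Finset.Iio a := by
    ext x
    simp [Finset.mem_Iio]
  rw [this, Fin.card_Iio]

lemma fRank_mk {f : Fin p → Fin m'} {g : Fin q → Fin m'} (hf : Surjective f)
    (hg : Surjective g) (i : Fin p) : fRank (mkMat m' f g) i = (f i : ℕ) := by
  unfold fRank rk
  rw [image_rcnt_mk g hf, rcnt_mk f g i]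
  have hset : ((univ : Finset (Fin m')).image (fun t : Fin m' => phi m' g (t : ℕ))).filter
      (fun x => x < phi m' g (f i : ℕ))
      = ((univ : Finset (Fin m')).filter (fun t => t < f i)).image
          (fun t : Fin m' => phi m' g (t : ℕ)) := by
    ext x
    constructor
    · intro hx
      rw [Finset.mem_filter] at hx
      obtain ⟨hx1, hlt⟩ := hx
      obtain ⟨t, _, rfl⟩ := Finset.mem_image.mp hx1
      have htf : t < f i := by
        by_contra hge
        have : (f i : ℕ) ≤ (t : ℕ) := by
          rw [Fin.lt_def] at hge; omega
        have := phi_mono_weak g (m' := m') this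
        omega
      exact Finset.mem_image.mpr ⟨t, Finset.mem_filter.mpr ⟨Finset.mem_univ _, htf⟩, rfl⟩
    · intro hx
      obtain ⟨t, ht, rfl⟩ := Finset.mem_image.mp hx
      rw [Finset.mem_filter] at ht
      rw [Finset.mem_filter]
      refine ⟨Finset.mem_image_of_mem _ (Finset.mem_univ _), ?_⟩
      exact phi_mono hg (f i).isLt (by rw [Fin.lt_def] at ht; exact ht.2)
  rw [hset, Finset.card_image_of_injOn, fin_filter_lt_card]
  intro a ha b hb hab
  have hab : phi m' g (a : ℕ) = phi m' g (b : ℕ) := hab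
  rw [Finset.mem_coe, Finset.mem_filter] at ha hb
  by_contra hne
  have hne' : (a : ℕ) ≠ (b : ℕ) := fun h => hne (Fin.ext h)
  rcases lt_or_gt_of_ne hne' with h | h
  · have := phi_mono hg b.isLt h; omega
  · have := phi_mono hg a.isLt h; omega

lemma gRank_mk {f : Fin p → Fin m'} {g : Fin q → Fin m'} (hf : Surjective f)
    (hg : Surjective g) (j : Fin q) : gRank (mkMat m' f g) j = (g j : ℕ) := by
  rw [gRank_eq_tA, tA_mkMat]
  exact fRank_mk hg hf j

/-! ### Surjections with small fibers, and the main equivalence -/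

/-- Surjections `Fin n → Fin m` in which every fiber has at most `d` elements. -/
abbrev SurjD (n m d : ℕ) : Type :=
  {f : Fin n → Fin m // Surjective f ∧ ∀ x, (univ.filter fun x' => f x' = f x).card ≤ d}

/-- The matrices counted by `pB`. -/
abbrev MatT (n k d : ℕ) : Type :=
  {M : Fin n → Fin k → Bool // Lonesum M ∧
    (∀ j, ∃ i, M i j = true) ∧ (∀ i, ∃ j, M i j = true) ∧
    (∀ j, (univ.filter fun j' => colOf M j' = colOf M j).card ≤ d) ∧
    (∀ i, (univ.filter fun i' => rowOf M i' = rowOf M i).card ≤ d)}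

lemma sigma_mk_eq {n k d S : ℕ} {a b : Fin S}
    (u : SurjD n a d × SurjD k a d) (v : SurjD n b d × SurjD k b d)
    (h : (a : ℕ) = (b : ℕ))
    (hf : ∀ i, ((u.1.1 i : ℕ)) = (v.1.1 i : ℕ))
    (hg : ∀ j, ((u.2.1 j : ℕ)) = (v.2.1 j : ℕ)) :
    (⟨a, u⟩ : Σ t : Fin S, SurjD n t d × SurjD k t d) = ⟨b, v⟩ := by
  have hab : a = b := Fin.ext h
  subst hab
  exact congrArg _ (Prod.ext (Subtype.ext (funext fun i => Fin.ext (hf i)))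
    (Subtype.ext (funext fun j => Fin.ext (hg j))))

/-- The main structure theorem, as an equivalence. -/
noncomputable def matEquiv (n k d : ℕ) :
    MatT n k d ≃ Σ t : Fin (min n k + 1), SurjD n t d × SurjD k t d where
  toFun := fun ⟨M, hL, hc, hr, hcd, hrd⟩ =>
    ⟨⟨mrow M, by have := mrow_le_min hL hc hr; omega⟩,
     ⟨fun i => ⟨fRank M i, fRank_lt M i⟩,
      by
        constructor
        · intro y
          obtain ⟨i, hi⟩ := fRank_surj M y.isLt
          exact ⟨i, Fin.ext hi⟩
        · intro x
          have h1 : (univ.filter fun x' => (⟨fRank M x', fRank_lt M x'⟩ : Fin (mrow M))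
              = ⟨fRank M x, fRank_lt M x⟩) = (univ.filter fun x' => fRank M x' = fRank M x) := by
            apply Finset.filter_congr
            intro x' _
            rw [Fin.mk.injEq]
          rw [h1, fRank_fiber hL x]
          exact hrd x⟩,
     ⟨fun j => ⟨gRank M j, gRank_lt hL hc hr j⟩,
      by
        constructor
        · intro y
          obtain ⟨j, hj⟩ := gRank_surj hL hc hr y.isLt
          exact ⟨j, Fin.ext hj⟩
        · intro x
          have h1 : (univ.filter fun x' => (⟨gRank M x', gRank_lt hL hc hr x'⟩ : Fin (mrow M))
              = ⟨gRank M x, gRank_lt hL hc hr x⟩)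
              = (univ.filter fun x' => fRank (tA M) x' = fRank (tA M) x) := by
            apply Finset.filter_congr
            intro x' _
            rw [Fin.mk.injEq]
            exact Iff.rfl
          rw [h1, fRank_fiber (lonesum_tA hL) x]
          exact hcd x⟩⟩
  invFun := fun ⟨t, F, G⟩ =>
    ⟨mkMat (t : ℕ) F.1 G.1, lonesum_mkMat F.1 G.1,
     fun j => mk_col_ne G.1 F.2.1 j,
     fun i => mk_row_ne F.1 G.2.1 i,
     by
       intro j
       have h1 : (univ.filter fun j' => colOf (mkMat (t : ℕ) F.1 G.1) j'
           = colOf (mkMat (t : ℕ) F.1 G.1) j) = (univ.filter fun j' => G.1 j' = G.1 j) := by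
         apply Finset.filter_congr
         intro j' _
         exact mk_col_eq_iff G.1 F.2.1 j j'
       rw [h1]
       exact G.2.2 j,
     by
       intro i
       have h1 : (univ.filter fun i' => rowOf (mkMat (t : ℕ) F.1 G.1) i'
           = rowOf (mkMat (t : ℕ) F.1 G.1) i) = (univ.filter fun i' => F.1 i' = F.1 i) := by
         apply Finset.filter_congr
         intro i' _
         exact mk_row_eq_iff F.1 G.2.1 i i'
       rw [h1]
       exact F.2.2 i⟩
  left_inv := by
    rintro ⟨M, hL, hc, hr, hcd, hrd⟩
    apply Subtype.ext
    show mkMat (mrow M) _ _ = M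
    funext i j
    have hk := keyRank hL hc hr i j
    cases hMij : M i j
    · rw [hMij] at hk
      apply decide_eq_false
      intro hcon
      exact Bool.noConfusion (hk.mpr hcon)
    · exact decide_eq_true (hk.mp hMij)
  right_inv := by
    rintro ⟨t, F, G⟩
    apply sigma_mk_eq
    · exact mrow_mk F.2.1 G.2.1
    · intro i
      exact fRank_mk F.2.1 G.2.1 i
    · intro j
      exact gRank_mk F.2.1 G.2.1 j

/-! ### Counting surjections with small fibers via partitions -/

section Stirling

variable {n m d : ℕ}

/-- The partition of `Fin n` into fibers of a surjection. -/
def fiberPart (f : Fin n → Fin m) (hf : Surjective f) :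
    Finpartition (univ : Finset (Fin n)) where
  parts := univ.image (fun v : Fin m => univ.filter fun i => f i = v)
  supIndep := by
    rw [Finset.supIndep_iff_pairwiseDisjoint]
    intro b hb b' hb' hne
    rw [Finset.mem_coe, Finset.mem_image] at hb hb'
    obtain ⟨v, _, rfl⟩ := hb
    obtain ⟨v', _, rfl⟩ := hb'
    have hvv : v ≠ v' := by
      rintro rfl
      exact hne rfl
    refine Finset.disjoint_left.mpr ?_
    intro x hx hx'
    rw [id_eq, Finset.mem_filter] at hx hx'
    exact hvv (hx.2 ▸ hx'.2 ▸ rfl)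
  sup_parts := by
    apply le_antisymm
    · apply Finset.sup_le
      intro b _
      exact Finset.subset_univ b
    · intro a _
      rw [Finset.mem_sup]
      exact ⟨univ.filter fun i => f i = f a,
        Finset.mem_image_of_mem _ (Finset.mem_univ _),
        Finset.mem_filter.mpr ⟨Finset.mem_univ _, rfl⟩⟩
  bot_notMem := by
    intro hcon
    rw [Finset.bot_eq_empty, Finset.mem_image] at hcon
    obtain ⟨v, _, hv⟩ := hcon
    obtain ⟨i, hi⟩ := hf v
    have : i ∈ (univ.filter fun i => f i = v) := Finset.mem_filter.mpr ⟨Finset.mem_univ _, hi⟩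
    rw [hv] at this
    exact absurd this (Finset.notMem_empty _)

lemma fiberPart_parts_card (f : Fin n → Fin m) (hf : Surjective f) :
    (fiberPart f hf).parts.card = m := by
  show (univ.image _).card = m
  rw [Finset.card_image_of_injOn]
  · simp
  · intro v _ v' _ hvv
    have hvv' : (univ.filter fun i => f i = v) = univ.filter fun i => f i = v' := hvv
    obtain ⟨i, hi⟩ := hf v
    have h1 : i ∈ (univ.filter fun i => f i = v) := Finset.mem_filter.mpr ⟨Finset.mem_univ _, hi⟩
    rw [hvv'] at h1
    rw [Finset.mem_filter] at h1
    rw [← hi, h1.2]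

lemma fiberPart_parts_bound (f : Fin n → Fin m) (hf : Surjective f)
    (hd : ∀ x, (univ.filter fun x' => f x' = f x).card ≤ d) :
    ∀ b ∈ (fiberPart f hf).parts, b.card ≤ d := by
  intro b hb
  obtain ⟨v, _, rfl⟩ := Finset.mem_image.mp hb
  obtain ⟨i, hi⟩ := hf v
  rw [← hi]
  exact hd i

lemma fiberPart_part_eq (f : Fin n → Fin m) (hf : Surjective f) (i : Fin n) :
    (fiberPart f hf).part i = univ.filter fun x => f x = f i :=
  (fiberPart f hf).part_eq_of_mem
    (Finset.mem_image_of_mem _ (Finset.mem_univ (f i)))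
    (Finset.mem_filter.mpr ⟨Finset.mem_univ _, rfl⟩)

lemma fiberPart_const (f : Fin n → Fin m) (hf : Surjective f) {b : Finset (Fin n)}
    (hb : b ∈ (fiberPart f hf).parts) {x y : Fin n} (hx : x ∈ b) (hy : y ∈ b) :
    f x = f y := by
  obtain ⟨v, _, rfl⟩ := Finset.mem_image.mp hb
  rw [Finset.mem_filter] at hx hy
  rw [hx.2, hy.2]

lemma fiberPart_eq_fiber (f : Fin n → Fin m) (hf : Surjective f) {b : Finset (Fin n)}
    (hb : b ∈ (fiberPart f hf).parts) {x : Fin n} (hx : x ∈ b) :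
    b = univ.filter fun x' => f x' = f x := by
  obtain ⟨v, _, rfl⟩ := Finset.mem_image.mp hb
  have : f x = v := (Finset.mem_filter.mp hx).2
  rw [this]

/-- Partitions of `Fin n` into exactly `m` parts of size at most `d`. -/
abbrev PartD (n m d : ℕ) : Type :=
  {P : Finpartition (univ : Finset (Fin n)) //
    P.parts.card = m ∧ ∀ b ∈ P.parts, b.card ≤ d}

lemma sigma_part_eq (P Q : PartD n m d)
    (eP : {e : {b // b ∈ P.1.parts} → Fin m // Bijective e})
    (eQ : {e : {b // b ∈ Q.1.parts} → Fin m // Bijective e})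
    (h : P.1.parts = Q.1.parts)
    (hee : ∀ b (hbP : b ∈ P.1.parts) (hbQ : b ∈ Q.1.parts), eP.1 ⟨b, hbP⟩ = eQ.1 ⟨b, hbQ⟩) :
    (⟨P, eP⟩ : Σ P : PartD n m d, {e : {b // b ∈ P.1.parts} → Fin m // Bijective e})
      = ⟨Q, eQ⟩ := by
  obtain ⟨P, hP⟩ := P
  obtain ⟨Q, hQ⟩ := Q
  have hPQ : P = Q := Finpartition.ext h
  subst hPQ
  exact congrArg _ (Subtype.ext (funext fun b => hee b.1 b.2 b.2))

/-- The equivalence between surjections with small fibers and ordered partitions. -/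
noncomputable def stirEquiv (n m d : ℕ) :
    SurjD n m d ≃ Σ P : PartD n m d, {e : {b // b ∈ P.1.parts} → Fin m // Bijective e} where
  toFun := fun ⟨f, hf, hd⟩ =>
    ⟨⟨fiberPart f hf, fiberPart_parts_card f hf, fiberPart_parts_bound f hf hd⟩,
     fun b => f (b.1.min' ((fiberPart f hf).nonempty_of_mem_parts b.2)),
     by
       constructor
       · intro b b' hbb
         have hbb' : f (b.1.min' ((fiberPart f hf).nonempty_of_mem_parts b.2))
             = f (b'.1.min' ((fiberPart f hf).nonempty_of_mem_parts b'.2)) := hbb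
         apply Subtype.ext
         rw [fiberPart_eq_fiber f hf b.2
             (Finset.min'_mem _ ((fiberPart f hf).nonempty_of_mem_parts b.2)),
           fiberPart_eq_fiber f hf b'.2
             (Finset.min'_mem _ ((fiberPart f hf).nonempty_of_mem_parts b'.2)), hbb']
       · intro v
         obtain ⟨i, hi⟩ := hf v
         have hmem : (univ.filter fun x => f x = f i) ∈ (fiberPart f hf).parts := by
           rw [hi]
           exact Finset.mem_image_of_mem _ (Finset.mem_univ v)
         refine ⟨⟨_, hmem⟩, ?_⟩
         have hmin : (univ.filter fun x => f x = f i).min'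
             ((fiberPart f hf).nonempty_of_mem_parts hmem)
             ∈ (univ.filter fun x => f x = f i) := Finset.min'_mem _ _
         rw [Finset.mem_filter] at hmin
         exact hmin.2.trans hi⟩
  invFun := fun ⟨⟨P, hP1, hP2⟩, e, he⟩ =>
    ⟨fun i => e ⟨P.part i, P.part_mem.mpr (Finset.mem_univ i)⟩,
     by
       constructor
       · intro v
         obtain ⟨⟨b, hb⟩, hv⟩ := he.2 v
         obtain ⟨x, hx⟩ := P.nonempty_of_mem_parts hb
         exact ⟨x, (congrArg e (Subtype.ext (P.part_eq_of_mem hb hx))).trans hv⟩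
       · intro x
         have hfil : (univ.filter fun x' =>
             e ⟨P.part x', P.part_mem.mpr (Finset.mem_univ x')⟩
               = e ⟨P.part x, P.part_mem.mpr (Finset.mem_univ x)⟩) = P.part x := by
           ext x'
           rw [Finset.mem_filter]
           constructor
           · rintro ⟨_, hx'⟩
             have h2 := he.1 hx'
             rw [Subtype.ext_iff] at h2
             have h3 : P.part x' = P.part x := h2
             exact h3 ▸ P.mem_part (Finset.mem_univ x')
           · intro hx'
             exact ⟨Finset.mem_univ _, congrArg e
               (Subtype.ext (P.part_eq_of_mem (P.part_mem.mpr (Finset.mem_univ x)) hx'))⟩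
         rw [hfil]
         exact hP2 _ (P.part_mem.mpr (Finset.mem_univ x))⟩
  left_inv := by
    rintro ⟨f, hf, hd⟩
    apply Subtype.ext
    funext i
    show f (((fiberPart f hf).part i).min' _) = f i
    exact fiberPart_const f hf ((fiberPart f hf).part_mem.mpr (Finset.mem_univ i))
      (Finset.min'_mem _ _) ((fiberPart f hf).mem_part (Finset.mem_univ i))
  right_inv := by
    rintro ⟨⟨P, hP1, hP2⟩, e, he⟩
    set f : Fin n → Fin m := fun i => e ⟨P.part i, P.part_mem.mpr (Finset.mem_univ i)⟩ with hfdef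
    have hfiber : ∀ (b : Finset (Fin n)) (hb : b ∈ P.parts),
        (univ.filter fun x => f x = e ⟨b, hb⟩) = b := by
      intro b hb
      ext x
      rw [Finset.mem_filter]
      constructor
      · rintro ⟨_, hx⟩
        have h2 := he.1 hx
        rw [Subtype.ext_iff] at h2
        have h3 : P.part x = b := h2
        exact h3 ▸ P.mem_part (Finset.mem_univ x)
      · intro hx
        exact ⟨Finset.mem_univ _, congrArg e (Subtype.ext (P.part_eq_of_mem hb hx))⟩
    apply sigma_part_eq
    · show (univ.image _) = P.parts
      ext b
      rw [Finset.mem_image]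
      constructor
      · rintro ⟨v, _, rfl⟩
        obtain ⟨⟨b₀, hb₀⟩, hv⟩ := he.2 v
        rw [← hv, hfiber b₀ hb₀]
        exact hb₀
      · intro hb
        exact ⟨e ⟨b, hb⟩, Finset.mem_univ _, hfiber b hb⟩
    · intro b hbP hbQ
      show f (b.min' _) = e ⟨b, hbQ⟩
      have hmin : b.min' (Finpartition.nonempty_of_mem_parts _ hbP) ∈ b := Finset.min'_mem _ _
      exact congrArg e (Subtype.ext (P.part_eq_of_mem hbQ hmin))

/-- `{e // Bijective e} ≃ (α ≃ β)`. -/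
noncomputable def bijEquiv (α β : Type*) : {e : α → β // Bijective e} ≃ (α ≃ β) where
  toFun e := Equiv.ofBijective e.1 e.2
  invFun E := ⟨E, E.bijective⟩
  left_inv e := Subtype.ext rfl
  right_inv E := Equiv.ext fun x => rfl

instance : Finite (Finpartition (univ : Finset (Fin n))) :=
  Finite.of_injective (fun P => P.parts) (fun _ _ h => Finpartition.ext h)

lemma countSurjD (n m d : ℕ) :
    Nat.card (SurjD n m d) = m.factorial * Nat.card (PartD n m d) := by
  have e1 := stirEquiv n m d
  have e2 : (Σ P : PartD n m d, {e : {b // b ∈ P.1.parts} → Fin m // Bijective e})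
      ≃ PartD n m d × (Fin m ≃ Fin m) := by
    refine (Equiv.sigmaCongrRight fun P => ?_).trans (Equiv.sigmaEquivProd _ _)
    refine (bijEquiv _ _).trans (Equiv.equivCongr ?_ (Equiv.refl (Fin m)))
    exact Fintype.equivFinOfCardEq (by rw [Fintype.card_coe]; exact P.2.1)
  rw [Nat.card_congr (e1.trans e2), Nat.card_prod]
  rw [Nat.card_eq_fintype_card (α := Fin m ≃ Fin m), Fintype.card_equiv (Equiv.refl _),
    Fintype.card_fin]
  ring

end Stirling

end PBAux

/-- The main counting theorem:
`pB(n,k)_{≤d} = ∑_{m=0}^{min(n,k)} m!·S(n,m)_{≤d}·m!·S(k,m)_{≤d}`. -/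
theorem pB_eq_sum (n k d : ℕ) (hd : 1 ≤ d) :
    pB n k d =
      ∑ m ∈ Finset.range (min n k + 1),
        m.factorial * restrictedStirling n m d *
          (m.factorial * restrictedStirling k m d) := by
  have h1 : pB n k d = Nat.card (PBAux.MatT n k d) := rfl
  rw [h1, Nat.card_congr (PBAux.matEquiv n k d), Nat.card_eq_fintype_card, Fintype.card_sigma]
  rw [← Fin.sum_univ_eq_sum_range
    (fun m => m.factorial * restrictedStirling n m d * (m.factorial * restrictedStirling k m d))
    (min n k + 1)]
  apply Finset.sum_congr rfl
  intro t _
  rw [Fintype.card_prod, ← Nat.card_eq_fintype_card, ← Nat.card_eq_fintype_card,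
    PBAux.countSurjD, PBAux.countSurjD]
  have hS : ∀ N : ℕ, restrictedStirling N (t : ℕ) d = Nat.card (PBAux.PartD N (t : ℕ) d) :=
    fun _ => rfl
  rw [hS, hS]
end

section
/- For all natural numbers n, k and d ≥ 1, the number of n×k lonesum 01 matrices having no all-zero column and no all-zero row in which every row vector occurs at most d times among the n rows (with no restriction on column multiplicities) equals ∑_{m=0}^{min(n,k)} m! · S(n,m)_{≤d} · m! · S(k,m). -/
open Finset

/-- The Stirling number of the second kind `S(n,m)`. -/
noncomputable def stirling (n m : ℕ) : ℕ :=
  Nat.card {P : Finpartition (univ : Finset (Fin n)) // P.parts.card = m}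

section Surj

variable {N m : ℕ}

def fnSetoid (f : Fin N → Fin m) : Setoid (Fin N) where
  r a b := f a = f b
  iseqv := ⟨fun _ => rfl, Eq.symm, Eq.trans⟩

instance (f : Fin N → Fin m) : DecidableRel (fnSetoid f).r :=
  fun a b => inferInstanceAs (Decidable (f a = f b))

def fnPart (f : Fin N → Fin m) : Finpartition (univ : Finset (Fin N)) :=
  Finpartition.ofSetoid (fnSetoid f)

def fib (f : Fin N → Fin m) (v : Fin m) : Finset (Fin N) :=
  univ.filter fun x => f x = v

lemma mem_fib {f : Fin N → Fin m} {v : Fin m} {x : Fin N} :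
    x ∈ fib f v ↔ f x = v := by simp [fib]

lemma fnPart_part (f : Fin N → Fin m) (a : Fin N) :
    (fnPart f).part a = fib f (f a) := by
  ext b
  rw [fnPart, Finpartition.mem_part_ofSetoid_iff_rel, mem_fib]
  exact ⟨fun h => h.symm, fun h => h.symm⟩

lemma parts_eq_image_part {α : Type*} [Fintype α] [DecidableEq α]
    (P : Finpartition (univ : Finset α)) : P.parts = univ.image P.part := by
  ext b
  simp only [mem_image, mem_univ, true_and]
  constructor
  · intro hb
    obtain ⟨x, hx⟩ := P.nonempty_of_mem_parts hb
    exact ⟨x, P.part_eq_of_mem hb hx⟩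
  · rintro ⟨a, rfl⟩
    exact P.part_mem.2 (mem_univ a)

lemma fnPart_parts (f : Fin N → Fin m) :
    (fnPart f).parts = univ.image fun a => fib f (f a) := by
  rw [parts_eq_image_part]
  exact image_congr fun a _ => fnPart_part f a

lemma fib_nonempty {f : Fin N → Fin m} (hf : Function.Surjective f) (v : Fin m) :
    (fib f v).Nonempty := by
  obtain ⟨x, hx⟩ := hf v
  exact ⟨x, mem_fib.2 hx⟩

lemma fnPart_parts_card {f : Fin N → Fin m} (hf : Function.Surjective f) :
    (fnPart f).parts.card = m := by
  rw [fnPart_parts]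
  have h1 : (univ.image fun a => fib f (f a)) = univ.image (fib f) := by
    rw [show (fun a => fib f (f a)) = fib f ∘ f from rfl, ← image_image,
      Finset.image_univ_of_surjective hf]
  rw [h1, card_image_of_injOn, card_univ, Fintype.card_fin]
  intro v _ w _ hvw
  obtain ⟨x, hx⟩ := fib_nonempty hf v
  have hx2 : x ∈ fib f w := hvw ▸ hx
  rw [mem_fib] at hx hx2
  rw [← hx, hx2]

lemma mem_fnPart_parts_iff {f : Fin N → Fin m} (hf : Function.Surjective f)
    {b : Finset (Fin N)} : b ∈ (fnPart f).parts ↔ ∃ v, b = fib f v := by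
  rw [fnPart_parts]
  simp only [mem_image, mem_univ, true_and]
  constructor
  · rintro ⟨a, rfl⟩; exact ⟨f a, rfl⟩
  · rintro ⟨v, rfl⟩
    obtain ⟨x, hx⟩ := hf v
    exact ⟨x, by rw [hx]⟩

/-- the labelling map from parts to `Fin m`. -/
noncomputable def partLabel (f : Fin N → Fin m) (b : {b // b ∈ (fnPart f).parts}) : Fin m :=
  f ((fnPart f).nonempty_of_mem_parts b.2).choose

lemma fib_partLabel {f : Fin N → Fin m} (hf : Function.Surjective f)
    (b : {b // b ∈ (fnPart f).parts}) : fib f (partLabel f b) = b.1 := by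
  obtain ⟨v, hv⟩ := (mem_fnPart_parts_iff hf).1 b.2
  have hy : ((fnPart f).nonempty_of_mem_parts b.2).choose ∈ b.1 :=
    ((fnPart f).nonempty_of_mem_parts b.2).choose_spec
  have hy2 : ((fnPart f).nonempty_of_mem_parts b.2).choose ∈ fib f v := hv ▸ hy
  rw [mem_fib] at hy2
  rw [hv, partLabel, hy2]

lemma partLabel_bijective {f : Fin N → Fin m} (hf : Function.Surjective f) :
    Function.Bijective (partLabel f) := by
  constructor
  · intro b b' h
    apply Subtype.ext
    rw [← fib_partLabel hf b, ← fib_partLabel hf b', h]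
  · intro v
    obtain ⟨x, hx⟩ := hf v
    have hb : fib f v ∈ (fnPart f).parts := (mem_fnPart_parts_iff hf).2 ⟨v, rfl⟩
    refine ⟨⟨fib f v, hb⟩, ?_⟩
    have := fib_partLabel hf ⟨fib f v, hb⟩
    -- fib f (label) = fib f v ⇒ label = v
    obtain ⟨y, hy⟩ := fib_nonempty hf (partLabel f ⟨fib f v, hb⟩)
    have hy2 : y ∈ fib f v := by rw [this] at hy; exact hy
    rw [mem_fib] at hy hy2
    rw [← hy, hy2]

end Surj

section Theta

variable {N m d : ℕ} (P : Finpartition (univ : Finset (Fin N)))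

/-- From a labelling of parts, build a function. -/
def theta (e : {b // b ∈ P.parts} ≃ Fin m) : Fin N → Fin m :=
  fun x => e ⟨P.part x, P.part_mem.2 (mem_univ x)⟩

lemma theta_fib (e : {b // b ∈ P.parts} ≃ Fin m) (x : Fin N) :
    fib (theta P e) (theta P e x) = P.part x := by
  ext y
  rw [mem_fib]
  constructor
  · intro h
    have h2 : P.part y = P.part x := Subtype.ext_iff.1 (e.injective h)
    exact (P.mem_part_iff_part_eq_part (mem_univ y) (mem_univ x)).2 h2
  · intro h
    have h2 : P.part y = P.part x := (P.mem_part_iff_part_eq_part (mem_univ y) (mem_univ x)).1 h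
    show e _ = e _
    congr 1
    exact Subtype.ext h2

lemma theta_surjective (e : {b // b ∈ P.parts} ≃ Fin m) :
    Function.Surjective (theta P e) := by
  intro v
  obtain ⟨y, hy⟩ := P.nonempty_of_mem_parts (e.symm v).2
  refine ⟨y, ?_⟩
  have h1 : P.part y = (e.symm v).1 := P.part_eq_of_mem (e.symm v).2 hy
  show e _ = v
  have h2 : (⟨P.part y, P.part_mem.2 (mem_univ y)⟩ : {b // b ∈ P.parts}) = e.symm v :=
    Subtype.ext h1
  rw [h2, e.apply_symm_apply]

lemma theta_fnPart (e : {b // b ∈ P.parts} ≃ Fin m) : fnPart (theta P e) = P := by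
  ext1
  rw [parts_eq_image_part (fnPart (theta P e)), parts_eq_image_part P]
  apply image_congr
  intro x _
  rw [fnPart_part, theta_fib]

lemma theta_injective : Function.Injective (theta (m := m) P) := by
  intro e e' h
  ext ⟨b, hb⟩
  obtain ⟨y, hy⟩ := P.nonempty_of_mem_parts hb
  have h1 : P.part y = b := P.part_eq_of_mem hb hy
  have h2 : theta P e y = theta P e' y := by rw [h]
  have h3 : (⟨b, hb⟩ : {b // b ∈ P.parts}) = ⟨P.part y, P.part_mem.2 (mem_univ y)⟩ :=
    Subtype.ext h1.symm
  rw [h3]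
  exact congrArg Fin.val h2

lemma partLabel_eq {f : Fin N → Fin m} (hf : Function.Surjective f)
    {b : Finset (Fin N)} (hb : b ∈ (fnPart f).parts) {x : Fin N} (hx : x ∈ b) :
    partLabel f ⟨b, hb⟩ = f x := by
  have h1 := fib_partLabel hf ⟨b, hb⟩
  have : x ∈ fib f (partLabel f ⟨b, hb⟩) := by rw [h1]; exact hx
  rw [mem_fib] at this
  exact this.symm

lemma theta_surj_onto {f : Fin N → Fin m} (hf : Function.Surjective f)
    (hP : fnPart f = P) : ∃ e : {b // b ∈ P.parts} ≃ Fin m, theta P e = f := by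
  subst hP
  refine ⟨Equiv.ofBijective _ (partLabel_bijective hf), ?_⟩
  funext x
  show partLabel f ⟨(fnPart f).part x, _⟩ = f x
  exact partLabel_eq hf _ ((fnPart f).mem_part (mem_univ x))

end Theta

theorem cardSurjBdd (N m d : ℕ) :
    Nat.card {f : Fin N → Fin m // Function.Surjective f ∧
      ∀ x, (univ.filter fun y => f y = f x).card ≤ d} =
    m.factorial * restrictedStirling N m d := by
  classical
  rw [Nat.card_eq_fintype_card, Fintype.card_subtype]
  rw [card_eq_sum_card_fiberwise (f := fnPart)
    (t := univ.filter fun P => P.parts.card = m ∧ ∀ b ∈ P.parts, b.card ≤ d)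
    (fun f hf => by
      rw [mem_coe, mem_filter] at hf
      rw [mem_coe, mem_filter]
      refine ⟨mem_univ _, fnPart_parts_card hf.2.1, ?_⟩
      intro b hb
      obtain ⟨v, rfl⟩ := (mem_fnPart_parts_iff hf.2.1).1 hb
      obtain ⟨x, hx⟩ := hf.2.1 v
      have : fib f v = univ.filter fun y => f y = f x := by
        rw [hx]; rfl
      rw [this]
      exact hf.2.2 x)]
  have hfib : ∀ P ∈ (univ.filter fun P : Finpartition (univ : Finset (Fin N)) =>
      P.parts.card = m ∧ ∀ b ∈ P.parts, b.card ≤ d),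
      ((univ.filter fun f : Fin N → Fin m => Function.Surjective f ∧
        ∀ x, (univ.filter fun y => f y = f x).card ≤ d).filter
        fun f => fnPart f = P).card = m.factorial := by
    intro P hP
    rw [mem_filter] at hP
    obtain ⟨-, hPm, hPd⟩ := hP
    rw [filter_filter]
    have hcard : ((univ.filter fun f : Fin N → Fin m => (Function.Surjective f ∧
        ∀ x, (univ.filter fun y => f y = f x).card ≤ d) ∧ fnPart f = P)).card
        = Fintype.card {f : Fin N → Fin m // (Function.Surjective f ∧
          ∀ x, (univ.filter fun y => f y = f x).card ≤ d) ∧ fnPart f = P} := by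
      rw [Fintype.card_subtype]
    rw [hcard, ← Nat.card_eq_fintype_card]
    have hbij : Function.Bijective (fun e : {b // b ∈ P.parts} ≃ Fin m =>
        (⟨theta P e, ⟨theta_surjective P e, fun x => by
            have := theta_fib P e x
            rw [show (univ.filter fun y => theta P e y = theta P e x) =
              fib (theta P e) (theta P e x) from rfl, this]
            exact hPd _ (P.part_mem.2 (mem_univ x))⟩,
          theta_fnPart P e⟩ : {f : Fin N → Fin m // (Function.Surjective f ∧
          ∀ x, (univ.filter fun y => f y = f x).card ≤ d) ∧ fnPart f = P})) := by
      constructor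
      · intro e e' h
        exact theta_injective P (congrArg Subtype.val h)
      · rintro ⟨f, ⟨hfs, hfd⟩, hfP⟩
        obtain ⟨e, he⟩ := theta_surj_onto P hfs hfP
        exact ⟨e, Subtype.ext he⟩
    rw [← Nat.card_eq_of_bijective _ hbij]
    rw [Nat.card_eq_fintype_card]
    have : Fintype.card {b // b ∈ P.parts} = m := by rw [Fintype.card_coe, hPm]
    rw [Fintype.card_equiv (Fintype.equivFinOfCardEq this), this]
  rw [sum_congr rfl hfib, sum_const, smul_eq_mul]
  rw [restrictedStirling, Nat.card_eq_fintype_card, Fintype.card_subtype, mul_comm]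

theorem cardSurj (K m : ℕ) :
    Nat.card {g : Fin K → Fin m // Function.Surjective g} =
      m.factorial * stirling K m := by
  classical
  have h1 : Nat.card {g : Fin K → Fin m // Function.Surjective g} =
      Nat.card {g : Fin K → Fin m // Function.Surjective g ∧
        ∀ x, (univ.filter fun y => g y = g x).card ≤ K} := by
    apply Nat.card_congr
    apply Equiv.subtypeEquivRight
    intro g
    constructor
    · intro hg
      exact ⟨hg, fun x => le_trans (card_filter_le _ _) (by simp)⟩
    · exact fun h => h.1
  have h2 : restrictedStirling K m K = stirling K m := by
    rw [restrictedStirling, stirling]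
    apply Nat.card_congr
    apply Equiv.subtypeEquivRight
    intro P
    constructor
    · exact fun h => h.1
    · intro h
      exact ⟨h, fun b _ => le_trans (card_le_univ b) (by simp)⟩
  rw [h1, cardSurjBdd, h2]

section Matrix

variable {n k : ℕ}

def rowSet (M : Fin n → Fin k → Bool) (i : Fin n) : Finset (Fin k) :=
  univ.filter fun j => M i j = true

def rowD (M : Fin n → Fin k → Bool) : Finset (Finset (Fin k)) :=
  univ.image (rowSet M)

def rk (M : Fin n → Fin k → Bool) (A : Finset (Fin k)) : ℕ :=
  ((rowD M).filter fun B => B ⊂ A).card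

noncomputable def gval (M : Fin n → Fin k → Bool) (j : Fin k) : ℕ :=
  sInf {r : ℕ | ∃ A ∈ rowD M, j ∈ A ∧ rk M A = r}

variable {M : Fin n → Fin k → Bool}

lemma mem_rowSet {i : Fin n} {j : Fin k} : j ∈ rowSet M i ↔ M i j = true := by
  simp [rowSet]

def IsChainM (M : Fin n → Fin k → Bool) : Prop :=
  ∀ i i', rowSet M i ⊆ rowSet M i' ∨ rowSet M i' ⊆ rowSet M i

lemma chain_of_lonesum (hL : Lonesum M) : IsChainM M := by
  intro i i'
  by_contra hcon
  push_neg at hcon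
  obtain ⟨h1, h2⟩ := hcon
  rw [Finset.not_subset] at h1 h2
  obtain ⟨j, hj1, hj2⟩ := h1
  obtain ⟨j', hj'1, hj'2⟩ := h2
  rw [mem_rowSet] at hj1 hj'1
  rw [mem_rowSet, Bool.not_eq_true] at hj2 hj'2
  have hii : i ≠ i' := by rintro rfl; rw [hj1] at hj2; exact Bool.noConfusion hj2
  have hjj : j ≠ j' := by rintro rfl; rw [hj1] at hj'2; exact Bool.noConfusion hj'2
  rcases lt_or_gt_of_ne hii with hi | hi <;> rcases lt_or_gt_of_ne hjj with hj | hj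
  · exact (hL i i' j j' hi hj).1 ⟨hj1, hj'2, hj2, hj'1⟩
  · exact (hL i i' j' j hi hj).2 ⟨hj'2, hj1, hj'1, hj2⟩
  · exact (hL i' i j j' hi hj).2 ⟨hj2, hj'1, hj1, hj'2⟩
  · exact (hL i' i j' j hi hj).1 ⟨hj'1, hj2, hj'2, hj1⟩

lemma chain_mem {A B : Finset (Fin k)} (hC : IsChainM M)
    (hA : A ∈ rowD M) (hB : B ∈ rowD M) : A ⊆ B ∨ B ⊆ A := by
  obtain ⟨i, -, rfl⟩ := mem_image.1 hA
  obtain ⟨i', -, rfl⟩ := mem_image.1 hB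
  exact hC i i'

lemma rk_lt_of_ssubset {A B : Finset (Fin k)} (hA : A ∈ rowD M) (hAB : A ⊂ B) :
    rk M A < rk M B := by
  apply card_lt_card
  constructor
  · intro C hC
    rw [mem_filter] at hC ⊢
    exact ⟨hC.1, hC.2.trans hAB⟩
  · intro hsub
    have : A ∈ (rowD M).filter fun B' => B' ⊂ B := mem_filter.2 ⟨hA, hAB⟩
    have hA2 := hsub this
    rw [mem_filter] at hA2
    exact (ssubset_irrefl A) hA2.2

lemma subset_of_rk_le {A B : Finset (Fin k)} (hC : IsChainM M)
    (hA : A ∈ rowD M) (hB : B ∈ rowD M) (h : rk M A ≤ rk M B) : A ⊆ B := by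
  by_contra hcon
  rcases chain_mem hC hA hB with h1 | h1
  · exact hcon h1
  · have hBA : B ⊂ A := ssubset_of_subset_of_ne h1 (by rintro rfl; exact hcon h1)
    exact absurd h (not_le.2 (rk_lt_of_ssubset hB hBA))

lemma rk_injOn {A B : Finset (Fin k)} (hC : IsChainM M)
    (hA : A ∈ rowD M) (hB : B ∈ rowD M) (h : rk M A = rk M B) : A = B :=
  subset_antisymm (subset_of_rk_le hC hA hB h.le) (subset_of_rk_le hC hB hA h.ge)

lemma rk_lt_card {A : Finset (Fin k)} (hA : A ∈ rowD M) :
    rk M A < (rowD M).card := by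
  apply card_lt_card
  constructor
  · exact filter_subset _ _
  · intro hsub
    have := mem_filter.1 (hsub hA)
    exact (ssubset_irrefl A) this.2

lemma rk_surjOn (hC : IsChainM M) {r : ℕ} (hr : r < (rowD M).card) :
    ∃ A ∈ rowD M, rk M A = r := by
  have himg : (rowD M).image (rk M) = range (rowD M).card := by
    apply eq_of_subset_of_card_le
    · intro x hx
      obtain ⟨A, hA, rfl⟩ := mem_image.1 hx
      exact mem_range.2 (rk_lt_card hA)
    · rw [card_range, card_image_of_injOn fun A hA B hB h => rk_injOn hC hA hB h]
  have : r ∈ (rowD M).image (rk M) := by rw [himg]; exact mem_range.2 hr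
  obtain ⟨A, hA, h⟩ := mem_image.1 this
  exact ⟨A, hA, h⟩

lemma gval_le {A : Finset (Fin k)} {j : Fin k} (hA : A ∈ rowD M) (hj : j ∈ A) :
    gval M j ≤ rk M A :=
  Nat.sInf_le ⟨A, hA, hj, rfl⟩

lemma gval_mem {j : Fin k} (hcol : ∃ i, M i j = true) :
    ∃ A ∈ rowD M, j ∈ A ∧ rk M A = gval M j := by
  obtain ⟨i, hi⟩ := hcol
  have hne : {r : ℕ | ∃ A ∈ rowD M, j ∈ A ∧ rk M A = r}.Nonempty :=
    ⟨rk M (rowSet M i), rowSet M i, mem_image_of_mem _ (mem_univ i), mem_rowSet.2 hi, rfl⟩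
  exact Nat.sInf_mem hne

lemma gval_lt_card {j : Fin k} (hcol : ∃ i, M i j = true) :
    gval M j < (rowD M).card := by
  obtain ⟨A, hA, -, hr⟩ := gval_mem hcol
  exact hr ▸ rk_lt_card hA

lemma matrix_iff (hC : IsChainM M) {i : Fin n} {j : Fin k}
    (hcol : ∃ i', M i' j = true) :
    M i j = true ↔ gval M j ≤ rk M (rowSet M i) := by
  constructor
  · intro h
    exact gval_le (mem_image_of_mem _ (mem_univ i)) (mem_rowSet.2 h)
  · intro h
    obtain ⟨A, hA, hjA, hr⟩ := gval_mem hcol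
    have hsub : A ⊆ rowSet M i :=
      subset_of_rk_le hC hA (mem_image_of_mem _ (mem_univ i)) (hr.symm ▸ h)
    exact mem_rowSet.1 (hsub hjA)

lemma f_surjOn (hC : IsChainM M) {r : ℕ} (hr : r < (rowD M).card) :
    ∃ i, rk M (rowSet M i) = r := by
  obtain ⟨A, hA, h⟩ := rk_surjOn hC hr
  obtain ⟨i, -, rfl⟩ := mem_image.1 hA
  exact ⟨i, h⟩

lemma g_surjOn (hC : IsChainM M) (hrow : ∀ i, ∃ j, M i j = true)
    {r : ℕ} (hr : r < (rowD M).card) : ∃ j, gval M j = r := by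
  obtain ⟨A, hA, hrk⟩ := rk_surjOn hC hr
  rcases Nat.eq_zero_or_pos r with rfl | hpos
  · obtain ⟨i, -, rfl⟩ := mem_image.1 hA
    obtain ⟨j, hj⟩ := hrow i
    refine ⟨j, Nat.le_antisymm ?_ (Nat.zero_le _)⟩
    calc gval M j ≤ rk M (rowSet M i) := gval_le hA (mem_rowSet.2 hj)
    _ = 0 := hrk
  · obtain ⟨A', hA', hrk'⟩ := rk_surjOn hC (lt_trans (Nat.sub_lt hpos one_pos) hr)
    have hss : A' ⊂ A := by
      have hlt : rk M A' < rk M A := by omega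
      exact ssubset_of_subset_of_ne (subset_of_rk_le hC hA' hA hlt.le)
        (by rintro rfl; omega)
    obtain ⟨j, hjA, hjA'⟩ := exists_of_ssubset hss
    refine ⟨j, Nat.le_antisymm (hrk ▸ gval_le hA hjA) ?_⟩
    have hcolj : ∃ i0, M i0 j = true := by
      obtain ⟨i, -, hAe⟩ := mem_image.1 hA
      exact ⟨i, mem_rowSet.1 (by rw [hAe]; exact hjA)⟩
    obtain ⟨B, hB, hjB, hrB⟩ := gval_mem hcolj
    by_contra hcon
    push_neg at hcon
    have hBle : rk M B ≤ rk M A' := by omega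
    exact hjA' (subset_of_rk_le hC hB hA' hBle hjB)

lemma rowOf_eq_iff (hC : IsChainM M) {i i' : Fin n} :
    rowOf M i' = rowOf M i ↔ rk M (rowSet M i') = rk M (rowSet M i) := by
  constructor
  · intro h
    have : rowSet M i' = rowSet M i := by
      ext j
      rw [mem_rowSet, mem_rowSet, show M i' j = rowOf M i' j from rfl, h]; rfl
    rw [this]
  · intro h
    have hset : rowSet M i' = rowSet M i :=
      rk_injOn hC (mem_image_of_mem _ (mem_univ i')) (mem_image_of_mem _ (mem_univ i)) h
    funext j
    have h1 : M i' j = true ↔ M i j = true := by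
      rw [← mem_rowSet, ← mem_rowSet, hset]
    show M i' j = M i j
    rcases Bool.eq_false_or_eq_true (M i j) with hb | hb
    · rw [hb]; exact h1.2 hb
    · rw [hb, ← Bool.not_eq_true]
      intro hc
      rw [hb] at h1
      exact absurd (h1.1 hc) (by simp)

lemma card_rowD_le_n : (rowD M).card ≤ n :=
  le_trans card_image_le (by simp)

lemma card_rowD_le_k (hC : IsChainM M) (hrow : ∀ i, ∃ j, M i j = true) :
    (rowD M).card ≤ k := by
  have hinj : Set.InjOn Finset.card (rowD M : Set (Finset (Fin k))) := by
    intro A hA B hB h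
    rcases chain_mem hC hA hB with hsub | hsub
    · exact eq_of_subset_of_card_le hsub h.ge
    · exact (eq_of_subset_of_card_le hsub h.le).symm
  calc (rowD M).card = ((rowD M).image Finset.card).card :=
        (card_image_of_injOn hinj).symm
    _ ≤ (Finset.Icc 1 k).card := by
        apply card_le_card
        intro x hx
        obtain ⟨A, hA, rfl⟩ := mem_image.1 hx
        obtain ⟨i, -, rfl⟩ := mem_image.1 hA
        obtain ⟨j, hj⟩ := hrow i
        rw [mem_Icc]
        exact ⟨card_pos.2 ⟨j, mem_rowSet.2 hj⟩, le_trans (card_le_univ _) (by simp)⟩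
    _ = k := by rw [Nat.card_Icc]; omega

end Matrix

section Mat

variable {n k m : ℕ}

def mat (f : Fin n → Fin m) (g : Fin k → Fin m) : Fin n → Fin k → Bool :=
  fun i j => decide (g j ≤ f i)

def lv (g : Fin k → Fin m) (v : Fin m) : Finset (Fin k) :=
  univ.filter fun j => g j ≤ v

variable {f : Fin n → Fin m} {g : Fin k → Fin m}

lemma mat_true {i : Fin n} {j : Fin k} : mat f g i j = true ↔ g j ≤ f i := by
  simp [mat]

lemma mem_lv {v : Fin m} {j : Fin k} : j ∈ lv g v ↔ g j ≤ v := by simp [lv]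

lemma lonesum_mat : Lonesum (mat f g) := by
  intro i i' j j' _ _
  constructor
  · rintro ⟨h1, h2, h3, h4⟩
    rw [mat_true] at h1 h4
    rw [← Bool.not_eq_true, mat_true] at h2 h3
    rw [not_le] at h2 h3
    exact absurd (((h1.trans_lt h2).trans_le h4).trans h3) (lt_irrefl _)
  · rintro ⟨h1, h2, h3, h4⟩
    rw [mat_true] at h2 h3
    rw [← Bool.not_eq_true, mat_true] at h1 h4
    rw [not_le] at h1 h4
    exact absurd (((h3.trans_lt h4).trans_le h2).trans h1) (lt_irrefl _)

lemma rowSet_mat (i : Fin n) : rowSet (mat f g) i = lv g (f i) := by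
  ext j
  rw [mem_rowSet, mem_lv, mat_true]

lemma lv_subset {v v' : Fin m} (h : v ≤ v') : lv g v ⊆ lv g v' := by
  intro j hj
  rw [mem_lv] at hj ⊢
  exact hj.trans h

lemma lv_ssubset (hg : Function.Surjective g) {v v' : Fin m} (h : v < v') :
    lv g v ⊂ lv g v' := by
  refine ssubset_of_subset_of_ne (lv_subset h.le) ?_
  obtain ⟨j, hj⟩ := hg v'
  intro heq
  have h1 : j ∈ lv g v' := mem_lv.2 (le_of_eq hj)
  rw [← heq, mem_lv, hj] at h1
  exact absurd h1 (not_le.2 h)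

lemma lv_injective (hg : Function.Surjective g) : Function.Injective (lv g) := by
  intro v v' h
  by_contra hne
  rcases lt_or_gt_of_ne hne with hlt | hlt
  · exact (lv_ssubset hg hlt).ne h
  · exact (lv_ssubset hg hlt).ne h.symm

lemma rowD_mat (hf : Function.Surjective f) :
    rowD (mat f g) = univ.image (lv g) := by
  rw [rowD]
  rw [show rowSet (mat f g) = lv g ∘ f from funext rowSet_mat]
  rw [← image_image, Finset.image_univ_of_surjective hf]

lemma card_rowD_mat (hf : Function.Surjective f) (hg : Function.Surjective g) :
    (rowD (mat f g)).card = m := by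
  rw [rowD_mat hf, card_image_of_injOn (Set.injOn_of_injective (lv_injective hg))]
  simp

lemma rk_lv (hf : Function.Surjective f) (hg : Function.Surjective g) (v : Fin m) :
    rk (mat f g) (lv g v) = (v : ℕ) := by
  have hfilt : (rowD (mat f g)).filter (fun B => B ⊂ lv g v) =
      (univ.filter fun v' : Fin m => v' < v).image (lv g) := by
    ext B
    rw [mem_filter]
    constructor
    · rintro ⟨hB, hBv⟩
      rw [rowD_mat hf, mem_image] at hB
      obtain ⟨v', -, rfl⟩ := hB
      rw [mem_image]
      refine ⟨v', mem_filter.2 ⟨mem_univ _, ?_⟩, rfl⟩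
      by_contra hcon
      rw [not_lt] at hcon
      exact (ssubset_irrefl _) (hBv.trans_subset (lv_subset hcon))
    · intro hB
      rw [mem_image] at hB
      obtain ⟨v', hv', rfl⟩ := hB
      rw [mem_filter] at hv'
      exact ⟨by rw [rowD_mat hf]; exact mem_image_of_mem _ (mem_univ _),
        lv_ssubset hg hv'.2⟩
  rw [rk, hfilt, card_image_of_injOn (Set.injOn_of_injective (lv_injective hg))]
  have : (univ.filter fun v' : Fin m => v' < v) = Finset.Iio v := by
    ext v'; simp
  rw [this, Fin.card_Iio]

lemma rk_rowSet_mat (hf : Function.Surjective f) (hg : Function.Surjective g)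
    (i : Fin n) : rk (mat f g) (rowSet (mat f g) i) = (f i : ℕ) := by
  rw [rowSet_mat, rk_lv hf hg]

lemma gval_mat (hf : Function.Surjective f) (hg : Function.Surjective g)
    (j : Fin k) : gval (mat f g) j = (g j : ℕ) := by
  apply Nat.le_antisymm
  · have hmem : lv g (g j) ∈ rowD (mat f g) := by
      rw [rowD_mat hf]; exact mem_image_of_mem _ (mem_univ _)
    have := gval_le hmem (mem_lv.2 le_rfl)
    rwa [rk_lv hf hg] at this
  · apply le_csInf
    · obtain ⟨i, hi⟩ := hf (g j)
      exact ⟨rk (mat f g) (rowSet (mat f g) i), rowSet (mat f g) i,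
        mem_image_of_mem _ (mem_univ i), mem_rowSet.2 (mat_true.2 (le_of_eq hi.symm)), rfl⟩
    · rintro b ⟨A, hA, hjA, rfl⟩
      rw [rowD_mat hf, mem_image] at hA
      obtain ⟨v, -, rfl⟩ := hA
      rw [rk_lv hf hg]
      exact Fin.le_def.1 (mem_lv.1 hjA)

lemma mat_col (hf : Function.Surjective f) (j : Fin k) :
    ∃ i, mat f g i j = true := by
  obtain ⟨i, hi⟩ := hf (g j)
  exact ⟨i, mat_true.2 (le_of_eq hi.symm)⟩

lemma mat_row (hg : Function.Surjective g) (i : Fin n) :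
    ∃ j, mat f g i j = true := by
  obtain ⟨j, hj⟩ := hg (f i)
  exact ⟨j, mat_true.2 (le_of_eq hj)⟩

lemma rowOf_mat_eq_iff (hg : Function.Surjective g) {i i' : Fin n} :
    rowOf (mat f g) i' = rowOf (mat f g) i ↔ f i' = f i := by
  constructor
  · intro h
    have hset : rowSet (mat f g) i' = rowSet (mat f g) i := by
      ext j
      rw [mem_rowSet, mem_rowSet, show mat f g i' j = rowOf (mat f g) i' j from rfl, h]
      rfl
    rw [rowSet_mat, rowSet_mat] at hset
    exact lv_injective hg hset
  · intro h
    funext j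
    show mat f g i' j = mat f g i j
    rw [mat, mat, h]

end Mat

lemma bool_eq_of_iff {a b : Bool} (h : (a = true) ↔ (b = true)) : a = b := by
  cases a <;> cases b <;> simp_all

section Slice

variable {n k d m : ℕ}

def SlicePairs (n k d m : ℕ) : Type :=
  {f : Fin n → Fin m // Function.Surjective f ∧
      ∀ x, (univ.filter fun y => f y = f x).card ≤ d} ×
    {g : Fin k → Fin m // Function.Surjective g}

def SliceMat (n k d m : ℕ) : Type :=
  {M : Fin n → Fin k → Bool // (Lonesum M ∧
      (∀ j, ∃ i, M i j = true) ∧ (∀ i, ∃ j, M i j = true) ∧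
      (∀ i, (univ.filter fun i' => rowOf M i' = rowOf M i).card ≤ d)) ∧
      (rowD M).card = m}

def phi (p : SlicePairs n k d m) : SliceMat n k d m :=
  ⟨mat p.1.1 p.2.1, ⟨lonesum_mat, mat_col p.1.2.1, mat_row p.2.2, fun i => by
      have hfe : (univ.filter fun i' =>
          rowOf (mat p.1.1 p.2.1) i' = rowOf (mat p.1.1 p.2.1) i) =
          (univ.filter fun i' => p.1.1 i' = p.1.1 i) :=
        filter_congr fun i' _ => by rw [rowOf_mat_eq_iff p.2.2]
      rw [hfe]
      exact p.1.2.2 i⟩,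
    card_rowD_mat p.1.2.1 p.2.2⟩

lemma phi_bijective : Function.Bijective (phi (n := n) (k := k) (d := d) (m := m)) := by
  constructor
  · rintro ⟨⟨f, hf, hbd⟩, ⟨g, hg⟩⟩ ⟨⟨f', hf', hbd'⟩, ⟨g', hg'⟩⟩ h
    have hM : mat f g = mat f' g' := congrArg Subtype.val h
    have hfe : f = f' := by
      funext i
      apply Fin.ext
      rw [← rk_rowSet_mat hf hg i, ← rk_rowSet_mat hf' hg' i, hM]
    have hge : g = g' := by
      funext j
      apply Fin.ext
      rw [← gval_mat hf hg j, ← gval_mat hf' hg' j, hM]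
    subst hfe; subst hge
    rfl
  · rintro ⟨M, ⟨hL, hcol, hrow, hbd⟩, hm⟩
    have hC : IsChainM M := chain_of_lonesum hL
    refine ⟨⟨⟨fun i => ⟨rk M (rowSet M i),
        hm ▸ rk_lt_card (mem_image_of_mem _ (mem_univ i))⟩, ?_, ?_⟩,
      ⟨fun j => ⟨gval M j, hm ▸ gval_lt_card (hcol j)⟩, ?_⟩⟩, ?_⟩
    · -- surjectivity of f
      intro v
      obtain ⟨i, hi⟩ := f_surjOn hC (show (v : ℕ) < (rowD M).card by
        rw [hm]; exact v.isLt)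
      exact ⟨i, Fin.ext hi⟩
    · -- fiber bound
      intro x
      have hfe : (univ.filter fun y : Fin n =>
          (⟨rk M (rowSet M y), hm ▸ rk_lt_card (mem_image_of_mem _ (mem_univ y))⟩ : Fin m) =
          ⟨rk M (rowSet M x), hm ▸ rk_lt_card (mem_image_of_mem _ (mem_univ x))⟩) =
          (univ.filter fun y => rowOf M y = rowOf M x) := by
        refine filter_congr fun y _ => ?_
        rw [Fin.mk_eq_mk, ← rowOf_eq_iff hC]
      rw [hfe]
      exact hbd x
    · -- surjectivity of g
      intro v
      obtain ⟨j, hj⟩ := g_surjOn hC hrow (show (v : ℕ) < (rowD M).card by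
        rw [hm]; exact v.isLt)
      exact ⟨j, Fin.ext hj⟩
    · -- mat f g = M
      apply Subtype.ext
      show mat _ _ = M
      funext i j
      apply bool_eq_of_iff
      rw [mat_true, matrix_iff hC (hcol j)]
      exact Fin.mk_le_mk

lemma slice_card (n k d m : ℕ) :
    Nat.card (SliceMat n k d m) = Nat.card (SlicePairs n k d m) :=
  (Nat.card_eq_of_bijective _ phi_bijective).symm

end Slice

/-- The number of `n × k` lonesum 01 matrices with no all-zero column and no
all-zero row in which every row vector occurs at most `d` times among the rows
(no restriction on column multiplicities) equals
`∑_{m=0}^{min(n,k)} m!·S(n,m)_{≤d}·m!·S(k,m)`. -/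
theorem card_lonesum_row_restricted (n k d : ℕ) (hd : 1 ≤ d) :
    Nat.card {M : Fin n → Fin k → Bool // Lonesum M ∧
        (∀ j, ∃ i, M i j = true) ∧ (∀ i, ∃ j, M i j = true) ∧
        (∀ i, (univ.filter fun i' => rowOf M i' = rowOf M i).card ≤ d)} =
      ∑ m ∈ Finset.range (min n k + 1),
        m.factorial * restrictedStirling n m d * (m.factorial * stirling k m) := by
  classical
  have key : ∀ m : ℕ, Nat.card {M : Fin n → Fin k → Bool // (Lonesum M ∧
      (∀ j, ∃ i, M i j = true) ∧ (∀ i, ∃ j, M i j = true) ∧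
      (∀ i, (univ.filter fun i' => rowOf M i' = rowOf M i).card ≤ d)) ∧
      (rowD M).card = m} =
      m.factorial * restrictedStirling n m d * (m.factorial * stirling k m) := by
    intro m
    calc Nat.card {M : Fin n → Fin k → Bool // (Lonesum M ∧
        (∀ j, ∃ i, M i j = true) ∧ (∀ i, ∃ j, M i j = true) ∧
        (∀ i, (univ.filter fun i' => rowOf M i' = rowOf M i).card ≤ d)) ∧
        (rowD M).card = m} = Nat.card (SlicePairs n k d m) := slice_card n k d m
    _ = Nat.card {f : Fin n → Fin m // Function.Surjective f ∧
          ∀ x, (univ.filter fun y => f y = f x).card ≤ d} *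
        Nat.card {g : Fin k → Fin m // Function.Surjective g} := Nat.card_prod _ _
    _ = m.factorial * restrictedStirling n m d * (m.factorial * stirling k m) := by
        rw [cardSurjBdd, cardSurj]
  rw [Nat.card_eq_fintype_card, Fintype.card_subtype]
  rw [card_eq_sum_card_fiberwise (f := fun M => (rowD M).card)
    (t := range (min n k + 1)) (fun M hM => by
      rw [mem_coe, mem_filter] at hM
      obtain ⟨-, hL, hcol, hrow, hbd⟩ := hM
      rw [mem_coe, mem_range, Nat.lt_succ_iff, le_min_iff]
      exact ⟨card_rowD_le_n, card_rowD_le_k (chain_of_lonesum hL) hrow⟩)]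
  refine sum_congr rfl fun m _ => ?_
  rw [← key m, filter_filter, Nat.card_eq_fintype_card, Fintype.card_subtype]
end

section
/- For all natural numbers n, k and d ≥ 1, the number of n×k lonesum 01 matrices having no all-zero column and no all-zero row in which every column vector occurs at most d times among the k columns (with no restriction on row multiplicities) equals ∑_{m=0}^{min(n,k)} m! · S(n,m) · m! · S(k,m)_{≤d}. -/
open Finset

/-! ### Auxiliary material: counting surjections by partitions -/

open Function

set_option linter.unusedSectionVars false

section SurjCount

variable {α : Type*} [Fintype α] [DecidableEq α] {m : ℕ}

lemma fiber_injective {f : α → Fin m} (hf : Surjective f) :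
    Injective (fun t => univ.filter fun a => f a = t) := by
  intro t t' h
  obtain ⟨a, rfl⟩ := hf t
  have ha : a ∈ univ.filter fun a' => f a' = t' := by
    dsimp only at h
    rw [← h]; simp
  simpa using ha

/-- The fiber partition of a surjection onto `Fin m`. -/
def fiberPartition (f : α → Fin m) (hf : Surjective f) :
    Finpartition (univ : Finset α) where
  parts := (univ : Finset (Fin m)).image fun t => univ.filter fun a => f a = t
  supIndep := by
    rw [Finset.supIndep_iff_pairwiseDisjoint]
    rintro b hb b' hb' hne
    simp only [Finset.mem_coe, Finset.mem_image] at hb hb'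
    obtain ⟨t, -, rfl⟩ := hb
    obtain ⟨t', -, rfl⟩ := hb'
    have ht : t ≠ t' := fun h => hne (by rw [h])
    simp only [Function.onFun, id_eq]
    rw [Finset.disjoint_left]
    intro a ha ha'
    simp only [Finset.mem_filter] at ha ha'
    exact ht (ha.2 ▸ ha'.2 ▸ rfl)
  sup_parts := by
    apply le_antisymm
    · exact Finset.sup_le fun b _ => Finset.subset_univ b
    · intro a _
      rw [Finset.mem_sup]
      exact ⟨_, Finset.mem_image_of_mem _ (Finset.mem_univ (f a)), by simp⟩
  bot_notMem := by
    simp only [Finset.bot_eq_empty, Finset.mem_image]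
    rintro ⟨t, -, ht⟩
    obtain ⟨a, rfl⟩ := hf t
    have : a ∈ univ.filter fun a' => f a' = f a := by simp
    rw [ht] at this
    exact absurd this (Finset.notMem_empty a)

lemma fiberPartition_parts (f : α → Fin m) (hf : Surjective f) :
    (fiberPartition f hf).parts
      = (univ : Finset (Fin m)).image fun t => univ.filter fun a => f a = t := rfl

lemma fiberPartition_parts_card (f : α → Fin m) (hf : Surjective f) :
    (fiberPartition f hf).parts.card = m := by
  rw [fiberPartition_parts, Finset.card_image_of_injective _ (fiber_injective hf)]
  simp

/-- The ordering of the parts of the fiber partition induced by the indices. -/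
noncomputable def fiberEquivOf {f : α → Fin m} (hf : Surjective f)
    {P : Finpartition (univ : Finset α)}
    (h : (fiberPartition f hf).parts = P.parts) : Fin m ≃ {b // b ∈ P.parts} :=
  Equiv.ofBijective
    (fun t => ⟨univ.filter fun a => f a = t,
      h ▸ Finset.mem_image_of_mem _ (Finset.mem_univ t)⟩)
    ⟨fun t t' htt => fiber_injective hf (congrArg Subtype.val htt), by
      rintro ⟨b, hb⟩
      rw [← h, fiberPartition_parts] at hb
      simp only [Finset.mem_image, Finset.mem_univ, true_and] at hb
      obtain ⟨t, rfl⟩ := hb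
      exact ⟨t, rfl⟩⟩

lemma fiberEquivOf_apply {f : α → Fin m} (hf : Surjective f)
    {P : Finpartition (univ : Finset α)}
    (h : (fiberPartition f hf).parts = P.parts) (t : Fin m) :
    (fiberEquivOf hf h t).1 = univ.filter fun a => f a = t := rfl

/-- The surjection associated to a partition with parts indexed by `Fin m`. -/
noncomputable def partFun (P : Finpartition (univ : Finset α))
    (e : Fin m ≃ {b // b ∈ P.parts}) : α → Fin m :=
  fun a => e.symm ⟨P.part a, P.part_mem.2 (mem_univ a)⟩

lemma partFun_fiber (P : Finpartition (univ : Finset α))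
    (e : Fin m ≃ {b // b ∈ P.parts}) (t : Fin m) :
    (univ.filter fun a => partFun P e a = t) = (e t).1 := by
  ext a
  simp only [Finset.mem_filter, Finset.mem_univ, true_and, partFun, Equiv.symm_apply_eq]
  constructor
  · rintro h
    have h2 : P.part a = (e t).1 := congrArg Subtype.val h
    rw [← h2]
    exact P.mem_part (mem_univ a)
  · intro h
    exact Subtype.ext (P.part_eq_of_mem (e t).2 h)

lemma partFun_surjective (P : Finpartition (univ : Finset α))
    (e : Fin m ≃ {b // b ∈ P.parts}) : Surjective (partFun P e) := by
  intro t
  obtain ⟨a, ha⟩ := P.nonempty_of_mem_parts (e t).2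
  refine ⟨a, ?_⟩
  rw [partFun, Equiv.symm_apply_eq]
  exact Subtype.ext (P.part_eq_of_mem (e t).2 ha)

lemma fiberPartition_partFun_parts (P : Finpartition (univ : Finset α))
    (e : Fin m ≃ {b // b ∈ P.parts}) :
    (fiberPartition (partFun P e) (partFun_surjective P e)).parts = P.parts := by
  rw [fiberPartition_parts]
  ext b
  simp only [Finset.mem_image, Finset.mem_univ, true_and]
  constructor
  · rintro ⟨t, rfl⟩
    rw [partFun_fiber P e t]
    exact (e t).2
  · intro hb
    refine ⟨e.symm ⟨b, hb⟩, ?_⟩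
    rw [partFun_fiber P e]
    simp

lemma partFun_fiberEquivOf {f : α → Fin m} (hf : Surjective f)
    {P : Finpartition (univ : Finset α)}
    (h : (fiberPartition f hf).parts = P.parts) :
    partFun P (fiberEquivOf hf h) = f := by
  funext a
  rw [partFun, Equiv.symm_apply_eq]
  apply Subtype.ext
  rw [fiberEquivOf_apply]
  symm
  apply P.eq_of_mem_parts _ (h ▸ P.part_mem.2 (mem_univ a)) (by simp) (P.mem_part (mem_univ a))
  · exact h ▸ Finset.mem_image_of_mem _ (Finset.mem_univ (f a))

lemma nat_card_sigma {ι : Type*} [Fintype ι] (X : ι → Type*) [∀ i, Finite (X i)] :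
    Nat.card (Σ i, X i) = ∑ i, Nat.card (X i) := by
  letI : ∀ i, Fintype (X i) := fun i => Fintype.ofFinite _
  rw [Nat.card_eq_fintype_card, Fintype.card_sigma]
  exact Finset.sum_congr rfl fun i _ => (Nat.card_eq_fintype_card).symm

/-- Key counting lemma: surjections onto `Fin m` whose fiber cardinalities all satisfy `Q`
are counted by `m!` times the number of partitions into `m` parts all of whose
cardinalities satisfy `Q`. -/
theorem card_surj_cond (m : ℕ) (Q : ℕ → Prop) :
    Nat.card {f : α → Fin m // Surjective f ∧
        ∀ t, Q ((univ.filter fun a => f a = t).card)} =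
      m.factorial * Nat.card {P : Finpartition (univ : Finset α) //
        P.parts.card = m ∧ ∀ b ∈ P.parts, Q b.card} := by
  classical
  set T := {f : α → Fin m // Surjective f ∧ ∀ t, Q ((univ.filter fun a => f a = t).card)}
  set S := {P : Finpartition (univ : Finset α) //
    P.parts.card = m ∧ ∀ b ∈ P.parts, Q b.card}
  have hcondQ : ∀ (f : T) (b : Finset α), b ∈ (fiberPartition f.1 f.2.1).parts → Q b.card := by
    rintro f b hb
    rw [fiberPartition_parts] at hb
    simp only [Finset.mem_image, Finset.mem_univ, true_and] at hb
    obtain ⟨t, rfl⟩ := hb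
    exact f.2.2 t
  let Φ : T → S := fun f =>
    ⟨fiberPartition f.1 f.2.1, fiberPartition_parts_card f.1 f.2.1, hcondQ f⟩
  have E1 : T ≃ Σ P : S, {f : T // Φ f = P} := (Equiv.sigmaFiberEquiv Φ).symm
  have E2 : ∀ P : S, {f : T // Φ f = P} ≃ (Fin m ≃ {b // b ∈ P.1.parts}) := by
    intro P
    refine
      { toFun := fun x => fiberEquivOf x.1.2.1 (congrArg (fun p => Subtype.val p |>.parts) x.2)
        invFun := fun e =>
          ⟨⟨partFun P.1 e, partFun_surjective P.1 e, ?_⟩,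
            Subtype.ext (Finpartition.ext (fiberPartition_partFun_parts P.1 e))⟩
        left_inv := ?_
        right_inv := ?_ }
    · intro t
      rw [partFun_fiber P.1 e t]
      exact P.2.2 _ (e t).2
    · rintro ⟨f, hf⟩
      apply Subtype.ext
      apply Subtype.ext
      exact partFun_fiberEquivOf f.2.1 _
    · intro e
      apply Equiv.ext
      intro t
      apply Subtype.ext
      rw [fiberEquivOf_apply]
      exact partFun_fiber P.1 e t
  letI : Fintype S := Fintype.ofFinite _
  rw [Nat.card_congr E1, nat_card_sigma]
  have hcard : ∀ P : S, Nat.card {f : T // Φ f = P} = m.factorial := by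
    intro P
    rw [Nat.card_congr (E2 P)]
    have h1 : Fintype.card {b // b ∈ P.1.parts} = m := by
      rw [Fintype.card_coe]; exact P.2.1
    have e0 : Fin m ≃ {b // b ∈ P.1.parts} := (Fintype.equivFinOfCardEq h1).symm
    rw [Nat.card_eq_fintype_card, Fintype.card_equiv e0, Fintype.card_fin]
  simp only [hcard, Finset.sum_const, Finset.card_univ, smul_eq_mul]
  rw [Nat.card_eq_fintype_card, mul_comm]

end SurjCount

/-! ### Auxiliary material: ranks in finite chains -/

section Rank

variable {β : Type*} [PartialOrder β] [DecidableEq β]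
variable [DecidableRel ((· < ·) : β → β → Prop)]

/-- The rank of an element in a finite chain. -/
def chainRank (s : Finset β) (c : β) : ℕ := (s.filter (· < c)).card

variable {s : Finset β} {c c' : β}

lemma chainRank_lt (hc : c ∈ s) : chainRank s c < s.card := by
  apply Finset.card_lt_card
  rw [Finset.ssubset_iff_of_subset (Finset.filter_subset _ _)]
  exact ⟨c, hc, by simp⟩

lemma chainRank_mono (h : c ≤ c') : chainRank s c ≤ chainRank s c' := by
  apply Finset.card_le_card
  intro x hx
  simp only [Finset.mem_filter] at hx ⊢
  exact ⟨hx.1, lt_of_lt_of_le hx.2 h⟩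

lemma chainRank_strict (hc : c ∈ s) (h : c < c') :
    chainRank s c < chainRank s c' := by
  apply Finset.card_lt_card
  constructor
  · intro x hx
    simp only [Finset.mem_filter] at hx ⊢
    exact ⟨hx.1, lt_trans hx.2 h⟩
  · intro hsub
    have : c ∈ s.filter (· < c) := hsub (by simp [hc, h])
    simp at this

variable (hch : ∀ c ∈ s, ∀ c' ∈ s, c ≤ c' ∨ c' ≤ c)

include hch in
lemma chainRank_reflect (hc : c ∈ s) (hc' : c' ∈ s)
    (h : chainRank s c ≤ chainRank s c') : c ≤ c' := by
  rcases hch c hc c' hc' with h1 | h1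
  · exact h1
  · rcases eq_or_lt_of_le h1 with h2 | h2
    · exact le_of_eq h2.symm
    · exact absurd (chainRank_strict hc' h2) (by omega)

include hch in
lemma chainRank_injOn (hc : c ∈ s) (hc' : c' ∈ s)
    (h : chainRank s c = chainRank s c') : c = c' :=
  le_antisymm (chainRank_reflect hch hc hc' h.le) (chainRank_reflect hch hc' hc h.ge)

include hch in
lemma chainRank_surj {t : ℕ} (ht : t < s.card) : ∃ c ∈ s, chainRank s c = t := by
  have himg : s.image (chainRank s) = Finset.range s.card := by
    apply Finset.eq_of_subset_of_card_le
    · intro x hx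
      simp only [Finset.mem_image] at hx
      obtain ⟨c, hc, rfl⟩ := hx
      simpa using chainRank_lt hc
    · rw [Finset.card_range,
        Finset.card_image_of_injOn fun c hc c' hc' h => chainRank_injOn hch hc hc' h]
  have : t ∈ s.image (chainRank s) := by rw [himg]; simpa using ht
  simpa using this

end Rank

/-! ### Auxiliary material: the structure of lonesum matrices -/

section Matrices

instance {n : ℕ} : DecidableRel ((· ≤ ·) : (Fin n → Bool) → (Fin n → Bool) → Prop) :=
  fun _ _ => decidable_of_iff _ Pi.le_def.symm

instance {n : ℕ} : DecidableRel ((· < ·) : (Fin n → Bool) → (Fin n → Bool) → Prop) :=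
  fun _ _ => decidable_of_iff _ lt_iff_le_not_ge.symm

variable {n k : ℕ} {M : Fin n → Fin k → Bool}

lemma bool_le_iff {b c : Bool} : b ≤ c ↔ (b = true → c = true) := by
  revert b c; decide

lemma col_comparable (hL : Lonesum M) (j j' : Fin k) :
    colOf M j ≤ colOf M j' ∨ colOf M j' ≤ colOf M j := by
  by_contra h
  push_neg at h
  obtain ⟨h1, h2⟩ := h
  rw [Pi.le_def, not_forall] at h1 h2
  obtain ⟨i, hi⟩ := h1
  obtain ⟨i', hi'⟩ := h2
  rw [bool_le_iff, Classical.not_imp] at hi hi'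
  simp only [colOf, Bool.not_eq_true] at hi hi'
  have hii : i ≠ i' := by
    rintro rfl
    rw [hi.1] at hi'
    exact absurd hi'.2 (by simp)
  have hjj : j ≠ j' := by
    rintro rfl
    rw [hi.1] at hi
    exact absurd hi.2 (by simp)
  rcases lt_or_gt_of_ne hii with h3 | h3 <;> rcases lt_or_gt_of_ne hjj with h4 | h4
  · exact (hL i i' j j' h3 h4).1 ⟨hi.1, hi.2, hi'.2, hi'.1⟩
  · exact (hL i i' j' j h3 h4).2 ⟨hi.2, hi.1, hi'.1, hi'.2⟩
  · exact (hL i' i j j' h3 h4).2 ⟨hi'.2, hi'.1, hi.1, hi.2⟩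
  · exact (hL i' i j' j h3 h4).1 ⟨hi'.1, hi'.2, hi.2, hi.1⟩

/-- The column function of the matrix built from `(φ, ψ)`. -/
def colfun {m : ℕ} (φ : Fin n → Fin m) (t : Fin m) : Fin n → Bool :=
  fun i => decide (φ i ≤ t)

lemma colfun_mono {m : ℕ} (φ : Fin n → Fin m) {t t' : Fin m} (h : t ≤ t') :
    colfun φ t ≤ colfun φ t' := by
  intro i
  rw [bool_le_iff]
  simp only [colfun, decide_eq_true_eq]
  exact fun h' => h'.trans h

lemma colfun_reflect {m : ℕ} {φ : Fin n → Fin m} (hφ : Surjective φ) {t t' : Fin m}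
    (h : colfun φ t ≤ colfun φ t') : t ≤ t' := by
  obtain ⟨i, hi⟩ := hφ t
  have h1 : colfun φ t i = true := by simp [colfun, hi]
  have h2 : colfun φ t' i = true := bool_le_iff.1 (h i) h1
  simpa [colfun, hi] using h2

lemma colfun_injective {m : ℕ} {φ : Fin n → Fin m} (hφ : Surjective φ) :
    Injective (colfun φ) := fun t t' h =>
  le_antisymm (colfun_reflect hφ h.le) (colfun_reflect hφ h.ge)

lemma colfun_lt_iff {m : ℕ} {φ : Fin n → Fin m} (hφ : Surjective φ) {t t' : Fin m} :
    colfun φ t < colfun φ t' ↔ t < t' := by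
  rw [lt_iff_le_not_ge, lt_iff_le_not_ge]
  constructor
  · rintro ⟨ha, hb⟩
    exact ⟨colfun_reflect hφ ha, fun h => hb (colfun_mono φ h)⟩
  · rintro ⟨ha, hb⟩
    exact ⟨colfun_mono φ ha, fun h => hb (colfun_reflect hφ h)⟩

lemma colset_eq {m : ℕ} {φ : Fin n → Fin m} {ψ : Fin k → Fin m} (hψ : Surjective ψ) :
    (univ.image fun j => colOf (fun i j' => colfun φ (ψ j') i) j)
      = (univ : Finset (Fin m)).image (colfun φ) := by
  have h0 : (fun j => colOf (fun i j' => colfun φ (ψ j') i) j) = colfun φ ∘ ψ := rfl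
  rw [h0, ← Finset.image_image, Finset.image_univ_of_surjective hψ]

lemma colset_card {m : ℕ} {φ : Fin n → Fin m} {ψ : Fin k → Fin m}
    (hφ : Surjective φ) (hψ : Surjective ψ)
    (hM : M = fun i j => colfun φ (ψ j) i) :
    (univ.image (colOf M)).card = m := by
  subst hM
  rw [show (univ.image (colOf fun i j => colfun φ (ψ j) i))
      = (univ.image fun j => colOf (fun i j' => colfun φ (ψ j') i) j) from rfl,
    colset_eq hψ, Finset.card_image_of_injective _ (colfun_injective hφ)]
  simp

lemma rank_colfun {m : ℕ} {φ : Fin n → Fin m} {ψ : Fin k → Fin m}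
    (hφ : Surjective φ) (hψ : Surjective ψ)
    (hM : M = fun i j => colfun φ (ψ j) i) (j : Fin k) :
    chainRank (univ.image (colOf M)) (colOf M j) = (ψ j).1 := by
  subst hM
  rw [show (univ.image (colOf fun i j => colfun φ (ψ j) i))
      = (univ.image fun j => colOf (fun i j' => colfun φ (ψ j') i) j) from rfl,
    colset_eq hψ, chainRank]
  have hfil : ((univ : Finset (Fin m)).image (colfun φ)).filter (· < colfun φ (ψ j))
      = (univ.filter (· < ψ j)).image (colfun φ) := by
    ext c
    simp only [Finset.mem_filter, Finset.mem_image, Finset.mem_univ, true_and]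
    constructor
    · rintro ⟨⟨u, rfl⟩, hlt⟩
      exact ⟨u, (colfun_lt_iff hφ).1 hlt, rfl⟩
    · rintro ⟨u, hu, rfl⟩
      exact ⟨⟨u, rfl⟩, (colfun_lt_iff hφ).2 hu⟩
  rw [show (colOf (fun i j' => colfun φ (ψ j') i) j) = colfun φ (ψ j) from rfl]
  rw [hfil, Finset.card_image_of_injective _ (colfun_injective hφ)]
  have h2 : univ.filter (· < ψ j) = Finset.Iio (ψ j) := by ext x; simp
  rw [h2, Fin.card_Iio]

/-- Lonesumness of matrices of the form `(i, j) ↦ φ i ≤ ψ j`. -/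
lemma mat_lonesum {m : ℕ} (φ : Fin n → Fin m) (ψ : Fin k → Fin m) :
    Lonesum (fun i j => colfun φ (ψ j) i) := by
  intro i i' j j' hi hj
  constructor <;> rintro ⟨h1, h2, h3, h4⟩ <;>
    simp only [colfun, decide_eq_true_eq, decide_eq_false_iff_not, not_le,
      Fin.le_def, Fin.lt_def] at h1 h2 h3 h4 <;> omega

lemma mat_col_ne {m : ℕ} {φ : Fin n → Fin m} (hφ : Surjective φ) (ψ : Fin k → Fin m)
    (j : Fin k) : ∃ i, colfun φ (ψ j) i = true := by
  obtain ⟨i, hi⟩ := hφ ⟨0, (ψ j).pos⟩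
  exact ⟨i, by simp [colfun, hi, Fin.le_def]⟩

lemma mat_row_ne {m : ℕ} (φ : Fin n → Fin m) {ψ : Fin k → Fin m} (hψ : Surjective ψ)
    (i : Fin n) : ∃ j, colfun φ (ψ j) i = true := by
  have hm : 0 < m := (φ i).pos
  obtain ⟨j, hj⟩ := hψ ⟨m - 1, by omega⟩
  refine ⟨j, ?_⟩
  have := (φ i).isLt
  simp only [colfun, hj, decide_eq_true_eq, Fin.le_def]
  omega

lemma mat_col_eq_iff {m : ℕ} {φ : Fin n → Fin m} (hφ : Surjective φ) (ψ : Fin k → Fin m)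
    (j j' : Fin k) :
    colOf (fun i j0 => colfun φ (ψ j0) i) j' = colOf (fun i j0 => colfun φ (ψ j0) i) j
      ↔ ψ j' = ψ j := by
  constructor
  · intro h
    have key : ∀ a b : Fin k, ψ a < ψ b →
        colOf (fun i j0 => colfun φ (ψ j0) i) a ≠ colOf (fun i j0 => colfun φ (ψ j0) i) b := by
      intro a b hab hcon
      obtain ⟨i, hi⟩ := hφ (ψ b)
      have h2 := congrFun hcon i
      simp only [colOf, colfun, hi, decide_eq_decide] at h2
      exact absurd (h2.2 le_rfl) (not_le.2 hab)
    rcases lt_trichotomy (ψ j') (ψ j) with h1 | h1 | h1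
    · exact absurd h (key j' j h1)
    · exact h1
    · exact absurd h.symm (key j j' h1)
  · intro h
    funext i
    simp only [colOf, colfun, h]

lemma mat_mult {m : ℕ} {φ : Fin n → Fin m} {ψ : Fin k → Fin m} (hφ : Surjective φ)
    {d : ℕ} (hψd : ∀ t, (univ.filter fun j => ψ j = t).card ≤ d) (j : Fin k) :
    (univ.filter fun j' => colOf (fun i j0 => colfun φ (ψ j0) i) j'
      = colOf (fun i j0 => colfun φ (ψ j0) i) j).card ≤ d := by
  classical
  have hf : (univ.filter fun j' => colOf (fun i j0 => colfun φ (ψ j0) i) j'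
      = colOf (fun i j0 => colfun φ (ψ j0) i) j) = (univ.filter fun j' => ψ j' = ψ j) := by
    apply Finset.filter_congr
    intro j' _
    rw [mat_col_eq_iff hφ]
  rw [hf]
  exact hψd (ψ j)

lemma weight_inj_of_le {c c' : Fin n → Bool} (hle : c ≤ c')
    (hw : (univ.filter fun i => c i = true).card = (univ.filter fun i => c' i = true).card) :
    c = c' := by
  have hsub : (univ.filter fun i => c i = true) ⊆ (univ.filter fun i => c' i = true) := by
    intro i hi
    simp only [Finset.mem_filter, Finset.mem_univ, true_and] at hi ⊢
    exact bool_le_iff.1 (hle i) hi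
  have heq := Finset.eq_of_subset_of_card_le hsub hw.ge
  funext i
  have h2 : c i = true ↔ c' i = true := by
    constructor
    · exact fun h => bool_le_iff.1 (hle i) h
    · intro h
      have : i ∈ univ.filter fun i' => c i' = true := by rw [heq]; simp [h]
      simpa using this
  cases hci : c i <;> cases hci' : c' i <;> simp_all

/-- Every lonesum matrix with no zero row/column and column multiplicities at most `d`
arises from a pair of surjections. -/
lemma exists_rep {d : ℕ} (hL : Lonesum M) (hcol : ∀ j, ∃ i, M i j = true)
    (hrow : ∀ i, ∃ j, M i j = true)
    (hmul : ∀ j, (univ.filter fun j' => colOf M j' = colOf M j).card ≤ d) :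
    ∃ m : ℕ, m ≤ min n k ∧ ∃ (φ : Fin n → Fin m) (ψ : Fin k → Fin m),
      Surjective φ ∧ Surjective ψ ∧ (∀ t, (univ.filter fun j => ψ j = t).card ≤ d) ∧
      M = fun i j => colfun φ (ψ j) i := by
  classical
  set CS : Finset (Fin n → Bool) := univ.image (colOf M) with hCS
  set m := CS.card with hm
  have hmemCS : ∀ j, colOf M j ∈ CS := fun j => Finset.mem_image_of_mem _ (Finset.mem_univ j)
  have hchain : ∀ c ∈ CS, ∀ c' ∈ CS, c ≤ c' ∨ c' ≤ c := by
    intro c hc c' hc'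
    rw [hCS, Finset.mem_image] at hc hc'
    obtain ⟨j, -, rfl⟩ := hc
    obtain ⟨j', -, rfl⟩ := hc'
    exact col_comparable hL j j'
  have hmk : m ≤ k := le_trans Finset.card_image_le (by simp)
  have hmn : m ≤ n := by
    have hinj : Set.InjOn (fun c : Fin n → Bool => (univ.filter fun i => c i = true).card) CS := by
      intro c hc c' hc' h
      rcases hchain c hc c' hc' with hle | hle
      · exact weight_inj_of_le hle h
      · exact (weight_inj_of_le hle h.symm).symm
    have hsub : CS.image (fun c : Fin n → Bool => (univ.filter fun i => c i = true).card)
        ⊆ Finset.Icc 1 n := by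
      intro x hx
      rw [Finset.mem_image] at hx
      obtain ⟨c, hc, rfl⟩ := hx
      rw [hCS, Finset.mem_image] at hc
      obtain ⟨j, -, rfl⟩ := hc
      simp only [Finset.mem_Icc]
      refine ⟨?_, le_trans (Finset.card_filter_le _ _) (by simp)⟩
      obtain ⟨i, hi⟩ := hcol j
      apply Nat.one_le_iff_ne_zero.2
      apply Finset.card_ne_zero_of_mem (a := i)
      simp only [Finset.mem_filter, Finset.mem_univ, true_and]
      exact hi
    calc m = (CS.image fun c : Fin n → Bool => (univ.filter fun i => c i = true).card).card :=
          (Finset.card_image_of_injOn hinj).symm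
      _ ≤ (Finset.Icc 1 n).card := Finset.card_le_card hsub
      _ = n := by rw [Nat.card_Icc]; omega
  have hrk : ∀ j : Fin k, chainRank CS (colOf M j) < m := fun j => chainRank_lt (hmemCS j)
  set ψ : Fin k → Fin m := fun j => ⟨chainRank CS (colOf M j), hrk j⟩ with hψdef
  have hψs : Surjective ψ := by
    intro t
    obtain ⟨c, hc, hrc⟩ := chainRank_surj hchain (t.2 : t.1 < m)
    rw [hCS, Finset.mem_image] at hc
    obtain ⟨j, -, rfl⟩ := hc
    exact ⟨j, Fin.ext hrc⟩
  have hψeq : ∀ j j' : Fin k, ψ j' = ψ j ↔ colOf M j' = colOf M j := by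
    intro j j'
    constructor
    · intro h
      exact chainRank_injOn hchain (hmemCS j') (hmemCS j) (congrArg Fin.val h)
    · intro h
      apply Fin.ext
      show chainRank CS (colOf M j') = chainRank CS (colOf M j)
      rw [h]
  have hψd : ∀ t, (univ.filter fun j => ψ j = t).card ≤ d := by
    intro t
    obtain ⟨j0, rfl⟩ := hψs t
    have hfe : (univ.filter fun j => ψ j = ψ j0)
        = (univ.filter fun j => colOf M j = colOf M j0) := by
      apply Finset.filter_congr
      intro j _
      rw [hψeq]
    rw [hfe]
    exact hmul j0
  have hne : ∀ i, ((univ.filter fun j => M i j = true).image ψ).Nonempty := by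
    intro i
    obtain ⟨j, hj⟩ := hrow i
    exact ⟨ψ j, Finset.mem_image_of_mem _ (by simp [hj])⟩
  set φ : Fin n → Fin m := fun i => ((univ.filter fun j => M i j = true).image ψ).min' (hne i)
    with hφdef
  have hφ_le : ∀ i j, M i j = true → φ i ≤ ψ j := by
    intro i j h
    exact Finset.min'_le _ _ (Finset.mem_image_of_mem _ (by simp [h]))
  have hφ_mem : ∀ i, ∃ j, M i j = true ∧ ψ j = φ i := by
    intro i
    obtain ⟨j, hj, hψj⟩ := Finset.mem_image.1 (Finset.min'_mem _ (hne i))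
    exact ⟨j, by simpa using hj, hψj⟩
  have hM_iff : ∀ i j, M i j = true ↔ φ i ≤ ψ j := by
    intro i j
    constructor
    · exact hφ_le i j
    · intro h
      obtain ⟨j0, hj0, hψj0⟩ := hφ_mem i
      have h1 : ψ j0 ≤ ψ j := by rw [hψj0]; exact h
      have h2 : colOf M j0 ≤ colOf M j :=
        chainRank_reflect hchain (hmemCS j0) (hmemCS j) h1
      have h3 := bool_le_iff.1 (h2 i) hj0
      exact h3
  have hφs : Surjective φ := by
    intro t
    obtain ⟨c, hc, hrc⟩ := chainRank_surj hchain (t.2 : t.1 < m)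
    have hcmem := hc
    rw [hCS, Finset.mem_image] at hc
    obtain ⟨j, -, hcj⟩ := hc
    rcases Nat.eq_zero_or_pos t.1 with ht0 | htpos
    · obtain ⟨i, hi⟩ := hcol j
      refine ⟨i, Fin.ext ?_⟩
      have h1 : (φ i).1 ≤ (ψ j).1 := hφ_le i j hi
      have h2 : (ψ j).1 = t.1 := by
        show chainRank CS (colOf M j) = t.1
        rw [hcj, hrc]
      omega
    · obtain ⟨c', hc', hrc'⟩ := chainRank_surj hchain (show t.1 - 1 < m by omega)
      have hne' : c' ≠ c := fun h => by rw [h, hrc] at hrc'; omega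
      have hlt : c' < c := by
        rcases hchain c' hc' c hcmem with h | h
        · exact lt_of_le_of_ne h hne'
        · exfalso
          have := chainRank_mono (s := CS) h
          omega
      have hex : ∃ i, c' i = false ∧ c i = true := by
        by_contra hno
        push_neg at hno
        apply hne'
        funext i
        have hlei := hlt.le i
        cases hci' : c' i <;> cases hci : c i
        · rfl
        · exact absurd hci (hno i hci')
        · have h7 := bool_le_iff.1 hlei hci'
          rw [h7] at hci
          exact absurd hci (by decide)
        · rfl
      obtain ⟨i, hi1, hi2⟩ := hex
      refine ⟨i, ?_⟩
      have hMij : M i j = true := by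
        have : colOf M j i = true := by rw [hcj]; exact hi2
        exact this
      have hψjt : ψ j = t := by
        apply Fin.ext
        show chainRank CS (colOf M j) = t.1
        rw [hcj, hrc]
      apply le_antisymm
      · have := hφ_le i j hMij
        rwa [hψjt] at this
      · obtain ⟨j0, hj0, hψj0⟩ := hφ_mem i
        rw [← hψj0]
        by_contra hlt'
        push_neg at hlt'
        have hle0 : chainRank CS (colOf M j0) ≤ t.1 - 1 := by
          have h4 : (ψ j0).1 < t.1 := hlt'
          have h5 : (ψ j0).1 = chainRank CS (colOf M j0) := rfl
          omega
        have hcle : colOf M j0 ≤ c' := by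
          apply chainRank_reflect hchain (hmemCS j0) hc'
          rw [hrc']
          exact hle0
        have h6 := bool_le_iff.1 (hcle i) hj0
        rw [h6] at hi1
        exact absurd hi1 (by decide)
  refine ⟨m, le_min hmn hmk, φ, ψ, hφs, hψs, hψd, ?_⟩
  funext i j
  by_cases h : φ i ≤ ψ j
  · have := (hM_iff i j).2 h
    simp [colfun, h, this]
  · have h2 : M i j ≠ true := fun hM' => h ((hM_iff i j).1 hM')
    simp only [Bool.not_eq_true] at h2
    simp [colfun, h, h2]

end Matrices

/-- The number of `n × k` lonesum 01 matrices with no all-zero column and no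
all-zero row in which every column vector occurs at most `d` times among the
columns (no restriction on row multiplicities) equals
`∑_{m=0}^{min(n,k)} m!·S(n,m)·m!·S(k,m)_{≤d}`. -/
theorem card_lonesum_col_restricted (n k d : ℕ) (hd : 1 ≤ d) :
    Nat.card {M : Fin n → Fin k → Bool // Lonesum M ∧
        (∀ j, ∃ i, M i j = true) ∧ (∀ i, ∃ j, M i j = true) ∧
        (∀ j, (univ.filter fun j' => colOf M j' = colOf M j).card ≤ d)} =
      ∑ m ∈ Finset.range (min n k + 1),
        m.factorial * stirling n m * (m.factorial * restrictedStirling k m d) := by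
  classical
  set N := min n k with hN
  set X : ℕ → Type := fun m => {φ : Fin n → Fin m // Surjective φ} ×
    {ψ : Fin k → Fin m // Surjective ψ ∧ ∀ t, (univ.filter fun j => ψ j = t).card ≤ d}
    with hX
  let G : (Σ mm : Fin (N + 1), X mm.1) →
      {M : Fin n → Fin k → Bool // Lonesum M ∧
        (∀ j, ∃ i, M i j = true) ∧ (∀ i, ∃ j, M i j = true) ∧
        (∀ j, (univ.filter fun j' => colOf M j' = colOf M j).card ≤ d)} := fun x =>
    ⟨fun i j => colfun x.2.1.1 (x.2.2.1 j) i,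
      mat_lonesum x.2.1.1 x.2.2.1,
      fun j => mat_col_ne x.2.1.2 x.2.2.1 j,
      fun i => mat_row_ne x.2.1.1 x.2.2.2.1 i,
      fun j => mat_mult x.2.1.2 x.2.2.2.2 j⟩
  have hGinj : Function.Injective G := by
    rintro ⟨⟨m1, hm1⟩, ⟨φ1, hφ1⟩, ⟨ψ1, hψ1, hd1⟩⟩ ⟨⟨m2, hm2⟩, ⟨φ2, hφ2⟩, ⟨ψ2, hψ2, hd2⟩⟩ hxy
    have hM : (fun i j => colfun φ1 (ψ1 j) i) = (fun i j => colfun φ2 (ψ2 j) i) :=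
      congrArg Subtype.val hxy
    have hmm : m1 = m2 := by
      have e1 : (univ.image (colOf fun i j => colfun φ1 (ψ1 j) i)).card = m1 :=
        colset_card hφ1 hψ1 rfl
      have e2 : (univ.image (colOf fun i j => colfun φ2 (ψ2 j) i)).card = m2 :=
        colset_card hφ2 hψ2 rfl
      rw [← e1, ← e2, hM]
    subst hmm
    have hψeq : ψ1 = ψ2 := by
      funext j
      apply Fin.ext
      have r1 := rank_colfun hφ1 hψ1 (M := fun i j => colfun φ1 (ψ1 j) i) rfl j
      have r2 := rank_colfun hφ2 hψ2 (M := fun i j => colfun φ2 (ψ2 j) i) rfl j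
      rw [hM] at r1
      rw [← r1, ← r2]
    subst hψeq
    have hφeq : φ1 = φ2 := by
      funext i
      rcases lt_trichotomy (φ1 i) (φ2 i) with h | h | h
      · obtain ⟨j, hj⟩ := hψ1 (φ1 i)
        have h2 := congrFun (congrFun hM i) j
        simp only [colfun, hj, decide_eq_decide] at h2
        exact absurd (h2.1 le_rfl) (not_le.2 h)
      · exact h
      · obtain ⟨j, hj⟩ := hψ1 (φ2 i)
        have h2 := congrFun (congrFun hM i) j
        simp only [colfun, hj, decide_eq_decide] at h2
        exact absurd (h2.2 le_rfl) (not_le.2 h)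
    subst hφeq
    rfl
  have hGsurj : Function.Surjective G := by
    rintro ⟨M, hL, hcol, hrow, hmul⟩
    obtain ⟨m, hm, φ, ψ, hφs, hψs, hψd, hMeq⟩ := exists_rep hL hcol hrow hmul
    refine ⟨⟨⟨m, by omega⟩, ⟨φ, hφs⟩, ⟨ψ, hψs, hψd⟩⟩, ?_⟩
    exact Subtype.ext hMeq.symm
  rw [← Nat.card_eq_of_bijective G ⟨hGinj, hGsurj⟩]
  rw [nat_card_sigma]
  rw [Fin.sum_univ_eq_sum_range (fun m => Nat.card (X m)) (N + 1)]
  apply Finset.sum_congr rfl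
  intro m _
  have hXm : Nat.card (X m) = Nat.card {φ : Fin n → Fin m // Surjective φ} *
      Nat.card {ψ : Fin k → Fin m // Surjective ψ ∧
        ∀ t, (univ.filter fun j => ψ j = t).card ≤ d} := Nat.card_prod _ _
  rw [hXm]
  have h1 : Nat.card {φ : Fin n → Fin m // Surjective φ} = m.factorial * stirling n m := by
    have e1 : {φ : Fin n → Fin m // Surjective φ} ≃
        {f : Fin n → Fin m // Surjective f ∧
          ∀ t, (fun _ : ℕ => True) ((univ.filter fun a => f a = t).card)} :=
      Equiv.subtypeEquivRight fun f => ⟨fun h => ⟨h, fun _ => trivial⟩, fun h => h.1⟩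
    have e2 : {P : Finpartition (univ : Finset (Fin n)) //
        P.parts.card = m ∧ ∀ b ∈ P.parts, (fun _ : ℕ => True) b.card} ≃
        {P : Finpartition (univ : Finset (Fin n)) // P.parts.card = m} :=
      Equiv.subtypeEquivRight fun P => ⟨fun h => h.1, fun h => ⟨h, fun _ _ => trivial⟩⟩
    rw [Nat.card_congr e1, card_surj_cond m (fun _ => True), stirling, ← Nat.card_congr e2]
  have h2 : Nat.card {ψ : Fin k → Fin m // Surjective ψ ∧
      ∀ t, (univ.filter fun j => ψ j = t).card ≤ d}
      = m.factorial * restrictedStirling k m d := by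
    rw [card_surj_cond m (fun x => x ≤ d), restrictedStirling]
  rw [h1, h2]
end

section
/- Fix d ≥ 1. In the ring of formal power series over ℚ in two (commuting) variables x and y, the double exponential generating function L(x,y) = ∑_{n≥0} ∑_{k≥0} pB(n,k)_{≤d} · x^n y^k / (n! k!) satisfies (E_d(x) + E_d(y) − E_d(x)·E_d(y)) · L(x,y) = 1; equivalently, (1 − (E_d(x) − 1)(E_d(y) − 1)) · L(x,y) = 1. -/
open Finset

/-- The truncated exponential `E_d` evaluated at the variable `v` of a
bivariate formal power series algebra over `ℚ`. -/
noncomputable def EdAt (d : ℕ) (v : Fin 2) : MvPowerSeries (Fin 2) ℚ :=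
  ∑ i ∈ Finset.range (d + 1),
    (MvPowerSeries.C : ℚ →+* MvPowerSeries (Fin 2) ℚ) (1 / i.factorial) * (MvPowerSeries.X v) ^ i

/-- The double exponential generating function
`L(x,y) = ∑_{n,k} pB(n,k)_{≤d} xⁿ yᵏ / (n! k!)`. -/
noncomputable def Lgf (d : ℕ) : MvPowerSeries (Fin 2) ℚ :=
  fun e : Fin 2 →₀ ℕ =>
    (pB (e 0) (e 1) d : ℚ) / (((e 0).factorial : ℚ) * ((e 1).factorial : ℚ))

section Chain

variable {n k : ℕ} {M : Fin n → Fin k → Bool}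

lemma lonesum_transpose (hL : Lonesum M) : Lonesum (fun j i => M i j) := by
  intro j j' i i' hjj hii
  constructor
  · rintro ⟨h1, h2, h3, h4⟩
    exact (hL i i' j j' hii hjj).1 ⟨h1, h3, h2, h4⟩
  · rintro ⟨h1, h2, h3, h4⟩
    exact (hL i i' j j' hii hjj).2 ⟨h1, h3, h2, h4⟩

lemma rows_chain (hL : Lonesum M) (i i' : Fin n) :
    (∀ j, M i j = true → M i' j = true) ∨ (∀ j, M i' j = true → M i j = true) := by
  by_contra h
  push_neg at h
  obtain ⟨⟨j, hj1, hj2⟩, ⟨j', hj'1, hj'2⟩⟩ := h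
  have hj2' : M i' j = false := by simpa using hj2
  have hj'2' : M i j' = false := by simpa using hj'2
  rcases lt_trichotomy i i' with hii | hii | hii
  · rcases lt_trichotomy j j' with hjj | hjj | hjj
    · exact (hL i i' j j' hii hjj).1 ⟨hj1, hj'2', hj2', hj'1⟩
    · subst hjj; rw [hj1] at hj'2'; exact absurd hj'2' (by simp)
    · exact (hL i i' j' j hii hjj).2 ⟨hj'2', hj1, hj'1, hj2'⟩
  · subst hii; rw [hj1] at hj2'; exact absurd hj2' (by simp)
  · rcases lt_trichotomy j j' with hjj | hjj | hjj
    · exact (hL i' i j j' hii hjj).2 ⟨hj2', hj'1, hj1, hj'2'⟩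
    · subst hjj; rw [hj1] at hj'2'; exact absurd hj'2' (by simp)
    · exact (hL i' i j' j hii hjj).1 ⟨hj'1, hj2', hj'2', hj1⟩

lemma cols_chain (hL : Lonesum M) (j j' : Fin k) :
    (∀ i, M i j = true → M i j' = true) ∨ (∀ i, M i j' = true → M i j = true) :=
  rows_chain (lonesum_transpose hL) j j'

lemma exists_top_row (hL : Lonesum M) (hcol : ∀ j, ∃ i, M i j = true) (hn : 0 < n) :
    ∃ i0 : Fin n, ∀ j, M i0 j = true := by
  classical
  obtain ⟨i0, -, hmax⟩ := Finset.exists_max_image Finset.univ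
    (fun i => (Finset.univ.filter fun j => M i j = true).card) ⟨⟨0, hn⟩, Finset.mem_univ _⟩
  refine ⟨i0, fun j => ?_⟩
  obtain ⟨i, hi⟩ := hcol j
  rcases rows_chain hL i i0 with hc | hc
  · exact hc j hi
  · have hsub : (Finset.univ.filter fun j => M i0 j = true) ⊆
        (Finset.univ.filter fun j => M i j = true) := by
      intro x hx
      simp only [Finset.mem_filter, Finset.mem_univ, true_and] at hx ⊢
      exact hc x hx
    have := Finset.eq_of_subset_of_card_le hsub (hmax i (Finset.mem_univ i))
    have hj : j ∈ (Finset.univ.filter fun j => M i j = true) := by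
      simp [hi]
    rw [← this] at hj
    simpa using hj

lemma exists_bot_col (hL : Lonesum M) (hk : 0 < k) :
    ∃ j0 : Fin k, ∀ (j : Fin k) (i : Fin n), M i j0 = true → M i j = true := by
  classical
  obtain ⟨j0, -, hmin⟩ := Finset.exists_min_image Finset.univ
    (fun j => (Finset.univ.filter fun i => M i j = true).card) ⟨⟨0, hk⟩, Finset.mem_univ _⟩
  refine ⟨j0, fun j i hi => ?_⟩
  rcases cols_chain hL j0 j with hc | hc
  · exact hc i hi
  · have hsub : (Finset.univ.filter fun i => M i j = true) ⊆
        (Finset.univ.filter fun i => M i j0 = true) := by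
      intro x hx
      simp only [Finset.mem_filter, Finset.mem_univ, true_and] at hx ⊢
      exact hc x hx
    have := Finset.eq_of_subset_of_card_le hsub (hmin j (Finset.mem_univ j))
    have hj : i ∈ (Finset.univ.filter fun i => M i j0 = true) := by simp [hi]
    rw [← this] at hj
    simpa using hj

end Chain

section Defs
variable {n k d : ℕ}

def GoodP (d : ℕ) {n k : ℕ} (M : Fin n → Fin k → Bool) : Prop :=
  Lonesum M ∧ (∀ j, ∃ i, M i j = true) ∧ (∀ i, ∃ j, M i j = true) ∧
    (∀ j, (univ.filter fun j' => colOf M j' = colOf M j).card ≤ d) ∧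
    (∀ i, (univ.filter fun i' => rowOf M i' = rowOf M i).card ≤ d)

def Aset (M : Fin n → Fin k → Bool) : Finset (Fin n) :=
  univ.filter fun i => ∀ j, M i j = true

def Bset (M : Fin n → Fin k → Bool) : Finset (Fin k) :=
  univ.filter fun j => ∀ i, i ∉ Aset M → M i j = false

lemma mem_Aset {i : Fin n} : i ∈ Aset M ↔ ∀ j, M i j = true := by simp [Aset]

lemma mem_Bset {j : Fin k} : j ∈ Bset M ↔ ∀ i, i ∉ Aset M → M i j = false := by simp [Bset]

def emS {m : ℕ} (S : Finset (Fin m)) : Fin (m - S.card) ≃o {x : Fin m // x ∈ Sᶜ} :=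
  Sᶜ.orderIsoOfFin (by simp [Finset.card_compl])

lemma em_coe_not_mem {m : ℕ} (S : Finset (Fin m)) (r : Fin (m - S.card)) :
    (emS S r : Fin m) ∉ S := by
  have := (emS S r).2
  rwa [Finset.mem_compl] at this

lemma em_symm_coe {m : ℕ} {S : Finset (Fin m)} {i : Fin m} (h : i ∉ S) :
    ((emS S ((emS S).symm ⟨i, Finset.mem_compl.2 h⟩)) : Fin m) = i := by
  rw [OrderIso.apply_symm_apply]

lemma em_lt_em {m : ℕ} {S : Finset (Fin m)} {r r' : Fin (m - S.card)} (h : r < r') :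
    (emS S r : Fin m) < emS S r' :=
  Subtype.coe_lt_coe.2 ((emS S).lt_iff_lt.2 h)

lemma em_symm_lt {m : ℕ} {S : Finset (Fin m)} {i i' : Fin m} (hi : i ∉ S) (hi' : i' ∉ S)
    (h : i < i') :
    (emS S).symm ⟨i, Finset.mem_compl.2 hi⟩ < (emS S).symm ⟨i', Finset.mem_compl.2 hi'⟩ :=
  (emS S).symm.lt_iff_lt.2 (Subtype.mk_lt_mk.2 h)

def restrictM (A : Finset (Fin n)) (B : Finset (Fin k)) (M : Fin n → Fin k → Bool) :
    Fin (n - A.card) → Fin (k - B.card) → Bool :=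
  fun r c => M (emS A r) (emS B c)

def extendM (A : Finset (Fin n)) (B : Finset (Fin k))
    (M' : Fin (n - A.card) → Fin (k - B.card) → Bool) : Fin n → Fin k → Bool :=
  fun i j =>
    if hi : i ∈ A then true
    else if hj : j ∈ B then false
    else M' ((emS A).symm ⟨i, Finset.mem_compl.2 hi⟩) ((emS B).symm ⟨j, Finset.mem_compl.2 hj⟩)

variable {A : Finset (Fin n)} {B : Finset (Fin k)}
  {M' : Fin (n - A.card) → Fin (k - B.card) → Bool}

lemma extendM_left {i j} (hi : i ∈ A) : extendM A B M' i j = true := by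
  simp [extendM, hi]

lemma extendM_right {i j} (hi : i ∉ A) (hj : j ∈ B) : extendM A B M' i j = false := by
  simp [extendM, hi, hj]

lemma extendM_not {i j} (hi : i ∉ A) (hj : j ∉ B) :
    extendM A B M' i j
      = M' ((emS A).symm ⟨i, Finset.mem_compl.2 hi⟩) ((emS B).symm ⟨j, Finset.mem_compl.2 hj⟩) := by
  simp [extendM, hi, hj]

lemma extendM_em (r : Fin (n - A.card)) (c : Fin (k - B.card)) :
    extendM A B M' (emS A r) (emS B c) = M' r c := by
  rw [extendM_not (em_coe_not_mem A r) (em_coe_not_mem B c)]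
  congr 1
  · have : (⟨((emS A r) : Fin n), Finset.mem_compl.2 (em_coe_not_mem A r)⟩ :
        {x : Fin n // x ∈ Aᶜ}) = emS A r := Subtype.ext rfl
    rw [this, OrderIso.symm_apply_apply]
  · have : (⟨((emS B c) : Fin k), Finset.mem_compl.2 (em_coe_not_mem B c)⟩ :
        {x : Fin k // x ∈ Bᶜ}) = emS B c := Subtype.ext rfl
    rw [this, OrderIso.symm_apply_apply]

end Defs

section GLemmas
variable {n k d : ℕ} {M : Fin n → Fin k → Bool} {A : Finset (Fin n)} {B : Finset (Fin k)}
  {M' : Fin (n - A.card) → Fin (k - B.card) → Bool}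

lemma emS_symm_em {m : ℕ} {S : Finset (Fin m)} (r : Fin (m - S.card))
    (h : ((emS S r : Fin m)) ∉ S) :
    (emS S).symm ⟨↑(emS S r), Finset.mem_compl.2 h⟩ = r := by
  have h2 : (⟨((emS S r) : Fin m), Finset.mem_compl.2 h⟩ : {x : Fin m // x ∈ Sᶜ}) = emS S r :=
    Subtype.ext rfl
  rw [h2, OrderIso.symm_apply_apply]

lemma extendM_em_left (r : Fin (n - A.card)) {j : Fin k} (hj : j ∉ B) :
    extendM A B M' (emS A r) j = M' r ((emS B).symm ⟨j, Finset.mem_compl.2 hj⟩) := by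
  rw [extendM_not (em_coe_not_mem A r) hj, emS_symm_em _ (em_coe_not_mem A r)]

lemma extendM_em_right {i : Fin n} (hi : i ∉ A) (c : Fin (k - B.card)) :
    extendM A B M' i (emS B c) = M' ((emS A).symm ⟨i, Finset.mem_compl.2 hi⟩) c := by
  rw [extendM_not hi (em_coe_not_mem B c), emS_symm_em _ (em_coe_not_mem B c)]

lemma restrict_extend : restrictM A B (extendM A B M') = M' := by
  funext r c
  exact extendM_em r c

lemma extend_restrict : extendM (Aset M) (Bset M) (restrictM (Aset M) (Bset M) M) = M := by
  funext i j
  by_cases hi : i ∈ Aset M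
  · rw [extendM_left hi]; exact (mem_Aset.1 hi j).symm
  · by_cases hj : j ∈ Bset M
    · rw [extendM_right hi hj]; exact (mem_Bset.1 hj i hi).symm
    · rw [extendM_not hi hj]
      show M _ _ = M i j
      rw [em_symm_coe hi, em_symm_coe hj]

lemma Aset_extend (hB1 : B.Nonempty) : Aset (extendM A B M') = A := by
  ext i
  rw [mem_Aset]
  constructor
  · intro h
    by_contra hi
    obtain ⟨j, hj⟩ := hB1
    have := h j
    rw [extendM_right hi hj] at this
    exact absurd this (by simp)
  · intro hi j
    exact extendM_left hi

lemma Bset_extend (hB1 : B.Nonempty) (hG : GoodP d M') :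
    Bset (extendM A B M') = B := by
  ext j
  rw [mem_Bset]
  constructor
  · intro h
    by_contra hj
    obtain ⟨r, hr⟩ := hG.2.1 ((emS B).symm ⟨j, Finset.mem_compl.2 hj⟩)
    have h2 := h (emS A r) (by rw [Aset_extend hB1]; exact em_coe_not_mem A r)
    rw [extendM_em_left r hj, hr] at h2
    exact absurd h2 (by simp)
  · intro hj i hi
    rw [Aset_extend hB1] at hi
    exact extendM_right hi hj

end GLemmas

section GoodLemmas
variable {n k d : ℕ} {M : Fin n → Fin k → Bool} {A : Finset (Fin n)} {B : Finset (Fin k)}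
  {M' : Fin (n - A.card) → Fin (k - B.card) → Bool}

lemma Aset_nonempty (hG : GoodP d M) (hn : 0 < n) : (Aset M).Nonempty := by
  obtain ⟨i0, h⟩ := exists_top_row hG.1 hG.2.1 hn
  exact ⟨i0, mem_Aset.2 h⟩

lemma Aset_card_le (hG : GoodP d M) : (Aset M).card ≤ d := by
  rcases (Aset M).eq_empty_or_nonempty with h | ⟨i0, hi0⟩
  · simp [h]
  · refine le_trans (Finset.card_le_card ?_) (hG.2.2.2.2 i0)
    intro i hi
    simp only [Finset.mem_filter, Finset.mem_univ, true_and]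
    funext j
    rw [show rowOf M i j = M i j from rfl, show rowOf M i0 j = M i0 j from rfl,
      mem_Aset.1 hi j, mem_Aset.1 hi0 j]

lemma Bset_nonempty (hG : GoodP d M) (hk : 0 < k) : (Bset M).Nonempty := by
  obtain ⟨j0, hj0⟩ := exists_bot_col hG.1 hk
  refine ⟨j0, mem_Bset.2 fun i hi => ?_⟩
  by_contra hfalse
  have htrue : M i j0 = true := by simpa using hfalse
  rw [mem_Aset] at hi
  push_neg at hi
  obtain ⟨j, hj⟩ := hi
  exact hj (hj0 j i htrue)

lemma Bset_card_le (hG : GoodP d M) : (Bset M).card ≤ d := by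
  rcases (Bset M).eq_empty_or_nonempty with h | ⟨j0, hj0⟩
  · simp [h]
  · refine le_trans (Finset.card_le_card ?_) (hG.2.2.2.1 j0)
    intro j hj
    simp only [Finset.mem_filter, Finset.mem_univ, true_and]
    funext i
    show M i j = M i j0
    by_cases hi : i ∈ Aset M
    · rw [mem_Aset.1 hi j, mem_Aset.1 hi j0]
    · rw [mem_Bset.1 hj i hi, mem_Bset.1 hj0 i hi]

lemma goodP_restrict (hG : GoodP d M) :
    GoodP d (restrictM (Aset M) (Bset M) M) := by
  refine ⟨?_, ?_, ?_, ?_, ?_⟩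
  · intro r r' c c' hr hc
    exact hG.1 _ _ _ _ (em_lt_em hr) (em_lt_em hc)
  · intro c
    have hj : (emS (Bset M) c : Fin k) ∉ Bset M := em_coe_not_mem _ c
    rw [mem_Bset] at hj
    push_neg at hj
    obtain ⟨i, hiA, hij⟩ := hj
    refine ⟨(emS (Aset M)).symm ⟨i, Finset.mem_compl.2 hiA⟩, ?_⟩
    show M _ _ = true
    rw [em_symm_coe hiA]
    simpa using hij
  · intro r
    obtain ⟨j, hj⟩ := hG.2.2.1 (emS (Aset M) r)
    have hjB : j ∉ Bset M := by
      intro hmem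
      have := mem_Bset.1 hmem _ (em_coe_not_mem _ r)
      rw [hj] at this
      exact absurd this (by simp)
    refine ⟨(emS (Bset M)).symm ⟨j, Finset.mem_compl.2 hjB⟩, ?_⟩
    show M _ _ = true
    rw [em_symm_coe hjB]
    exact hj
  · intro c
    refine le_trans (Finset.card_le_card_of_injOn
      (fun c' => ((emS (Bset M) c' : Fin k))) ?_ ?_) (hG.2.2.2.1 (emS (Bset M) c))
    · intro c' hc'
      simp only [Finset.mem_coe, Finset.mem_filter, Finset.mem_univ, true_and] at hc' ⊢
      funext i
      show M i _ = M i _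
      by_cases hiA : i ∈ Aset M
      · rw [mem_Aset.1 hiA, mem_Aset.1 hiA]
      · have h2 := congrFun hc' ((emS (Aset M)).symm ⟨i, Finset.mem_compl.2 hiA⟩)
        show M i (emS (Bset M) c') = M i (emS (Bset M) c)
        have h3 : ∀ c'' : Fin (k - (Bset M).card),
            colOf (restrictM (Aset M) (Bset M) M) c''
              ((emS (Aset M)).symm ⟨i, Finset.mem_compl.2 hiA⟩)
            = M i (emS (Bset M) c'') := by
          intro c''
          show M _ _ = _
          rw [em_symm_coe hiA]
        rw [h3, h3] at h2
        exact h2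
    · intro x _ y _ hxy
      exact (emS (Bset M)).injective (Subtype.coe_injective hxy)
  · intro r
    refine le_trans (Finset.card_le_card_of_injOn
      (fun r' => ((emS (Aset M) r' : Fin n))) ?_ ?_) (hG.2.2.2.2 (emS (Aset M) r))
    · intro r' hr'
      simp only [Finset.mem_coe, Finset.mem_filter, Finset.mem_univ, true_and] at hr' ⊢
      funext j
      show M _ j = M _ j
      by_cases hjB : j ∈ Bset M
      · rw [mem_Bset.1 hjB _ (em_coe_not_mem _ r'), mem_Bset.1 hjB _ (em_coe_not_mem _ r)]
      · have h2 := congrFun hr' ((emS (Bset M)).symm ⟨j, Finset.mem_compl.2 hjB⟩)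
        have h3 : ∀ r'' : Fin (n - (Aset M).card),
            rowOf (restrictM (Aset M) (Bset M) M) r''
              ((emS (Bset M)).symm ⟨j, Finset.mem_compl.2 hjB⟩)
            = M (emS (Aset M) r'') j := by
          intro r''
          show M _ _ = _
          rw [em_symm_coe hjB]
        rw [h3, h3] at h2
        exact h2
    · intro x _ y _ hxy
      exact (emS (Aset M)).injective (Subtype.coe_injective hxy)

end GoodLemmas

section ExtendGood
variable {n k d : ℕ} {A : Finset (Fin n)} {B : Finset (Fin k)}
  {M' : Fin (n - A.card) → Fin (k - B.card) → Bool}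

lemma goodP_extend (hA1 : A.Nonempty) (hA2 : A.card ≤ d) (hB1 : B.Nonempty) (hB2 : B.card ≤ d)
    (hG : GoodP d M') : GoodP d (extendM A B M') := by
  refine ⟨?_, ?_, ?_, ?_, ?_⟩
  · -- Lonesum
    intro i i' j j' hii hjj
    constructor
    · rintro ⟨h1, h2, h3, h4⟩
      have hiA : i ∉ A := fun h => by rw [extendM_left h] at h2; exact absurd h2 (by simp)
      have hi'A : i' ∉ A := fun h => by rw [extendM_left h] at h3; exact absurd h3 (by simp)
      have hjB : j ∉ B := fun h => by rw [extendM_right hiA h] at h1; exact absurd h1 (by simp)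
      have hj'B : j' ∉ B := fun h => by
        rw [extendM_right hi'A h] at h4; exact absurd h4 (by simp)
      rw [extendM_not hiA hjB] at h1
      rw [extendM_not hiA hj'B] at h2
      rw [extendM_not hi'A hjB] at h3
      rw [extendM_not hi'A hj'B] at h4
      exact (hG.1 _ _ _ _ (em_symm_lt hiA hi'A hii) (em_symm_lt hjB hj'B hjj)).1 ⟨h1, h2, h3, h4⟩
    · rintro ⟨h1, h2, h3, h4⟩
      have hiA : i ∉ A := fun h => by rw [extendM_left h] at h1; exact absurd h1 (by simp)
      have hi'A : i' ∉ A := fun h => by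
        rw [extendM_left h] at h4; exact absurd h4 (by simp)
      have hjB : j ∉ B := fun h => by rw [extendM_right hi'A h] at h3; exact absurd h3 (by simp)
      have hj'B : j' ∉ B := fun h => by
        rw [extendM_right hiA h] at h2; exact absurd h2 (by simp)
      rw [extendM_not hiA hjB] at h1
      rw [extendM_not hiA hj'B] at h2
      rw [extendM_not hi'A hjB] at h3
      rw [extendM_not hi'A hj'B] at h4
      exact (hG.1 _ _ _ _ (em_symm_lt hiA hi'A hii) (em_symm_lt hjB hj'B hjj)).2 ⟨h1, h2, h3, h4⟩
  · -- no zero column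
    intro j
    by_cases hj : j ∈ B
    · obtain ⟨i, hi⟩ := hA1
      exact ⟨i, extendM_left hi⟩
    · obtain ⟨r, hr⟩ := hG.2.1 ((emS B).symm ⟨j, Finset.mem_compl.2 hj⟩)
      refine ⟨emS A r, ?_⟩
      rw [extendM_em_left r hj]
      exact hr
  · -- no zero row
    intro i
    by_cases hi : i ∈ A
    · obtain ⟨j, _⟩ := hB1
      exact ⟨j, extendM_left hi⟩
    · obtain ⟨c, hc⟩ := hG.2.2.1 ((emS A).symm ⟨i, Finset.mem_compl.2 hi⟩)
      refine ⟨emS B c, ?_⟩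
      rw [extendM_em_right hi c]
      exact hc
  · -- column multiplicities
    intro j
    by_cases hj : j ∈ B
    · refine le_trans (Finset.card_le_card ?_) hB2
      intro j'' hj''
      simp only [Finset.mem_filter, Finset.mem_univ, true_and] at hj''
      by_contra hj''B
      obtain ⟨r, hr⟩ := hG.2.1 ((emS B).symm ⟨j'', Finset.mem_compl.2 hj''B⟩)
      have h1 : colOf (extendM A B M') j'' (emS A r) = true := by
        show extendM A B M' _ _ = true
        rw [extendM_em_left r hj''B]
        exact hr
      have h2 : colOf (extendM A B M') j (emS A r) = false :=
        extendM_right (em_coe_not_mem A r) hj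
      rw [hj''] at h1
      rw [h1] at h2
      exact absurd h2 (by simp)
    · have key : ∀ j'' : Fin k,
          colOf (extendM A B M') j'' = colOf (extendM A B M') j → j'' ∉ B := by
        intro j'' hmem hj''B
        obtain ⟨r, hr⟩ := hG.2.1 ((emS B).symm ⟨j, Finset.mem_compl.2 hj⟩)
        have h1 : colOf (extendM A B M') j (emS A r) = true := by
          show extendM A B M' _ _ = true
          rw [extendM_em_left r hj]
          exact hr
        have h2 : colOf (extendM A B M') j'' (emS A r) = false :=
          extendM_right (em_coe_not_mem A r) hj''B
        rw [hmem] at h2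
        rw [h1] at h2
        exact absurd h2 (by simp)
      refine le_trans (Finset.card_le_card_of_injOn
        (fun j'' => if h : j'' ∈ B then (emS B).symm ⟨j, Finset.mem_compl.2 hj⟩
          else (emS B).symm ⟨j'', Finset.mem_compl.2 h⟩) ?_ ?_)
        (hG.2.2.2.1 ((emS B).symm ⟨j, Finset.mem_compl.2 hj⟩))
      · intro j'' hmem
        simp only [Finset.mem_coe, Finset.mem_filter, Finset.mem_univ, true_and] at hmem ⊢
        have hj''B : j'' ∉ B := key j'' hmem
        rw [dif_neg hj''B]
        funext r
        show M' r _ = M' r _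
        rw [← extendM_em_left (M' := M') r hj''B, ← extendM_em_left (M' := M') r hj]
        exact congrFun hmem (emS A r)
      · intro x hx y hy hxy
        simp only [Finset.coe_filter, Set.mem_setOf_eq, Finset.mem_univ, true_and] at hx hy
        dsimp only at hxy
        rw [dif_neg (key x hx), dif_neg (key y hy)] at hxy
        exact congrArg Subtype.val ((emS B).symm.injective hxy)
  · -- row multiplicities
    intro i
    by_cases hi : i ∈ A
    · refine le_trans (Finset.card_le_card ?_) hA2
      intro i'' hi''
      simp only [Finset.mem_filter, Finset.mem_univ, true_and] at hi''
      by_contra hi''A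
      obtain ⟨j, hjB⟩ := hB1
      have h1 : rowOf (extendM A B M') i'' j = false := extendM_right hi''A hjB
      have h2 : rowOf (extendM A B M') i j = true := extendM_left hi
      rw [hi''] at h1
      rw [h2] at h1
      exact absurd h1 (by simp)
    · have key : ∀ i'' : Fin n,
          rowOf (extendM A B M') i'' = rowOf (extendM A B M') i → i'' ∉ A := by
        intro i'' hmem hi''A
        obtain ⟨j, hjB⟩ := hB1
        have h1 : rowOf (extendM A B M') i'' j = true := extendM_left hi''A
        have h2 : rowOf (extendM A B M') i j = false := extendM_right hi hjB
        rw [hmem] at h1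
        rw [h1] at h2
        exact absurd h2 (by simp)
      refine le_trans (Finset.card_le_card_of_injOn
        (fun i'' => if h : i'' ∈ A then (emS A).symm ⟨i, Finset.mem_compl.2 hi⟩
          else (emS A).symm ⟨i'', Finset.mem_compl.2 h⟩) ?_ ?_)
        (hG.2.2.2.2 ((emS A).symm ⟨i, Finset.mem_compl.2 hi⟩))
      · intro i'' hmem
        simp only [Finset.mem_coe, Finset.mem_filter, Finset.mem_univ, true_and] at hmem ⊢
        have hi''A : i'' ∉ A := key i'' hmem
        rw [dif_neg hi''A]
        funext c
        show M' _ c = M' _ c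
        rw [← extendM_em_right (M' := M') hi''A c, ← extendM_em_right (M' := M') hi c]
        exact congrFun hmem (emS B c)
      · intro x hx y hy hxy
        simp only [Finset.coe_filter, Set.mem_setOf_eq, Finset.mem_univ, true_and] at hx hy
        dsimp only at hxy
        rw [dif_neg (key x hx), dif_neg (key y hy)] at hxy
        exact congrArg Subtype.val ((emS A).symm.injective hxy)
end ExtendGood

section Counting

lemma pB_def (n k d : ℕ) : pB n k d = Nat.card {M : Fin n → Fin k → Bool // GoodP d M} := rfl

lemma pB_fiber {n k d : ℕ} {A : Finset (Fin n)} {B : Finset (Fin k)}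
    (hA1 : A.Nonempty) (hA2 : A.card ≤ d) (hB1 : B.Nonempty) (hB2 : B.card ≤ d) :
    Nat.card {M : Fin n → Fin k → Bool // GoodP d M ∧ Aset M = A ∧ Bset M = B}
      = pB (n - A.card) (k - B.card) d := by
  rw [pB_def]
  refine Nat.card_congr ⟨fun x => ⟨restrictM A B x.1, ?_⟩,
    fun y => ⟨extendM A B y.1, goodP_extend hA1 hA2 hB1 hB2 y.2,
      Aset_extend hB1, Bset_extend hB1 y.2⟩, ?_, ?_⟩
  · obtain ⟨M, hM, hA, hB⟩ := x
    subst hA; subst hB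
    exact goodP_restrict hM
  · rintro ⟨M, hM, hA, hB⟩
    apply Subtype.ext
    show extendM A B (restrictM A B M) = M
    subst hA; subst hB
    exact extend_restrict
  · rintro ⟨M', hM'⟩
    exact Subtype.ext restrict_extend

lemma sum_over_valid {m d : ℕ} (g : ℕ → ℕ) :
    ∑ S ∈ (univ.filter fun S : Finset (Fin m) => S.Nonempty ∧ S.card ≤ d), g S.card
      = ∑ a ∈ Finset.Icc 1 d, m.choose a * g a := by
  classical
  rw [← Finset.sum_fiberwise_of_maps_to' (g := fun S : Finset (Fin m) => S.card)
    (t := Finset.Icc 1 d) ?_ g]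
  · refine Finset.sum_congr rfl fun a ha => ?_
    rw [Finset.mem_Icc] at ha
    have hset : ((univ.filter fun S : Finset (Fin m) => S.Nonempty ∧ S.card ≤ d).filter
        fun S => S.card = a) = univ.powersetCard a := by
      ext S
      simp only [Finset.mem_filter, Finset.mem_univ, true_and, Finset.mem_powersetCard,
        Finset.subset_univ]
      constructor
      · rintro ⟨-, h⟩; exact h
      · intro h
        refine ⟨⟨?_, ?_⟩, h⟩
        · rw [← Finset.card_pos, h]; exact ha.1
        · rw [h]; exact ha.2
    rw [Finset.sum_const, hset, Finset.card_powersetCard, Finset.card_univ, Fintype.card_fin,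
      smul_eq_mul]
  · intro S hS
    simp only [Finset.mem_filter, Finset.mem_univ, true_and] at hS
    rw [Finset.mem_Icc]
    exact ⟨Finset.card_pos.2 hS.1, hS.2⟩

lemma pB_rec {n k : ℕ} (d : ℕ) (hn : 0 < n) (hk : 0 < k) :
    pB n k d = ∑ a ∈ Finset.Icc 1 d, n.choose a *
      ∑ b ∈ Finset.Icc 1 d, k.choose b * pB (n - a) (k - b) d := by
  classical
  rw [pB_def, Nat.card_eq_fintype_card, Fintype.card_subtype]
  rw [Finset.card_eq_sum_card_fiberwise (f := fun M => (Aset M, Bset M))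
    (t := (univ.filter fun A : Finset (Fin n) => A.Nonempty ∧ A.card ≤ d) ×ˢ
      (univ.filter fun B : Finset (Fin k) => B.Nonempty ∧ B.card ≤ d)) ?_]
  · have hfib : ∀ p ∈ (univ.filter fun A : Finset (Fin n) => A.Nonempty ∧ A.card ≤ d) ×ˢ
        (univ.filter fun B : Finset (Fin k) => B.Nonempty ∧ B.card ≤ d),
        ((univ.filter fun M : Fin n → Fin k → Bool => GoodP d M).filter
          fun M => (Aset M, Bset M) = p).card = pB (n - p.1.card) (k - p.2.card) d := by
      rintro ⟨A, B⟩ hp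
      rw [Finset.mem_product, Finset.mem_filter, Finset.mem_filter] at hp
      obtain ⟨⟨-, hA1, hA2⟩, -, hB1, hB2⟩ := hp
      rw [Finset.filter_filter]
      have hcard : ((univ.filter fun M : Fin n → Fin k → Bool =>
          GoodP d M ∧ (Aset M, Bset M) = (A, B))).card
          = Nat.card {M : Fin n → Fin k → Bool // GoodP d M ∧ Aset M = A ∧ Bset M = B} := by
        rw [Nat.card_eq_fintype_card, Fintype.card_subtype]
        congr 1
        apply Finset.filter_congr
        intro M _
        simp [Prod.ext_iff, and_assoc]
      rw [hcard, pB_fiber hA1 hA2 hB1 hB2]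
    rw [Finset.sum_congr rfl hfib, Finset.sum_product]
    rw [sum_over_valid (fun a => ∑ B ∈ (univ.filter fun B : Finset (Fin k) =>
      B.Nonempty ∧ B.card ≤ d), pB (n - a) (k - B.card) d)]
    exact Finset.sum_congr rfl fun a _ => by
      rw [sum_over_valid (fun b => pB (n - a) (k - b) d)]
  · intro M hM
    simp only [Finset.mem_coe, Finset.mem_filter, Finset.mem_univ, true_and] at hM ⊢
    rw [Finset.mem_product, Finset.mem_filter, Finset.mem_filter]
    exact ⟨⟨Finset.mem_univ _, Aset_nonempty hM hn, Aset_card_le hM⟩,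
      Finset.mem_univ _, Bset_nonempty hM hk, Bset_card_le hM⟩

lemma pB_zero_zero (d : ℕ) : pB 0 0 d = 1 := by
  rw [pB_def]
  rw [Nat.card_eq_one_iff_unique]
  constructor
  · constructor
    intro ⟨M, _⟩ ⟨N, _⟩
    apply Subtype.ext
    funext i
    exact i.elim0
  · refine ⟨⟨fun i => i.elim0, fun i => i.elim0, fun j => j.elim0, fun i => i.elim0,
      fun j => j.elim0, fun i => i.elim0⟩⟩

lemma pB_left_zero {n : ℕ} (d : ℕ) (hn : 0 < n) : pB n 0 d = 0 := by
  rw [pB_def]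
  have : IsEmpty {M : Fin n → Fin 0 → Bool // GoodP d M} := by
    constructor
    rintro ⟨M, hM⟩
    obtain ⟨j, -⟩ := hM.2.2.1 ⟨0, hn⟩
    exact j.elim0
  exact Nat.card_of_isEmpty

lemma pB_right_zero {k : ℕ} (d : ℕ) (hk : 0 < k) : pB 0 k d = 0 := by
  rw [pB_def]
  have : IsEmpty {M : Fin 0 → Fin k → Bool // GoodP d M} := by
    constructor
    rintro ⟨M, hM⟩
    obtain ⟨i, -⟩ := hM.2.1 ⟨0, hk⟩
    exact i.elim0
  exact Nat.card_of_isEmpty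

end Counting

section Analytic

lemma scalar_id (d n k : ℕ) :
    (pB n k d : ℚ) / ((n.factorial : ℚ) * (k.factorial : ℚ))
      - ∑ a ∈ Finset.Icc 1 d, (if a ≤ n then (1 / (a.factorial : ℚ)) *
          ∑ b ∈ Finset.Icc 1 d, (if b ≤ k then (1 / (b.factorial : ℚ)) *
            ((pB (n - a) (k - b) d : ℚ) /
              (((n - a).factorial : ℚ) * ((k - b).factorial : ℚ))) else 0) else 0)
      = if n = 0 ∧ k = 0 then 1 else 0 := by
  rcases Nat.eq_zero_or_pos n with hn | hn
  · subst hn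
    have hsum : (∑ a ∈ Finset.Icc 1 d, (if a ≤ 0 then (1 / (a.factorial : ℚ)) *
        ∑ b ∈ Finset.Icc 1 d, (if b ≤ k then (1 / (b.factorial : ℚ)) *
          ((pB (0 - a) (k - b) d : ℚ) /
            (((0 - a).factorial : ℚ) * ((k - b).factorial : ℚ))) else 0) else 0)) = 0 :=
      Finset.sum_eq_zero fun a ha => by
        rw [Finset.mem_Icc] at ha; rw [if_neg (by omega)]
    rw [hsum, sub_zero]
    rcases Nat.eq_zero_or_pos k with hk | hk
    · subst hk
      rw [pB_zero_zero, if_pos ⟨rfl, rfl⟩]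
      norm_num [Nat.factorial]
    · rw [pB_right_zero d hk, if_neg (by omega)]
      simp
  · rcases Nat.eq_zero_or_pos k with hk | hk
    · subst hk
      have hsum : (∑ a ∈ Finset.Icc 1 d, (if a ≤ n then (1 / (a.factorial : ℚ)) *
          ∑ b ∈ Finset.Icc 1 d, (if b ≤ 0 then (1 / (b.factorial : ℚ)) *
            ((pB (n - a) (0 - b) d : ℚ) /
              (((n - a).factorial : ℚ) * ((0 - b).factorial : ℚ))) else 0) else 0)) = 0 :=
        Finset.sum_eq_zero fun a ha => by
          split_ifs with h
          · rw [Finset.sum_eq_zero, mul_zero]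
            intro b hb
            rw [Finset.mem_Icc] at hb
            rw [if_neg (by omega)]
          · rfl
      rw [hsum, sub_zero, pB_left_zero d hn, if_neg (by omega)]
      simp
    · rw [if_neg (by omega), sub_eq_zero]
      rw [pB_rec d hn hk]
      push_cast
      rw [Finset.sum_div]
      refine Finset.sum_congr rfl fun a ha => ?_
      by_cases han : a ≤ n
      · rw [if_pos han, Finset.mul_sum, Finset.sum_div, Finset.mul_sum]
        refine Finset.sum_congr rfl fun b hb => ?_
        by_cases hbk : b ≤ k
        · rw [if_pos hbk, Nat.cast_choose ℚ han, Nat.cast_choose ℚ hbk]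
          have h1 : ((n.factorial : ℚ)) ≠ 0 := Nat.cast_ne_zero.2 n.factorial_ne_zero
          have h2 : ((k.factorial : ℚ)) ≠ 0 := Nat.cast_ne_zero.2 k.factorial_ne_zero
          have h3 : ((a.factorial : ℚ)) ≠ 0 := Nat.cast_ne_zero.2 a.factorial_ne_zero
          have h4 : ((b.factorial : ℚ)) ≠ 0 := Nat.cast_ne_zero.2 b.factorial_ne_zero
          have h5 : (((n - a).factorial : ℚ)) ≠ 0 := Nat.cast_ne_zero.2 (n - a).factorial_ne_zero
          have h6 : (((k - b).factorial : ℚ)) ≠ 0 := Nat.cast_ne_zero.2 (k - b).factorial_ne_zero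
          field_simp
        · rw [if_neg hbk, Nat.choose_eq_zero_of_lt (show k < b by omega)]
          simp
      · rw [if_neg han, Nat.choose_eq_zero_of_lt (show n < a by omega)]
        simp

lemma EdAt_sub_one (d : ℕ) (v : Fin 2) :
    EdAt d v - 1 = ∑ i ∈ Finset.Icc 1 d,
      MvPowerSeries.monomial (Finsupp.single v i) (1 / (i.factorial : ℚ)) := by
  have h1 : ∀ i : ℕ, MvPowerSeries.C (1 / (i.factorial : ℚ)) * (MvPowerSeries.X v) ^ i
      = MvPowerSeries.monomial (Finsupp.single v i) (1 / (i.factorial : ℚ)) := by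
    intro i
    rw [MvPowerSeries.X_pow_eq, ← MvPowerSeries.monomial_zero_eq_C_apply,
      MvPowerSeries.monomial_mul_monomial, zero_add, mul_one]
  have h2 : Finset.range (d + 1) = insert 0 (Finset.Icc 1 d) := by
    ext x
    simp only [Finset.mem_range, Finset.mem_insert, Finset.mem_Icc]
    omega
  have h3 : (MvPowerSeries.monomial (Finsupp.single v 0)
      ((1 : ℚ) / (Nat.factorial 0 : ℚ))) = 1 := by
    rw [Finsupp.single_zero, MvPowerSeries.monomial_zero_eq_C_apply]
    norm_num [Nat.factorial]
  rw [EdAt, h2, Finset.sum_insert (by simp)]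
  simp only [h1]
  rw [h3, add_sub_cancel_left]

theorem lonesum_double_egf' (d : ℕ) (hd : 1 ≤ d) :
    (EdAt d 0 + EdAt d 1 - EdAt d 0 * EdAt d 1) * Lgf d = 1 ∧
      (1 - (EdAt d 0 - 1) * (EdAt d 1 - 1)) * Lgf d = 1 := by
  have key : (1 - (EdAt d 0 - 1) * (EdAt d 1 - 1)) * Lgf d = 1 := by
    apply MvPowerSeries.ext
    intro e
    have hcoeffF : ∀ e' : Fin 2 →₀ ℕ, MvPowerSeries.coeff e' (Lgf d)
        = (pB (e' 0) (e' 1) d : ℚ) / (((e' 0).factorial : ℚ) * ((e' 1).factorial : ℚ)) :=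
      fun e' => rfl
    rw [sub_mul, one_mul, map_sub, mul_assoc, EdAt_sub_one d 0, Finset.sum_mul, map_sum]
    have hinner : ∀ a ∈ Finset.Icc 1 d, MvPowerSeries.coeff e
        ((MvPowerSeries.monomial (Finsupp.single 0 a) (1 / (a.factorial : ℚ)))
          * ((EdAt d 1 - 1) * Lgf d))
        = if a ≤ e 0 then (1 / (a.factorial : ℚ)) *
            ∑ b ∈ Finset.Icc 1 d, (if b ≤ e 1 then (1 / (b.factorial : ℚ)) *
              ((pB (e 0 - a) (e 1 - b) d : ℚ) /
                (((e 0 - a).factorial : ℚ) * ((e 1 - b).factorial : ℚ))) else 0) else 0 := by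
      intro a _
      rw [MvPowerSeries.coeff_monomial_mul]
      simp only [Finsupp.single_le_iff]
      split_ifs with h
      · congr 1
        rw [EdAt_sub_one d 1, Finset.sum_mul, map_sum]
        refine Finset.sum_congr rfl fun b _ => ?_
        rw [MvPowerSeries.coeff_monomial_mul]
        simp only [Finsupp.single_le_iff]
        have h10 : (e - Finsupp.single (0 : Fin 2) a) 1 = e 1 := by
          rw [Finsupp.tsub_apply]
          simp [Finsupp.single_apply]
        rw [h10]
        split_ifs with hb
        · rw [hcoeffF]
          have hc0 : (e - Finsupp.single (0 : Fin 2) a - Finsupp.single (1 : Fin 2) b) 0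
              = e 0 - a := by
            rw [Finsupp.tsub_apply, Finsupp.tsub_apply]
            simp [Finsupp.single_apply]
          have hc1 : (e - Finsupp.single (0 : Fin 2) a - Finsupp.single (1 : Fin 2) b) 1
              = e 1 - b := by
            rw [Finsupp.tsub_apply, Finsupp.tsub_apply]
            simp [Finsupp.single_apply]
          rw [hc0, hc1]
        · rfl
      · rfl
    rw [Finset.sum_congr rfl hinner, hcoeffF e, MvPowerSeries.coeff_one]
    have he : (e = 0) ↔ (e 0 = 0 ∧ e 1 = 0) := by
      constructor
      · intro h; rw [h]; simp
      · rintro ⟨h0, h1⟩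
        ext v
        fin_cases v
        · simpa using h0
        · simpa using h1
    rw [if_congr he rfl rfl]
    exact scalar_id d (e 0) (e 1)
  refine ⟨?_, key⟩
  have hring : EdAt d 0 + EdAt d 1 - EdAt d 0 * EdAt d 1
      = 1 - (EdAt d 0 - 1) * (EdAt d 1 - 1) := by ring
  rw [hring]
  exact key

end Analytic


/-- The double exponential generating function of restricted lonesum matrices
satisfies `(E_d(x) + E_d(y) − E_d(x)E_d(y))·L(x,y) = 1`, equivalently
`(1 − (E_d(x) − 1)(E_d(y) − 1))·L(x,y) = 1`. -/
theorem lonesum_double_egf (d : ℕ) (hd : 1 ≤ d) :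
    (EdAt d 0 + EdAt d 1 - EdAt d 0 * EdAt d 1) * Lgf d = 1 ∧
      (1 - (EdAt d 0 - 1) * (EdAt d 1 - 1)) * Lgf d = 1 :=
  lonesum_double_egf' d hd
end
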